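/- arXiv:1110.2316 — 6 statements merged into one kernel-verified Lean document; each statement's English description precedes it below -/
import Mathlib

section
/- Let 0 < φ₀ < π/2, ρᵥ > 0 and βᵥ ∈ (0,1/2). Let Ωᵛ = {x ∈ ℝ³ : 0 < |x| < ρᵥ and φ₀ < arccos(x₃/|x|) < π − φ₀}. Let w be a smooth real-valued function on Ωᵛ, let w_v ∈ ℝ, and suppose there are constants C ≥ 0 and d ≥ 1 such that for every multi-index α, |D^α(w − w_v)(x)| ≤ C · d^{|α|} · α! · |x|^{1/2 − βᵥ − |α|} for all x ∈ Ωᵛ. Define W(φ,θ,χ) := w(e^χ sin φ cos θ, e^χ sin φ sin θ, e^χ cos φ). Then there exist constants C₁, d₁ > 0 such that for every integer m ≥ 1 and every real ν with 0 < ν ≤ ρᵥ, ∫_{(φ,θ,χ) ∈ (φ₀, π−φ₀) × (−π,π) × (−∞, ln ν)} e^χ · Σ_{|α| ≤ m} |D^α_{(φ,θ,χ)}(W − w_v)|² dφ dθ dχ ≤ C₁ (d₁^m · m!)² · ν^{1 − 2βᵥ}. (This is Proposition 2.2.1, the differentiability estimate in modified spherical coordinates in a vertex neighbourhood, stated with the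 pointwise hypothesis defining the countably normed class C²_{βᵥ}.) -/
open MeasureTheory

/-- First-order partial derivative in direction `i` of a function on `ℝ³`. -/
noncomputable def pd (i : Fin 3) (f : (Fin 3 → ℝ) → ℝ) : (Fin 3 → ℝ) → ℝ :=
  fun x => fderiv ℝ f x (Pi.single i 1)

/-- Iterated partial derivative `D^α` for the multi-index `α = (a,b,c)`. -/
noncomputable def Dop (a b c : ℕ) (f : (Fin 3 → ℝ) → ℝ) : (Fin 3 → ℝ) → ℝ :=
  (pd 0)^[a] ((pd 1)^[b] ((pd 2)^[c] f))

/-- All multi-indices `α = (a,b,c)` with `|α| = a + b + c ≤ m`. -/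
def mIdx (m : ℕ) : Finset (ℕ × ℕ × ℕ) :=
  (Finset.range (m + 1) ×ˢ Finset.range (m + 1) ×ˢ Finset.range (m + 1)).filter
    (fun α => α.1 + α.2.1 + α.2.2 ≤ m)

/-- Euclidean norm `|x|` on `ℝ³`. -/
noncomputable def rad3 (x : Fin 3 → ℝ) : ℝ := Real.sqrt (x 0 ^ 2 + x 1 ^ 2 + x 2 ^ 2)

/-- Distance to the `x₃`-axis, `r(x) = √(x₁² + x₂²)`. -/
noncomputable def rad2of3 (x : Fin 3 → ℝ) : ℝ := Real.sqrt (x 0 ^ 2 + x 1 ^ 2)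

namespace Stmt0Aux

abbrev V : Type := Fin 3 → ℝ

noncomputable def tval (c : Fin 6) : ℝ → ℝ :=
  if c.val = 0 then Real.sin else if c.val = 1 then Real.cos
  else if c.val = 2 then (fun x => -Real.sin x) else if c.val = 3 then (fun x => -Real.cos x)
  else if c.val = 4 then (fun _ => 1) else (fun _ => 0)

def dnext (c : Fin 6) : Fin 6 :=
  if c.val = 0 then 1 else if c.val = 1 then 2 else if c.val = 2 then 3
  else if c.val = 3 then 0 else 5

lemma tval_hasDerivAt (c : Fin 6) (x : ℝ) : HasDerivAt (tval c) (tval (dnext c) x) x := by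
  fin_cases c
  · simpa [tval, dnext] using Real.hasDerivAt_sin x
  · simpa [tval, dnext] using Real.hasDerivAt_cos x
  · simpa [tval, dnext] using (Real.hasDerivAt_sin x).fun_neg
  · simpa [tval, dnext] using (Real.hasDerivAt_cos x).fun_neg
  · simpa [tval, dnext] using hasDerivAt_const x (1:ℝ)
  · simpa [tval, dnext] using hasDerivAt_const x (0:ℝ)

lemma abs_tval_le (c : Fin 6) (x : ℝ) : |tval c x| ≤ 1 := by
  fin_cases c <;>
      simp [tval, abs_le, neg_le, neg_le_neg_iff] <;>
    constructor <;>
      nlinarith [Real.neg_one_le_sin x, Real.sin_le_one x, Real.neg_one_le_cos x,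
        Real.cos_le_one x]

abbrev Fac : Type := Fin 6 × Fin 6

noncomputable def fval (c : Fac) (p : V) : ℝ := tval c.1 (p 0) * tval c.2 (p 1) * Real.exp (p 2)

def dFac (i : Fin 3) (c : Fac) : Fac :=
  if i.val = 0 then (dnext c.1, c.2) else if i.val = 1 then (c.1, dnext c.2) else c

noncomputable def prj (i : Fin 3) : V →L[ℝ] ℝ := ContinuousLinearMap.proj i

lemma prj_hasFDerivAt (i : Fin 3) (p : V) : HasFDerivAt (fun q : V => q i) (prj i) p :=
  (prj i).hasFDerivAt

lemma fval_hasFDerivAt (c : Fac) (p : V) :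
    HasFDerivAt (fval c)
      ((tval c.1 (p 0) * tval c.2 (p 1)) • (Real.exp (p 2) • prj 2)
        + Real.exp (p 2) • ((tval c.1 (p 0)) • (tval (dnext c.2) (p 1) • prj 1)
          + (tval c.2 (p 1)) • (tval (dnext c.1) (p 0) • prj 0))) p := by
  have h0 : HasFDerivAt (fun q : V => tval c.1 (q 0)) (tval (dnext c.1) (p 0) • prj 0) p :=
    (tval_hasDerivAt c.1 (p 0)).comp_hasFDerivAt p (prj_hasFDerivAt 0 p)
  have h1 : HasFDerivAt (fun q : V => tval c.2 (q 1)) (tval (dnext c.2) (p 1) • prj 1) p :=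
    (tval_hasDerivAt c.2 (p 1)).comp_hasFDerivAt p (prj_hasFDerivAt 1 p)
  have h2 : HasFDerivAt (fun q : V => Real.exp (q 2)) (Real.exp (p 2) • prj 2) p :=
    by have := (Real.hasDerivAt_exp (p 2)).comp_hasFDerivAt p (prj_hasFDerivAt 2 p); exact this
  exact (h0.mul h1).mul h2

lemma fval_diffAt (c : Fac) (p : V) : DifferentiableAt ℝ (fval c) p :=
  (fval_hasFDerivAt c p).differentiableAt

lemma pd_fval (i : Fin 3) (c : Fac) (p : V) : pd i (fval c) p = fval (dFac i c) p := by
  rw [pd, (fval_hasFDerivAt c p).fderiv]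
  fin_cases i <;>
    simp [prj, fval, dFac, Pi.single_apply] <;> ring

lemma abs_fval_le (c : Fac) (p : V) : |fval c p| ≤ Real.exp (p 2) := by
  rw [fval, abs_mul, abs_mul, Real.abs_exp]
  have h1 := abs_tval_le c.1 (p 0); have h2 := abs_tval_le c.2 (p 1)
  have h3 : |tval c.1 (p 0)| * |tval c.2 (p 1)| ≤ 1 := mul_le_one₀ h1 (abs_nonneg _) h2
  calc |tval c.1 (p 0)| * |tval c.2 (p 1)| * Real.exp (p 2)
      ≤ 1 * Real.exp (p 2) := mul_le_mul_of_nonneg_right h3 (Real.exp_pos _).le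
    _ = Real.exp (p 2) := one_mul _

end Stmt0Aux


namespace Stmt0Aux

variable {Ω : Set V}

lemma pd_congr (hΩo : IsOpen Ω) {f g : V → ℝ} (h : ∀ y ∈ Ω, f y = g y) {x : V} (hx : x ∈ Ω)
    (i : Fin 3) : pd i f x = pd i g x := by
  unfold pd
  rw [Filter.EventuallyEq.fderiv_eq (Filter.eventuallyEq_of_mem (hΩo.mem_nhds hx) h)]

lemma pd_mul {f g : V → ℝ} {x : V} (hf : DifferentiableAt ℝ f x) (hg : DifferentiableAt ℝ g x)
    (i : Fin 3) :
    pd i (fun p => f p * g p) x = pd i f x * g x + f x * pd i g x := by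
  unfold pd
  rw [fderiv_fun_mul hf hg]
  simp only [ContinuousLinearMap.add_apply, ContinuousLinearMap.smul_apply, smul_eq_mul]
  ring

lemma pd_add {f g : V → ℝ} {x : V} (hf : DifferentiableAt ℝ f x) (hg : DifferentiableAt ℝ g x)
    (i : Fin 3) :
    pd i (fun p => f p + g p) x = pd i f x + pd i g x := by
  unfold pd
  rw [fderiv_fun_add hf hg]; simp

lemma pd_const (i : Fin 3) (c : ℝ) (x : V) : pd i (fun _ => c) x = 0 := by
  unfold pd; simp

lemma diffAt_of_contDiffOn (hΩo : IsOpen Ω) {F : Type*} [NormedAddCommGroup F] [NormedSpace ℝ F]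
    {f : V → F} (hf : ContDiffOn ℝ (⊤ : ℕ∞) f Ω) {x : V} (hx : x ∈ Ω) :
    DifferentiableAt ℝ f x :=
  (hf.differentiableOn (by simp)).differentiableAt (hΩo.mem_nhds hx)

lemma contDiffOn_pd (hΩo : IsOpen Ω) {f : V → ℝ} (hf : ContDiffOn ℝ (⊤ : ℕ∞) f Ω) (i : Fin 3) :
    ContDiffOn ℝ (⊤ : ℕ∞) (pd i f) Ω := by
  have h : ContDiffOn ℝ (⊤ : ℕ∞) (fderiv ℝ f) Ω := hf.fderiv_of_isOpen hΩo (by simp)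
  exact h.clm_apply contDiffOn_const

lemma pd_comm (hΩo : IsOpen Ω) {f : V → ℝ} (hf : ContDiffOn ℝ (⊤ : ℕ∞) f Ω) {x : V} (hx : x ∈ Ω) (i j : Fin 3) :
    pd i (pd j f) x = pd j (pd i f) x := by
  set f' : V → V →L[ℝ] ℝ := fderiv ℝ f with hf'def
  have hf' : ContDiffOn ℝ (⊤ : ℕ∞) f' Ω := hf.fderiv_of_isOpen hΩo (by simp)
  have hev : ∀ᶠ y in nhds x, HasFDerivAt f (f' y) y := by
    filter_upwards [hΩo.mem_nhds hx] with y hy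
    exact (diffAt_of_contDiffOn hΩo hf hy).hasFDerivAt
  have hdiff : DifferentiableAt ℝ f' x := diffAt_of_contDiffOn hΩo hf' hx
  have hsym := second_derivative_symmetric_of_eventually hev hdiff.hasFDerivAt
  have h1 : ∀ k l : Fin 3, pd k (pd l f) x
      = fderiv ℝ f' x (Pi.single k 1) (Pi.single l 1) := by
    intro k l
    have : pd l f = fun y => (f' y) (Pi.single l 1) := rfl
    rw [pd, this, fderiv_clm_apply hdiff (differentiableAt_const _)]
    simp
  rw [h1, h1, hsym]

lemma contDiffOn_pd_iter (hΩo : IsOpen Ω) {f : V → ℝ} (hf : ContDiffOn ℝ (⊤ : ℕ∞) f Ω) (k : Fin 3) (n : ℕ) :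
    ContDiffOn ℝ (⊤ : ℕ∞) ((pd k)^[n] f) Ω := by
  induction n with
  | zero => simpa using hf
  | succ n ih => rw [Function.iterate_succ_apply']; exact contDiffOn_pd hΩo ih k

lemma pd_iter_congr (hΩo : IsOpen Ω) (k : Fin 3) (n : ℕ) {f g : V → ℝ}
    (h : ∀ y ∈ Ω, f y = g y) : ∀ x ∈ Ω, (pd k)^[n] f x = (pd k)^[n] g x := by
  induction n with
  | zero => simpa using h
  | succ n ih =>
      intro x hx
      rw [Function.iterate_succ_apply', Function.iterate_succ_apply']
      exact pd_congr hΩo ih hx k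

lemma pd_iter_comm (hΩo : IsOpen Ω) (i k : Fin 3) (n : ℕ) {g : V → ℝ} (hg : ContDiffOn ℝ (⊤ : ℕ∞) g Ω) :
    ∀ x ∈ Ω, pd i ((pd k)^[n] g) x = (pd k)^[n] (pd i g) x := by
  induction n with
  | zero => intro x _; simp
  | succ n ih =>
      intro x hx
      rw [Function.iterate_succ_apply']
      rw [pd_comm hΩo (contDiffOn_pd_iter hΩo hg k n) hx i k]
      rw [pd_congr hΩo ih hx k, Function.iterate_succ_apply' (pd k) n (pd i g)]

lemma contDiffOn_Dop (hΩo : IsOpen Ω) {u : V → ℝ} (hu : ContDiffOn ℝ (⊤ : ℕ∞) u Ω) (a b c : ℕ) :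
    ContDiffOn ℝ (⊤ : ℕ∞) (Dop a b c u) Ω :=
  contDiffOn_pd_iter hΩo (contDiffOn_pd_iter hΩo (contDiffOn_pd_iter hΩo hu 2 c) 1 b) 0 a

lemma pd_Dop_0 (u : V → ℝ) (a b c : ℕ) :
    pd 0 (Dop a b c u) = Dop (a+1) b c u := by
  rw [Dop, Dop, Function.iterate_succ_apply']

lemma pd_Dop_1 (hΩo : IsOpen Ω) {u : V → ℝ} (hu : ContDiffOn ℝ (⊤ : ℕ∞) u Ω) (a b c : ℕ) {x : V} (hx : x ∈ Ω) :
    pd 1 (Dop a b c u) x = Dop a (b+1) c u x := by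
  rw [Dop, pd_iter_comm hΩo 1 0 a (contDiffOn_pd_iter hΩo (contDiffOn_pd_iter hΩo hu 2 c) 1 b)
    x hx, Dop]
  exact pd_iter_congr hΩo 0 a
    (fun y _ => by rw [Function.iterate_succ_apply' (pd 1) b ((pd 2)^[c] u)]) x hx

lemma pd_Dop_2 (hΩo : IsOpen Ω) {u : V → ℝ} (hu : ContDiffOn ℝ (⊤ : ℕ∞) u Ω) (a b c : ℕ) {x : V} (hx : x ∈ Ω) :
    pd 2 (Dop a b c u) x = Dop a b (c+1) u x := by
  rw [Dop, pd_iter_comm hΩo 2 0 a (contDiffOn_pd_iter hΩo (contDiffOn_pd_iter hΩo hu 2 c) 1 b)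
    x hx, Dop]
  refine pd_iter_congr hΩo 0 a (fun y hy => ?_) x hx
  rw [pd_iter_comm hΩo 2 1 b (contDiffOn_pd_iter hΩo hu 2 c) y hy,
    Function.iterate_succ_apply' (pd 2) c u]

end Stmt0Aux


namespace Stmt0Aux

/-! ### The spherical map -/

def Efac (j : Fin 3) : Fac := if j.val = 0 then (0,1) else if j.val = 1 then (0,0) else (1,4)

noncomputable def Emap (p : V) : V := fun j => fval (Efac j) p

lemma Emap_hasFDerivAt (p : V) :
    HasFDerivAt Emap (ContinuousLinearMap.pi (fun j => fderiv ℝ (fval (Efac j)) p)) p :=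
  hasFDerivAt_pi.2 (fun j => (fval_diffAt (Efac j) p).hasFDerivAt)

lemma Emap_diffAt (p : V) : DifferentiableAt ℝ Emap p := (Emap_hasFDerivAt p).differentiableAt

lemma clm_apply_expand (L : V →L[ℝ] ℝ) (v : V) :
    L v = L (Pi.single 0 1) * v 0 + L (Pi.single 1 1) * v 1 + L (Pi.single 2 1) * v 2 := by
  have hv : v = v 0 • (Pi.single 0 1 : V) + v 1 • (Pi.single 1 1 : V) + v 2 • (Pi.single 2 1 : V) := by
    funext j; fin_cases j <;> simp [Pi.single_apply]
  conv_lhs => rw [hv]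
  simp only [map_add, ContinuousLinearMap.map_smul, smul_eq_mul]
  ring

lemma pd_comp_Emap {g : V → ℝ} {p : V} (hg : DifferentiableAt ℝ g (Emap p)) (i : Fin 3) :
    pd i (fun q => g (Emap q)) p =
      pd 0 g (Emap p) * fval (dFac i (Efac 0)) p + pd 1 g (Emap p) * fval (dFac i (Efac 1)) p
        + pd 2 g (Emap p) * fval (dFac i (Efac 2)) p := by
  have hE := Emap_hasFDerivAt p
  have hcomp := hg.hasFDerivAt.comp p hE
  have hfd : fderiv ℝ (fun q => g (Emap q)) p
      = (fderiv ℝ g (Emap p)).comp (ContinuousLinearMap.pi (fun j => fderiv ℝ (fval (Efac j)) p)) := by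
    have h := hcomp.fderiv
    rw [hg.hasFDerivAt.fderiv] at h
    exact h
  rw [pd, hfd, ContinuousLinearMap.comp_apply]
  set v := (ContinuousLinearMap.pi fun j => fderiv ℝ (fval (Efac j)) p) (Pi.single i 1) with hvdef
  have hv : ∀ j : Fin 3, v j = fval (dFac i (Efac j)) p := by
    intro j
    rw [hvdef, ContinuousLinearMap.pi_apply]
    exact pd_fval i (Efac j) p
  rw [clm_apply_expand, hv 0, hv 1, hv 2]
  rfl

/-! ### Products of factors and the Leibniz expansion -/

noncomputable def prodF (l : List Fac) (p : V) : ℝ := (l.map (fun c => fval c p)).prod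

@[simp] lemma prodF_nil (p : V) : prodF [] p = 1 := by simp [prodF]

@[simp] lemma prodF_cons (c : Fac) (l : List Fac) (p : V) :
    prodF (c :: l) p = fval c p * prodF l p := by simp [prodF]

lemma prodF_diffAt (l : List Fac) (p : V) : DifferentiableAt ℝ (prodF l) p := by
  induction l with
  | nil =>
      have h : prodF ([] : List Fac) = fun _ : V => (1:ℝ) := by funext q; simp
      rw [h]; exact differentiableAt_const 1
  | cons c l ih =>
      have : prodF (c :: l) = fun q => fval c q * prodF l q := by
        funext q; simp
      rw [this]; exact (fval_diffAt c p).mul ih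

def leib (i : Fin 3) : List Fac → List (List Fac)
  | [] => []
  | c :: l => (dFac i c :: l) :: (leib i l).map (fun l' => c :: l')

lemma leib_length_mem (i : Fin 3) : ∀ (l : List Fac), ∀ l' ∈ leib i l, l'.length = l.length := by
  intro l
  induction l with
  | nil => intro l' h; simp [leib] at h
  | cons c l ih =>
      intro l' h
      rcases List.mem_cons.1 h with rfl | h
      · simp
      · obtain ⟨l'', hl'', rfl⟩ := List.mem_map.1 h
        simp [ih l'' hl'']

lemma leib_length (i : Fin 3) : ∀ (l : List Fac), (leib i l).length = l.length := by
  intro l; induction l with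
  | nil => simp [leib]
  | cons c l ih => simp [leib, ih]

lemma pd_prodF (i : Fin 3) (l : List Fac) (p : V) :
    pd i (prodF l) p = ((leib i l).map (fun l' => prodF l' p)).sum := by
  induction l with
  | nil =>
      have : prodF ([] : List Fac) = fun _ => (1:ℝ) := by funext q; simp
      rw [this, pd_const]; simp [leib]
  | cons c l ih =>
      have h1 : prodF (c :: l) = fun q => fval c q * prodF l q := by funext q; simp
      rw [h1, pd_mul (fval_diffAt c p) (prodF_diffAt l p), pd_fval, ih]
      simp only [leib, List.map_cons, List.sum_cons, List.map_map]
      rw [show ((fun l' => prodF l' p) ∘ fun l' => c :: l') = fun l' => fval c p * prodF l' p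
        from funext fun l' => by simp]
      rw [List.sum_map_mul_left, prodF_cons]

end Stmt0Aux


namespace Stmt0Aux

/-! ### list sum helpers -/

lemma abs_list_sum_le {α : Type*} (l : List α) (f : α → ℝ) :
    |(l.map f).sum| ≤ (l.map (fun x => |f x|)).sum := by
  induction l with
  | nil => simp
  | cons a l ih =>
      simp only [List.map_cons, List.sum_cons]
      exact (abs_add_le _ _).trans (by linarith)

lemma diffAt_list_sum {α : Type*} {l : List α} {F : α → V → ℝ} {p : V}
    (h : ∀ a ∈ l, DifferentiableAt ℝ (F a) p) :
    DifferentiableAt ℝ (fun q => (l.map (fun a => F a q)).sum) p := by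
  induction l with
  | nil => simpa using differentiableAt_const (0:ℝ)
  | cons a l ih =>
      have h1 : (fun q => ((a :: l).map (fun a => F a q)).sum)
          = fun q => F a q + (l.map (fun a => F a q)).sum := by
        funext q; simp
      rw [h1]
      exact (h a List.mem_cons_self).add (ih (fun b hb => h b (List.mem_cons_of_mem a hb)))

lemma pd_list_sum {α : Type*} (i : Fin 3) {l : List α} {F : α → V → ℝ} {p : V}
    (h : ∀ a ∈ l, DifferentiableAt ℝ (F a) p) :
    pd i (fun q => (l.map (fun a => F a q)).sum) p = (l.map (fun a => pd i (F a) p)).sum := by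
  induction l with
  | nil =>
      have h1 : (fun q : V => (([] : List α).map (fun a => F a q)).sum) = fun _ => (0:ℝ) := by
        funext q; simp
      rw [h1, pd_const]; simp
  | cons a l ih =>
      have h1 : (fun q => ((a :: l).map (fun a => F a q)).sum)
          = fun q => F a q + (l.map (fun a => F a q)).sum := by
        funext q; simp
      rw [h1, pd_add (h a List.mem_cons_self)
        (diffAt_list_sum (fun b hb => h b (List.mem_cons_of_mem a hb)))
        , ih (fun b hb => h b (List.mem_cons_of_mem a hb))]
      simp

/-! ### Terms -/

abbrev Tm : Type := (ℕ × ℕ × ℕ) × List Fac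

noncomputable def tmval (u : V → ℝ) (T : Tm) (p : V) : ℝ :=
  Dop T.1.1 T.1.2.1 T.1.2.2 u (Emap p) * prodF T.2 p

def incIdx (j : Fin 3) (β : ℕ × ℕ × ℕ) : ℕ × ℕ × ℕ :=
  if j.val = 0 then (β.1+1, β.2.1, β.2.2) else if j.val = 1 then (β.1, β.2.1+1, β.2.2)
  else (β.1, β.2.1, β.2.2+1)

def pdTm (i : Fin 3) (T : Tm) : List Tm :=
  [(incIdx 0 T.1, dFac i (Efac 0) :: T.2), (incIdx 1 T.1, dFac i (Efac 1) :: T.2),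
    (incIdx 2 T.1, dFac i (Efac 2) :: T.2)]
    ++ (leib i T.2).map (fun l => (T.1, l))

variable {Ω : Set V}

lemma pd_Dop' (hΩo : IsOpen Ω) {u : V → ℝ} (hu : ContDiffOn ℝ (⊤ : ℕ∞) u Ω) (j : Fin 3)
    (β : ℕ × ℕ × ℕ) {x : V} (hx : x ∈ Ω) :
    pd j (Dop β.1 β.2.1 β.2.2 u) x
      = Dop (incIdx j β).1 (incIdx j β).2.1 (incIdx j β).2.2 u x := by
  fin_cases j
  · simp only [incIdx]; norm_num
    exact congrFun (pd_Dop_0 u β.1 β.2.1 β.2.2) x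
  · simp only [incIdx]; norm_num
    exact pd_Dop_1 hΩo hu β.1 β.2.1 β.2.2 hx
  · simp only [incIdx]; norm_num
    exact pd_Dop_2 hΩo hu β.1 β.2.1 β.2.2 hx

lemma tmval_diffAt (hΩo : IsOpen Ω) {u : V → ℝ} (hu : ContDiffOn ℝ (⊤ : ℕ∞) u Ω) (T : Tm) {p : V}
    (hp : Emap p ∈ Ω) : DifferentiableAt ℝ (tmval u T) p := by
  have h1 : DifferentiableAt ℝ (Dop T.1.1 T.1.2.1 T.1.2.2 u) (Emap p) :=
    diffAt_of_contDiffOn hΩo (contDiffOn_Dop hΩo hu _ _ _) hp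
  exact ((h1.comp p (Emap_diffAt p)).mul (prodF_diffAt T.2 p))

lemma pd_tmval (hΩo : IsOpen Ω) {u : V → ℝ} (hu : ContDiffOn ℝ (⊤ : ℕ∞) u Ω) (i : Fin 3) (T : Tm)
    {p : V} (hp : Emap p ∈ Ω) :
    pd i (tmval u T) p = ((pdTm i T).map (fun T' => tmval u T' p)).sum := by
  have hg : DifferentiableAt ℝ (Dop T.1.1 T.1.2.1 T.1.2.2 u) (Emap p) :=
    diffAt_of_contDiffOn hΩo (contDiffOn_Dop hΩo hu _ _ _) hp
  have hgE : DifferentiableAt ℝ (fun q => Dop T.1.1 T.1.2.1 T.1.2.2 u (Emap q)) p :=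
    hg.comp p (Emap_diffAt p)
  have h0 : tmval u T = fun q => (fun q' => Dop T.1.1 T.1.2.1 T.1.2.2 u (Emap q')) q
      * prodF T.2 q := rfl
  rw [h0, pd_mul hgE (prodF_diffAt T.2 p), pd_comp_Emap hg i, pd_prodF]
  rw [pd_Dop' hΩo hu 0 T.1 hp, pd_Dop' hΩo hu 1 T.1 hp, pd_Dop' hΩo hu 2 T.1 hp]
  simp only [pdTm, List.map_append, List.sum_append, List.map_cons, List.sum_cons,
    List.map_nil, List.sum_nil, List.map_map, tmval, prodF_cons]
  rw [show ((fun T' : Tm => Dop T'.1.1 T'.1.2.1 T'.1.2.2 u (Emap p) * prodF T'.2 p)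
      ∘ (fun l => (T.1, l))) = fun l => Dop T.1.1 T.1.2.1 T.1.2.2 u (Emap p) * prodF l p
    from funext fun l => by simp]
  rw [List.sum_map_mul_left]
  ring

/-! ### The full expansion -/

def tms : List (Fin 3) → List Tm
  | [] => [((0,0,0), [])]
  | i :: ws => ((tms ws).map (pdTm i)).flatten

lemma tms_rep (hΩo : IsOpen Ω) {u : V → ℝ} (hu : ContDiffOn ℝ (⊤ : ℕ∞) u Ω)
    {U : Set V} (hUo : IsOpen U) (hmem : ∀ p ∈ U, Emap p ∈ Ω) :
    ∀ (ws : List (Fin 3)), ∀ p ∈ U,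
      List.foldr pd (fun q => u (Emap q)) ws p = ((tms ws).map (fun T => tmval u T p)).sum := by
  intro ws
  induction ws with
  | nil =>
      intro p hp
      simp [tms, tmval, Dop]
  | cons i ws ih =>
      intro p hp
      have h1 : List.foldr pd (fun q => u (Emap q)) (i :: ws) p
          = pd i (List.foldr pd (fun q => u (Emap q)) ws) p := rfl
      rw [h1, pd_congr hUo ih hp i,
        pd_list_sum i (fun T _ => tmval_diffAt hΩo hu T (hmem p hp))]
      have h2 : ∀ T ∈ tms ws, pd i (tmval u T) p = ((pdTm i T).map (fun T' => tmval u T' p)).sum :=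
        fun T _ => pd_tmval hΩo hu i T (hmem p hp)
      rw [List.map_congr_left h2]
      simp only [tms, List.map_flatten, List.sum_flatten, List.map_map]
      rfl

end Stmt0Aux


namespace Stmt0Aux

/-! ### Invariants of the expansion -/

lemma mem_pdTm {i : Fin 3} {T T' : Tm} (h : T' ∈ pdTm i T) :
    (T'.1.1 + T'.1.2.1 + T'.1.2.2 = T.1.1 + T.1.2.1 + T.1.2.2 + 1 ∧
      T'.2.length = T.2.length + 1) ∨
    (T'.1 = T.1 ∧ T'.2.length = T.2.length) := by
  simp only [pdTm, List.mem_append, List.mem_cons, List.mem_map, List.not_mem_nil, or_false] at h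
  rcases h with (rfl | rfl | rfl) | ⟨l, hl, rfl⟩
  · left; constructor
    · simp [incIdx]; omega
    · simp
  · left; constructor
    · simp [incIdx]; omega
    · simp
  · left; constructor
    · simp [incIdx]; omega
    · simp
  · right; exact ⟨rfl, leib_length_mem i T.2 l hl⟩

lemma tms_invariant : ∀ ws : List (Fin 3), ∀ T ∈ tms ws,
    T.1.1 + T.1.2.1 + T.1.2.2 = T.2.length ∧ T.2.length ≤ ws.length := by
  intro ws
  induction ws with
  | nil => intro T hT; simp [tms] at hT; subst hT; simp
  | cons i ws ih =>
      intro T hT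
      simp only [tms, List.mem_flatten, List.mem_map] at hT
      obtain ⟨L, ⟨T', hT', rfl⟩, hTL⟩ := hT
      obtain ⟨h1, h2⟩ := ih T' hT'
      rcases mem_pdTm hTL with ⟨ha, hb⟩ | ⟨ha, hb⟩
      · constructor
        · omega
        · simp only [List.length_cons]; omega
      · constructor
        · rw [ha, hb]; exact h1
        · rw [hb]; simp only [List.length_cons]; omega

/-! ### The weight estimate -/

lemma list_sum_map_const {α : Type*} (l : List α) (c : ℝ) :
    (l.map (fun _ => c)).sum = l.length * c := by
  induction l with
  | nil => simp
  | cons a l ih => simp [ih]; ring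

lemma pdTm_weight_sum {d : ℝ} (hd : 1 ≤ d) (i : Fin 3) (T : Tm) :
    ((pdTm i T).map (fun T' => d ^ T'.2.length * (Nat.factorial T'.2.length : ℝ))).sum
      = 3 * (d ^ (T.2.length + 1) * (Nat.factorial (T.2.length + 1) : ℝ))
        + T.2.length * (d ^ T.2.length * (Nat.factorial T.2.length : ℝ)) := by
  simp only [pdTm, List.map_append, List.sum_append, List.map_cons, List.sum_cons, List.map_nil,
    List.sum_nil, List.length_cons, List.map_map]
  have h : ((leib i T.2).map ((fun T' : Tm => d ^ T'.2.length * (Nat.factorial T'.2.length : ℝ))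
      ∘ (fun l => (T.1, l)))).sum
      = (T.2.length : ℝ) * (d ^ T.2.length * (Nat.factorial T.2.length : ℝ)) := by
    rw [List.map_congr_left (f := ((fun T' : Tm => d ^ T'.2.length
        * (Nat.factorial T'.2.length : ℝ)) ∘ (fun l => (T.1, l))))
      (g := fun _ => d ^ T.2.length * (Nat.factorial T.2.length : ℝ))
      (fun l hl => by simp [leib_length_mem i T.2 l hl])]
    rw [list_sum_map_const, leib_length]
  rw [h]
  ring

lemma tms_weight {d : ℝ} (hd : 1 ≤ d) : ∀ ws : List (Fin 3),
    ((tms ws).map (fun T => d ^ T.2.length * (Nat.factorial T.2.length : ℝ))).sum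
      ≤ (3 * d + 1) ^ ws.length * (Nat.factorial ws.length : ℝ) := by
  intro ws
  induction ws with
  | nil => simp [tms]
  | cons i ws ih =>
      have hstep : ((tms (i :: ws)).map
          (fun T => d ^ T.2.length * (Nat.factorial T.2.length : ℝ))).sum
          = ((tms ws).map (fun T => ((pdTm i T).map
              (fun T' => d ^ T'.2.length * (Nat.factorial T'.2.length : ℝ))).sum)).sum := by
        simp only [tms, List.map_flatten, List.sum_flatten, List.map_map]
        rfl
      rw [hstep]
      have hd0 : (0:ℝ) < d := lt_of_lt_of_le one_pos hd
      have hbound : ∀ T ∈ tms ws,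
          ((pdTm i T).map (fun T' => d ^ T'.2.length * (Nat.factorial T'.2.length : ℝ))).sum
          ≤ ((3 * d + 1) * (ws.length + 1)) * (d ^ T.2.length * (Nat.factorial T.2.length : ℝ)) := by
        intro T hT
        obtain ⟨-, hk⟩ := tms_invariant ws T hT
        rw [pdTm_weight_sum hd i T]
        have hfact : (Nat.factorial (T.2.length + 1) : ℝ)
            = (T.2.length + 1) * (Nat.factorial T.2.length : ℝ) := by
          rw [Nat.factorial_succ]; push_cast; ring
        rw [hfact, pow_succ]
        have hkn : (T.2.length : ℝ) ≤ (ws.length : ℝ) := by exact_mod_cast hk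
        have hcoef : 3*d*((T.2.length:ℝ)+1) + T.2.length ≤ (3*d+1)*((ws.length:ℝ)+1) := by
          nlinarith
        calc 3 * (d ^ T.2.length * d * (((T.2.length:ℝ) + 1) * (Nat.factorial T.2.length : ℝ)))
              + (T.2.length:ℝ) * (d ^ T.2.length * (Nat.factorial T.2.length : ℝ))
            = (3*d*((T.2.length:ℝ)+1) + T.2.length)
              * (d ^ T.2.length * (Nat.factorial T.2.length : ℝ)) := by ring
          _ ≤ ((3*d+1)*((ws.length:ℝ)+1))
              * (d ^ T.2.length * (Nat.factorial T.2.length : ℝ)) := by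
            refine mul_le_mul_of_nonneg_right hcoef ?_
            positivity
          _ = (3 * d + 1) * ((ws.length:ℝ) + 1)
              * (d ^ T.2.length * (Nat.factorial T.2.length : ℝ)) := by ring
      calc ((tms ws).map (fun T => ((pdTm i T).map
              (fun T' => d ^ T'.2.length * (Nat.factorial T'.2.length : ℝ))).sum)).sum
          ≤ ((tms ws).map (fun T => ((3 * d + 1) * (ws.length + 1))
              * (d ^ T.2.length * (Nat.factorial T.2.length : ℝ)))).sum :=
            List.sum_le_sum hbound
        _ = ((3 * d + 1) * (ws.length + 1)) * ((tms ws).map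
              (fun T => d ^ T.2.length * (Nat.factorial T.2.length : ℝ))).sum :=
            List.sum_map_mul_left _ _ _
        _ ≤ ((3 * d + 1) * (ws.length + 1))
              * ((3 * d + 1) ^ ws.length * (Nat.factorial ws.length : ℝ)) := by
            have hpos : (0:ℝ) ≤ (3 * d + 1) * (ws.length + 1) := by positivity
            exact mul_le_mul_of_nonneg_left ih hpos
        _ = (3 * d + 1) ^ (i :: ws).length * (Nat.factorial (i :: ws).length : ℝ) := by
            simp only [List.length_cons, pow_succ, Nat.factorial_succ]
            push_cast
            ring

/-! ### Geometry of the spherical map -/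

lemma Emap_0 (p : V) : Emap p 0 = Real.sin (p 0) * Real.cos (p 1) * Real.exp (p 2) := rfl
lemma Emap_1 (p : V) : Emap p 1 = Real.sin (p 0) * Real.sin (p 1) * Real.exp (p 2) := rfl
lemma Emap_2 (p : V) : Emap p 2 = Real.cos (p 0) * 1 * Real.exp (p 2) := rfl

lemma rad3_Emap (p : V) : rad3 (Emap p) = Real.exp (p 2) := by
  have h : (Emap p 0)^2 + (Emap p 1)^2 + (Emap p 2)^2 = (Real.exp (p 2))^2 := by
    rw [Emap_0, Emap_1, Emap_2]
    linear_combination (Real.exp (p 2))^2 * (Real.sin (p 0))^2 * Real.sin_sq_add_cos_sq (p 1)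
      + (Real.exp (p 2))^2 * Real.sin_sq_add_cos_sq (p 0)
  rw [rad3, h, Real.sqrt_sq (Real.exp_pos _).le]

lemma Emap_mem {φ₀ ρv : ℝ} (hφ₀ : 0 < φ₀) (hρ : 0 < ρv) {p : V}
    (h0 : φ₀ < p 0) (h1 : p 0 < Real.pi - φ₀) (h2 : p 2 < Real.log ρv) :
    0 < rad3 (Emap p) ∧ rad3 (Emap p) < ρv ∧
      φ₀ < Real.arccos (Emap p 2 / rad3 (Emap p)) ∧
      Real.arccos (Emap p 2 / rad3 (Emap p)) < Real.pi - φ₀ := by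
  have hrad := rad3_Emap p
  have harg : Emap p 2 / rad3 (Emap p) = Real.cos (p 0) := by
    rw [Emap_2, hrad]
    field_simp
  have hp0 : 0 ≤ p 0 := le_of_lt (lt_of_lt_of_le hφ₀ h0.le)
  have hp0' : p 0 ≤ Real.pi := by
    have := Real.pi_pos
    linarith
  have harc : Real.arccos (Emap p 2 / rad3 (Emap p)) = p 0 := by
    rw [harg, Real.arccos_cos hp0 hp0']
  refine ⟨by rw [hrad]; exact Real.exp_pos _, ?_, by rw [harc]; exact h0, by rw [harc]; exact h1⟩
  rw [hrad, ← Real.exp_log hρ]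
  exact Real.exp_lt_exp.2 h2

end Stmt0Aux


namespace Stmt0Aux

lemma abs_prodF_le (l : List Fac) (p : V) : |prodF l p| ≤ Real.exp (p 2) ^ l.length := by
  induction l with
  | nil => simp
  | cons c l ih =>
      rw [prodF_cons, abs_mul, List.length_cons, pow_succ]
      have h1 := abs_fval_le c p
      have h2 := abs_nonneg (fval c p)
      have h3 := abs_nonneg (prodF l p)
      calc |fval c p| * |prodF l p| ≤ Real.exp (p 2) * Real.exp (p 2) ^ l.length := by
            exact mul_le_mul h1 ih h3 (Real.exp_pos _).le
        _ = Real.exp (p 2) ^ l.length * Real.exp (p 2) := by ring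

lemma fact_mul_le (a b c : ℕ) :
    a.factorial * b.factorial * c.factorial ≤ (a + b + c).factorial := by
  calc a.factorial * b.factorial * c.factorial
      ≤ (a + b).factorial * c.factorial :=
        Nat.mul_le_mul_right _ (Nat.le_of_dvd (a + b).factorial_pos
          (Nat.factorial_mul_factorial_dvd_factorial_add a b))
    _ ≤ (a + b + c).factorial :=
        Nat.le_of_dvd (a + b + c).factorial_pos
          (Nat.factorial_mul_factorial_dvd_factorial_add (a + b) c)

lemma foldr_replicate (i : Fin 3) (n : ℕ) (f : V → ℝ) :
    List.foldr pd f (List.replicate n i) = (pd i)^[n] f := by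
  induction n with
  | zero => simp
  | succ n ih => rw [List.replicate_succ, List.foldr_cons, ih,
      Function.iterate_succ_apply' (pd i) n f]

lemma Dop_eq_foldr (a b c : ℕ) (f : V → ℝ) :
    Dop a b c f = List.foldr pd f
      (List.replicate a 0 ++ (List.replicate b 1 ++ List.replicate c 2)) := by
  rw [List.foldr_append, List.foldr_append, foldr_replicate, foldr_replicate, foldr_replicate]
  rfl

variable {Ω : Set V}

lemma tmval_bound {u : V → ℝ} {C d βv : ℝ} (hC : 0 ≤ C) (hd : 1 ≤ d)
    (hbound : ∀ a b c : ℕ, ∀ x ∈ Ω, |Dop a b c u x| ≤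
      C * d ^ (a + b + c) * (Nat.factorial a * Nat.factorial b * Nat.factorial c) *
        rad3 x ^ (1 / 2 - βv - (a + b + c : ℝ)))
    (T : Tm) (hinv : T.1.1 + T.1.2.1 + T.1.2.2 = T.2.length) {p : V} (hp : Emap p ∈ Ω) :
    |tmval u T p| ≤ C * (d ^ T.2.length * (Nat.factorial T.2.length : ℝ))
      * Real.exp ((1 / 2 - βv) * p 2) := by
  obtain ⟨⟨a, b, c⟩, l⟩ := T
  simp only at hinv ⊢
  set k := l.length with hk
  have h1 := hbound a b c (Emap p) hp
  rw [rad3_Emap p] at h1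
  have hfac : ((Nat.factorial a * Nat.factorial b * Nat.factorial c : ℕ) : ℝ)
      ≤ (Nat.factorial k : ℝ) := by
    rw [← hinv]; exact_mod_cast fact_mul_le a b c
  have h2 : |Dop a b c u (Emap p)| ≤ C * d ^ k * (Nat.factorial k : ℝ)
      * Real.exp (p 2) ^ (1 / 2 - βv - (k : ℝ)) := by
    have hcast : ((a:ℝ) + b + c) = (k:ℝ) := by exact_mod_cast hinv
    rw [show ((a:ℝ) + ↑b + ↑c) = (k:ℝ) from hcast, hinv] at h1
    refine h1.trans ?_
    have hrp : (0:ℝ) ≤ Real.exp (p 2) ^ (1 / 2 - βv - (k : ℝ)) :=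
      (Real.rpow_pos_of_pos (Real.exp_pos _) _).le
    refine mul_le_mul_of_nonneg_right ?_ hrp
    refine mul_le_mul_of_nonneg_left ?_ (by positivity)
    exact_mod_cast hfac
  have h3 : |tmval u ((a,b,c), l) p| ≤ (C * d ^ k * (Nat.factorial k : ℝ)
      * Real.exp (p 2) ^ (1 / 2 - βv - (k : ℝ))) * Real.exp (p 2) ^ k := by
    rw [tmval, abs_mul]
    exact mul_le_mul h2 (abs_prodF_le l p) (abs_nonneg _) (by positivity)
  refine h3.trans (le_of_eq ?_)
  have hE : Real.exp (p 2) ^ (1 / 2 - βv - (k : ℝ)) * Real.exp (p 2) ^ k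
      = Real.exp ((1 / 2 - βv) * p 2) := by
    rw [← Real.rpow_natCast (Real.exp (p 2)) k, ← Real.rpow_add (Real.exp_pos _)]
    rw [show (1 / 2 - βv - (k:ℝ)) + (k:ℝ) = 1 / 2 - βv by ring]
    rw [← Real.exp_mul, mul_comm]
  calc C * d ^ k * (Nat.factorial k : ℝ) * Real.exp (p 2) ^ (1 / 2 - βv - (k : ℝ))
        * Real.exp (p 2) ^ k
      = C * d ^ k * (Nat.factorial k : ℝ)
        * (Real.exp (p 2) ^ (1 / 2 - βv - (k : ℝ)) * Real.exp (p 2) ^ k) := by ring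
    _ = C * (d ^ k * (Nat.factorial k : ℝ)) * Real.exp ((1 / 2 - βv) * p 2) := by
        rw [hE]; ring

lemma key_bound (hΩo : IsOpen Ω) {u : V → ℝ} (hu : ContDiffOn ℝ (⊤ : ℕ∞) u Ω)
    {C d βv : ℝ} (hC : 0 ≤ C) (hd : 1 ≤ d)
    (hbound : ∀ a b c : ℕ, ∀ x ∈ Ω, |Dop a b c u x| ≤
      C * d ^ (a + b + c) * (Nat.factorial a * Nat.factorial b * Nat.factorial c) *
        rad3 x ^ (1 / 2 - βv - (a + b + c : ℝ)))
    {U : Set V} (hUo : IsOpen U) (hmem : ∀ p ∈ U, Emap p ∈ Ω)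
    (a b c : ℕ) {p : V} (hp : p ∈ U) :
    |Dop a b c (fun q => u (Emap q)) p| ≤
      C * (3 * d + 1) ^ (a + b + c) * (Nat.factorial (a + b + c) : ℝ)
        * Real.exp ((1 / 2 - βv) * p 2) := by
  set ws : List (Fin 3) := List.replicate a 0 ++ (List.replicate b 1 ++ List.replicate c 2)
    with hws
  have hlen : ws.length = a + b + c := by simp [hws]; omega
  have hrep := tms_rep hΩo hu hUo hmem ws p hp
  rw [Dop_eq_foldr, hrep]
  calc |((tms ws).map (fun T => tmval u T p)).sum|
      ≤ ((tms ws).map (fun T => |tmval u T p|)).sum := abs_list_sum_le _ _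
    _ ≤ ((tms ws).map (fun T => (C * Real.exp ((1 / 2 - βv) * p 2))
          * (d ^ T.2.length * (Nat.factorial T.2.length : ℝ)))).sum := by
        refine List.sum_le_sum ?_
        intro T hT
        have h := tmval_bound hC hd hbound T (tms_invariant ws T hT).1 (hmem p hp)
        calc |tmval u T p| ≤ C * (d ^ T.2.length * (Nat.factorial T.2.length : ℝ))
              * Real.exp ((1 / 2 - βv) * p 2) := h
          _ = (C * Real.exp ((1 / 2 - βv) * p 2))
              * (d ^ T.2.length * (Nat.factorial T.2.length : ℝ)) := by ring
    _ = (C * Real.exp ((1 / 2 - βv) * p 2)) * ((tms ws).map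
          (fun T => d ^ T.2.length * (Nat.factorial T.2.length : ℝ))).sum :=
        List.sum_map_mul_left _ _ _
    _ ≤ (C * Real.exp ((1 / 2 - βv) * p 2))
          * ((3 * d + 1) ^ ws.length * (Nat.factorial ws.length : ℝ)) := by
        refine mul_le_mul_of_nonneg_left (tms_weight hd ws) ?_
        positivity
    _ = C * (3 * d + 1) ^ (a + b + c) * (Nat.factorial (a + b + c) : ℝ)
          * Real.exp ((1 / 2 - βv) * p 2) := by
        rw [hlen]; ring

end Stmt0Aux


namespace Stmt0Aux

open Set

lemma integrableOn_exp_mul_Iic {c : ℝ} (hc : 1 ≤ c) (L : ℝ) :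
    IntegrableOn (fun x => Real.exp (c * x)) (Set.Iic L) := by
  have hcont : Continuous fun x : ℝ => Real.exp (c * x) :=
    Real.continuous_exp.comp (continuous_const.mul continuous_id)
  have h1 : IntegrableOn (fun x => Real.exp (c * x)) (Set.Iic 0) := by
    refine Integrable.mono' (integrableOn_exp_Iic 0) hcont.aestronglyMeasurable ?_
    filter_upwards [ae_restrict_mem measurableSet_Iic] with x hx
    rw [Real.norm_eq_abs, abs_of_pos (Real.exp_pos _)]
    exact Real.exp_le_exp.2 (by nlinarith [mul_nonneg (sub_nonneg.2 hc) (neg_nonneg.2 (Set.mem_Iic.1 hx))])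
  have h2 : IntegrableOn (fun x => Real.exp (c * x)) (Set.Icc 0 L) :=
    hcont.integrableOn_Icc
  refine (h1.union h2).mono_set ?_
  intro x hx
  by_cases h : x ≤ 0
  · exact Or.inl h
  · exact Or.inr ⟨le_of_not_ge h, hx⟩

lemma integral_exp_mul_Iic {c : ℝ} (hc : 1 ≤ c) (L : ℝ) :
    ∫ x in Set.Iic L, Real.exp (c * x) = Real.exp (c * L) / c := by
  have hc0 : 0 < c := lt_of_lt_of_le one_pos hc
  have hcont : Continuous fun x : ℝ => Real.exp (c * x) / c :=
    (Real.continuous_exp.comp (continuous_const.mul continuous_id)).div_const c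
  have hderiv : ∀ x ∈ Set.Iio L,
      HasDerivAt (fun y => Real.exp (c * y) / c) (Real.exp (c * x)) x := by
    intro x _
    have h := (((hasDerivAt_id x).const_mul c).exp).div_const c
    exact h.congr_deriv (by simp [hc0.ne'])
  have htend : Filter.Tendsto (fun x => Real.exp (c * x) / c) Filter.atBot (nhds 0) := by
    have h1 : Filter.Tendsto (fun x : ℝ => c * x) Filter.atBot Filter.atBot :=
      Filter.Tendsto.const_mul_atBot hc0 Filter.tendsto_id
    have h2 := (Real.tendsto_exp_atBot.comp h1).div_const c
    simpa using h2
  have := integral_Iic_of_hasDerivAt_of_tendsto hcont.continuousWithinAt hderiv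
    (integrableOn_exp_mul_Iic hc L) htend
  rw [this]; ring

lemma integral_exp_mul_Iio_le {c : ℝ} (hc : 1 ≤ c) (L : ℝ) :
    ∫ x in Set.Iio L, Real.exp (c * x) ≤ Real.exp (c * L) := by
  have h1 : ∫ x in Set.Iio L, Real.exp (c * x) ≤ ∫ x in Set.Iic L, Real.exp (c * x) := by
    refine setIntegral_mono_set (integrableOn_exp_mul_Iic hc L) ?_ ?_
    · filter_upwards with x using (Real.exp_pos _).le
    · exact Filter.Eventually.of_forall Set.Iio_subset_Iic_self
  rw [integral_exp_mul_Iic hc L] at h1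
  refine h1.trans ?_
  exact div_le_self (Real.exp_pos _).le hc

end Stmt0Aux


open Stmt0Aux

/-- **Proposition 2.2.1**: differentiability estimate in modified spherical coordinates
in a vertex neighbourhood. -/
theorem stmt0
    (φ₀ ρv βv : ℝ) (hφ₀ : 0 < φ₀) (hφ : φ₀ < Real.pi / 2) (hρ : 0 < ρv)
    (hβ : βv ∈ Set.Ioo (0 : ℝ) (1 / 2))
    (Ω : Set (Fin 3 → ℝ))
    (hΩ : Ω = {x | 0 < rad3 x ∧ rad3 x < ρv ∧
      φ₀ < Real.arccos (x 2 / rad3 x) ∧ Real.arccos (x 2 / rad3 x) < Real.pi - φ₀})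
    (w : (Fin 3 → ℝ) → ℝ) (hw : ContDiffOn ℝ (⊤ : ℕ∞) w Ω) (wv : ℝ)
    (C d : ℝ) (hC : 0 ≤ C) (hd : 1 ≤ d)
    (hbound : ∀ a b c : ℕ, ∀ x ∈ Ω,
      |Dop a b c (fun y => w y - wv) x| ≤
        C * d ^ (a + b + c) * (Nat.factorial a * Nat.factorial b * Nat.factorial c) *
          rad3 x ^ (1 / 2 - βv - (a + b + c : ℝ)))
    (W : (Fin 3 → ℝ) → ℝ)
    (hW : W = fun p => w ![Real.exp (p 2) * Real.sin (p 0) * Real.cos (p 1),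
      Real.exp (p 2) * Real.sin (p 0) * Real.sin (p 1), Real.exp (p 2) * Real.cos (p 0)]) :
    ∃ C₁ : ℝ, 0 < C₁ ∧ ∃ d₁ : ℝ, 0 < d₁ ∧ ∀ m : ℕ, 1 ≤ m → ∀ ν : ℝ, 0 < ν → ν ≤ ρv →
      (∫ p in {p : Fin 3 → ℝ | φ₀ < p 0 ∧ p 0 < Real.pi - φ₀ ∧
          -Real.pi < p 1 ∧ p 1 < Real.pi ∧ p 2 < Real.log ν},
        Real.exp (p 2) *
          ∑ α ∈ mIdx m, (Dop α.1 α.2.1 α.2.2 (fun q => W q - wv) p) ^ 2) ≤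
      C₁ * (d₁ ^ m * Nat.factorial m) ^ 2 * ν ^ (1 - 2 * βv) := by
    classical
  obtain ⟨hβ0, hβ2⟩ := hβ
  have hπ := Real.pi_pos
  have hrad_cont : Continuous rad3 := by
    apply Real.continuous_sqrt.comp
    continuity
  have hΩo : IsOpen Ω := by
    have hA : IsOpen {x : Fin 3 → ℝ | 0 < rad3 x ∧ rad3 x < ρv} := by
      have h : {x : Fin 3 → ℝ | 0 < rad3 x ∧ rad3 x < ρv} = rad3 ⁻¹' (Set.Ioo 0 ρv) := rfl
      rw [h]; exact isOpen_Ioo.preimage hrad_cont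
    have hgc : ContinuousOn (fun x : Fin 3 → ℝ => Real.arccos (x 2 / rad3 x))
        {x : Fin 3 → ℝ | 0 < rad3 x ∧ rad3 x < ρv} :=
      Real.continuous_arccos.comp_continuousOn
        (((continuous_apply (2 : Fin 3)).continuousOn).div hrad_cont.continuousOn
          (fun x hx => ne_of_gt hx.1))
    have h2 : Ω = {x : Fin 3 → ℝ | 0 < rad3 x ∧ rad3 x < ρv} ∩
        (fun x : Fin 3 → ℝ => Real.arccos (x 2 / rad3 x)) ⁻¹' (Set.Ioo φ₀ (Real.pi - φ₀)) := by
      rw [hΩ]; ext x; simp only [Set.mem_setOf_eq, Set.mem_inter_iff, Set.mem_preimage,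
        Set.mem_Ioo]; tauto
    rw [h2]
    exact hgc.isOpen_inter_preimage hA isOpen_Ioo
  set u : (Fin 3 → ℝ) → ℝ := fun y => w y - wv with hu_def
  have hu : ContDiffOn ℝ (⊤ : ℕ∞) u Ω := hw.sub contDiffOn_const
  set U : Set (Fin 3 → ℝ) := {p | φ₀ < p 0 ∧ p 0 < Real.pi - φ₀ ∧ p 2 < Real.log ρv}
    with hU_def
  have hUo : IsOpen U := by
    have h : U = (fun p : Fin 3 → ℝ => p 0) ⁻¹' (Set.Ioo φ₀ (Real.pi - φ₀)) ∩
        (fun p : Fin 3 → ℝ => p 2) ⁻¹' (Set.Iio (Real.log ρv)) := by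
      ext p; simp only [hU_def, Set.mem_setOf_eq, Set.mem_inter_iff, Set.mem_preimage,
        Set.mem_Ioo, Set.mem_Iio]; tauto
    rw [h]
    exact (isOpen_Ioo.preimage (continuous_apply 0)).inter
      (isOpen_Iio.preimage (continuous_apply 2))
  have hmem : ∀ p ∈ U, Emap p ∈ Ω := by
    intro p hp
    rw [hΩ]
    exact Emap_mem hφ₀ hρ hp.1 hp.2.1 hp.2.2
  have hEq : (fun q : Fin 3 → ℝ => W q - wv) = fun q => u (Emap q) := by
    funext q
    rw [hW, hu_def]
    simp only
    congr 2
    funext j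
    fin_cases j <;> simp [Emap_0, Emap_1, Emap_2] <;> ring
  have key : ∀ (a b c : ℕ) (p : Fin 3 → ℝ), p ∈ U →
      |Dop a b c (fun q => W q - wv) p| ≤
        C * (3 * d + 1) ^ (a + b + c) * (Nat.factorial (a + b + c) : ℝ)
          * Real.exp ((1 / 2 - βv) * p 2) := by
    intro a b c p hp
    rw [hEq]
    exact key_bound hΩo hu hC hd hbound hUo hmem a b c hp
  refine ⟨(C ^ 2 + 1) * (2 * Real.pi ^ 2) * ρv, by positivity,
    8 * (3 * d + 1), by positivity, ?_⟩
  intro m hm ν hν hνρ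
  have hK1 : (1 : ℝ) ≤ 3 * d + 1 := by linarith
  have hce1 : (1 : ℝ) ≤ 2 - 2 * βv := by linarith
  set L : ℝ := Real.log ν with hL
  set S : Set (Fin 3 → ℝ) := {p : Fin 3 → ℝ | φ₀ < p 0 ∧ p 0 < Real.pi - φ₀ ∧
      -Real.pi < p 1 ∧ p 1 < Real.pi ∧ p 2 < L} with hS_def
  have hSsub : ∀ p ∈ S, p ∈ U := by
    intro p hp
    refine ⟨hp.1, hp.2.1, lt_of_lt_of_le hp.2.2.2.2 ?_⟩
    exact Real.log_le_log hν hνρ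
  set B : ℝ := ((m : ℝ) + 1) ^ 3 * (C * (3 * d + 1) ^ m * (Nat.factorial m : ℝ)) ^ 2 with hB
  have hB0 : (0 : ℝ) ≤ B := by positivity
  have hcard : ((mIdx m).card : ℝ) ≤ ((m : ℝ) + 1) ^ 3 := by
    have h1 : (mIdx m).card ≤ (m + 1) ^ 3 := by
      refine (Finset.card_filter_le _ _).trans (le_of_eq ?_)
      simp [Finset.card_product]
      ring
    calc ((mIdx m).card : ℝ) ≤ (((m + 1) ^ 3 : ℕ) : ℝ) := by exact_mod_cast h1
      _ = ((m : ℝ) + 1) ^ 3 := by push_cast; ring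
  have hFle : ∀ p ∈ S, Real.exp (p 2) *
      ∑ α ∈ mIdx m, (Dop α.1 α.2.1 α.2.2 (fun q => W q - wv) p) ^ 2
      ≤ B * Real.exp ((2 - 2 * βv) * p 2) := by
    intro p hp
    have hpU := hSsub p hp
    have hterm : ∀ α ∈ mIdx m, (Dop α.1 α.2.1 α.2.2 (fun q => W q - wv) p) ^ 2
        ≤ (C * (3 * d + 1) ^ m * (Nat.factorial m : ℝ)) ^ 2
          * Real.exp ((1 / 2 - βv) * p 2) ^ 2 := by
      intro α hα
      have hαm : α.1 + α.2.1 + α.2.2 ≤ m := (Finset.mem_filter.1 hα).2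
      have h1 := key α.1 α.2.1 α.2.2 p hpU
      have h2 : C * (3 * d + 1) ^ (α.1 + α.2.1 + α.2.2)
          * (Nat.factorial (α.1 + α.2.1 + α.2.2) : ℝ)
          ≤ C * (3 * d + 1) ^ m * (Nat.factorial m : ℝ) := by
        have hp1 : (3 * d + 1 : ℝ) ^ (α.1 + α.2.1 + α.2.2) ≤ (3 * d + 1) ^ m :=
          pow_le_pow_right₀ hK1 hαm
        have hp2 : ((Nat.factorial (α.1 + α.2.1 + α.2.2) : ℕ) : ℝ)
            ≤ (Nat.factorial m : ℝ) := by exact_mod_cast Nat.factorial_le hαm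
        have := mul_le_mul (mul_le_mul_of_nonneg_left hp1 hC) hp2
          (by positivity) (by positivity)
        linarith
      have h3 : |Dop α.1 α.2.1 α.2.2 (fun q => W q - wv) p|
          ≤ (C * (3 * d + 1) ^ m * (Nat.factorial m : ℝ)) * Real.exp ((1 / 2 - βv) * p 2) :=
        h1.trans (mul_le_mul_of_nonneg_right h2 (Real.exp_pos _).le)
      calc (Dop α.1 α.2.1 α.2.2 (fun q => W q - wv) p) ^ 2
          = |Dop α.1 α.2.1 α.2.2 (fun q => W q - wv) p| ^ 2 := (sq_abs _).symm
        _ ≤ ((C * (3 * d + 1) ^ m * (Nat.factorial m : ℝ))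
              * Real.exp ((1 / 2 - βv) * p 2)) ^ 2 :=
            pow_le_pow_left₀ (abs_nonneg _) h3 2
        _ = (C * (3 * d + 1) ^ m * (Nat.factorial m : ℝ)) ^ 2
              * Real.exp ((1 / 2 - βv) * p 2) ^ 2 := by ring
    have hsum : ∑ α ∈ mIdx m, (Dop α.1 α.2.1 α.2.2 (fun q => W q - wv) p) ^ 2
        ≤ ((m : ℝ) + 1) ^ 3 * ((C * (3 * d + 1) ^ m * (Nat.factorial m : ℝ)) ^ 2
          * Real.exp ((1 / 2 - βv) * p 2) ^ 2) := by
      refine (Finset.sum_le_card_nsmul _ _ _ hterm).trans ?_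
      rw [nsmul_eq_mul]
      refine mul_le_mul_of_nonneg_right hcard (by positivity)
    have hexp : Real.exp (p 2) * Real.exp ((1 / 2 - βv) * p 2) ^ 2
        = Real.exp ((2 - 2 * βv) * p 2) := by
      rw [sq, ← Real.exp_add, ← Real.exp_add]
      congr 1
      ring
    calc Real.exp (p 2) * ∑ α ∈ mIdx m, (Dop α.1 α.2.1 α.2.2 (fun q => W q - wv) p) ^ 2
        ≤ Real.exp (p 2) * (((m : ℝ) + 1) ^ 3
            * ((C * (3 * d + 1) ^ m * (Nat.factorial m : ℝ)) ^ 2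
              * Real.exp ((1 / 2 - βv) * p 2) ^ 2)) :=
          mul_le_mul_of_nonneg_left hsum (Real.exp_pos _).le
      _ = B * (Real.exp (p 2) * Real.exp ((1 / 2 - βv) * p 2) ^ 2) := by rw [hB]; ring
      _ = B * Real.exp ((2 - 2 * βv) * p 2) := by rw [hexp]
  have hSm : MeasurableSet S := by
    have h : S = (fun p : Fin 3 → ℝ => p 0) ⁻¹' (Set.Ioo φ₀ (Real.pi - φ₀)) ∩
        ((fun p : Fin 3 → ℝ => p 1) ⁻¹' (Set.Ioo (-Real.pi) Real.pi) ∩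
          (fun p : Fin 3 → ℝ => p 2) ⁻¹' (Set.Iio L)) := by
      ext p; simp only [hS_def, Set.mem_setOf_eq, Set.mem_inter_iff, Set.mem_preimage,
        Set.mem_Ioo, Set.mem_Iio]; tauto
    rw [h]
    exact (measurableSet_Ioo.preimage (measurable_pi_apply 0)).inter
      ((measurableSet_Ioo.preimage (measurable_pi_apply 1)).inter
        (measurableSet_Iio.preimage (measurable_pi_apply 2)))
  set gg : Fin 3 → ℝ → ℝ := ![Set.indicator (Set.Ioo φ₀ (Real.pi - φ₀)) (fun _ => B),
    Set.indicator (Set.Ioo (-Real.pi) Real.pi) (fun _ => (1 : ℝ)),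
    Set.indicator (Set.Iio L) (fun x => Real.exp ((2 - 2 * βv) * x))] with hgg
  have hgg0 : gg 0 = Set.indicator (Set.Ioo φ₀ (Real.pi - φ₀)) (fun _ => B) := rfl
  have hgg1 : gg 1 = Set.indicator (Set.Ioo (-Real.pi) Real.pi) (fun _ => (1 : ℝ)) := rfl
  have hgg2 : gg 2 = Set.indicator (Set.Iio L) (fun x => Real.exp ((2 - 2 * βv) * x)) := rfl
  have hgg_int : ∀ i, Integrable (gg i) := by
    intro i
    fin_cases i
    · rw [show (⟨0, by norm_num⟩ : Fin 3) = 0 from rfl, hgg0]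
      refine IntegrableOn.integrable_indicator ?_ measurableSet_Ioo
      exact integrableOn_const (by rw [Real.volume_Ioo]; exact ENNReal.ofReal_ne_top)
    · rw [show (⟨1, by norm_num⟩ : Fin 3) = 1 from rfl, hgg1]
      refine IntegrableOn.integrable_indicator ?_ measurableSet_Ioo
      exact integrableOn_const (by rw [Real.volume_Ioo]; exact ENNReal.ofReal_ne_top)
    · rw [show (⟨2, by norm_num⟩ : Fin 3) = 2 from rfl, hgg2]
      refine IntegrableOn.integrable_indicator ?_ measurableSet_Iio
      exact (integrableOn_exp_mul_Iic hce1 L).mono_set Set.Iio_subset_Iic_self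
  have hGint : Integrable (fun p : Fin 3 → ℝ => ∏ i, gg i (p i)) :=
    Integrable.fintype_prod hgg_int
  have hgg_nonneg : ∀ (i : Fin 3) (x : ℝ), 0 ≤ gg i x := by
    intro i x
    fin_cases i
    · rw [show (⟨0, by norm_num⟩ : Fin 3) = 0 from rfl, hgg0]
      exact Set.indicator_nonneg (fun _ _ => hB0) x
    · rw [show (⟨1, by norm_num⟩ : Fin 3) = 1 from rfl, hgg1]
      exact Set.indicator_nonneg (fun _ _ => zero_le_one) x
    · rw [show (⟨2, by norm_num⟩ : Fin 3) = 2 from rfl, hgg2]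
      exact Set.indicator_nonneg (fun _ _ => (Real.exp_pos _).le) x
  have hmono : (∫ p in S, Real.exp (p 2) *
      ∑ α ∈ mIdx m, (Dop α.1 α.2.1 α.2.2 (fun q => W q - wv) p) ^ 2)
      ≤ ∫ p : Fin 3 → ℝ, ∏ i, gg i (p i) := by
    rw [← MeasureTheory.integral_indicator hSm]
    refine MeasureTheory.integral_mono_of_nonneg ?_ hGint ?_
    · filter_upwards with p
      refine Set.indicator_nonneg (fun q _ => ?_) p
      positivity
    · filter_upwards with p
      by_cases hp : p ∈ S
      · rw [Set.indicator_of_mem hp]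
        have hval : ∏ i, gg i (p i) = B * Real.exp ((2 - 2 * βv) * p 2) := by
          rw [Fin.prod_univ_three, hgg0, hgg1, hgg2,
            Set.indicator_of_mem (Set.mem_Ioo.2 ⟨hp.1, hp.2.1⟩),
            Set.indicator_of_mem (Set.mem_Ioo.2 ⟨hp.2.2.1, hp.2.2.2.1⟩),
            Set.indicator_of_mem (Set.mem_Iio.2 hp.2.2.2.2)]
          ring
        rw [hval]
        exact hFle p hp
      · rw [Set.indicator_of_notMem hp]
        exact Finset.prod_nonneg (fun i _ => hgg_nonneg i (p i))
  have hGval : (∫ p : Fin 3 → ℝ, ∏ i, gg i (p i)) = ∏ i, ∫ x : ℝ, gg i x :=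
    MeasureTheory.integral_fintype_prod_eq_prod gg
  have hg0val : (∫ x : ℝ, gg 0 x) = (Real.pi - φ₀ - φ₀) * B := by
    rw [hgg0, MeasureTheory.integral_indicator_const _ measurableSet_Ioo, Real.volume_real_Ioo,
      max_eq_left (by linarith), smul_eq_mul]
  have hg1val : (∫ x : ℝ, gg 1 x) = Real.pi - -Real.pi := by
    rw [hgg1, MeasureTheory.integral_indicator_const _ measurableSet_Ioo, Real.volume_real_Ioo,
      max_eq_left (by linarith), smul_eq_mul, mul_one]
  have hg2pos : (0 : ℝ) ≤ ∫ x : ℝ, gg 2 x := by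
    refine MeasureTheory.integral_nonneg ?_
    intro x
    exact hgg_nonneg 2 x
  have hg2le : (∫ x : ℝ, gg 2 x) ≤ ν ^ (1 - 2 * βv) * ν := by
    rw [hgg2, MeasureTheory.integral_indicator measurableSet_Iio]
    refine (integral_exp_mul_Iio_le hce1 L).trans (le_of_eq ?_)
    rw [hL, mul_comm, ← Real.rpow_def_of_pos hν]
    rw [show (2 - 2 * βv : ℝ) = (1 - 2 * βv) + 1 by ring, Real.rpow_add hν, Real.rpow_one]
  have hprodval : (∏ i, ∫ x : ℝ, gg i x)
      = ((Real.pi - φ₀ - φ₀) * B) * ((Real.pi - -Real.pi) * ∫ x : ℝ, gg 2 x) := by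
    rw [Fin.prod_univ_three, hg0val, hg1val]
    ring
  have hν2 : (0:ℝ) ≤ ν ^ (1 - 2 * βv) := (Real.rpow_pos_of_pos hν _).le
  have hint_le : (∫ p : Fin 3 → ℝ, ∏ i, gg i (p i))
      ≤ (2 * Real.pi ^ 2) * B * (ν ^ (1 - 2 * βv) * ρv) := by
    rw [hGval, hprodval]
    have h1 : (Real.pi - φ₀ - φ₀) * B ≤ Real.pi * B := by nlinarith
    have h2 : (Real.pi - -Real.pi) * ∫ x : ℝ, gg 2 x ≤ (2 * Real.pi) * (ν ^ (1 - 2 * βv) * ν) := by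
      have := mul_le_mul_of_nonneg_left hg2le (by linarith : (0:ℝ) ≤ Real.pi - -Real.pi)
      calc (Real.pi - -Real.pi) * ∫ x : ℝ, gg 2 x
          ≤ (Real.pi - -Real.pi) * (ν ^ (1 - 2 * βv) * ν) := this
        _ = (2 * Real.pi) * (ν ^ (1 - 2 * βv) * ν) := by ring
    calc ((Real.pi - φ₀ - φ₀) * B) * ((Real.pi - -Real.pi) * ∫ x : ℝ, gg 2 x)
        ≤ (Real.pi * B) * ((2 * Real.pi) * (ν ^ (1 - 2 * βv) * ν)) := by
          refine mul_le_mul h1 h2 ?_ (by positivity)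
          exact mul_nonneg (by linarith) hg2pos
      _ = (2 * Real.pi ^ 2) * B * (ν ^ (1 - 2 * βv) * ν) := by ring
      _ ≤ (2 * Real.pi ^ 2) * B * (ν ^ (1 - 2 * βv) * ρv) := by
          refine mul_le_mul_of_nonneg_left ?_ (by positivity)
          exact mul_le_mul_of_nonneg_left hνρ hν2
  have hBle : B ≤ (C ^ 2 + 1) * ((8 * (3 * d + 1)) ^ m * (Nat.factorial m : ℝ)) ^ 2 := by
    have h8 : ((m : ℝ) + 1) ^ 3 ≤ 8 ^ m := by
      have h1 : (m + 1) ^ 3 ≤ 8 ^ m := by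
        calc (m + 1) ^ 3 ≤ (2 ^ m) ^ 3 := Nat.pow_le_pow_left (Nat.lt_two_pow_self (n := m)) 3
          _ = 8 ^ m := by rw [← Nat.pow_mul, Nat.mul_comm, Nat.pow_mul]
      calc ((m : ℝ) + 1) ^ 3 = (((m + 1) ^ 3 : ℕ) : ℝ) := by push_cast; ring
        _ ≤ ((8 ^ m : ℕ) : ℝ) := by exact_mod_cast h1
        _ = (8 : ℝ) ^ m := by push_cast; ring
    have h64 : (8 : ℝ) ^ m ≤ 64 ^ m := pow_le_pow_left₀ (by norm_num) (by norm_num) m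
    have hKm : (0:ℝ) ≤ ((3 * d + 1) ^ m * (Nat.factorial m : ℝ)) ^ 2 := by positivity
    calc B = ((m : ℝ) + 1) ^ 3 * (C ^ 2 * ((3 * d + 1) ^ m * (Nat.factorial m : ℝ)) ^ 2) := by
          rw [hB]; ring
      _ ≤ (8 : ℝ) ^ m * ((C ^ 2 + 1) * ((3 * d + 1) ^ m * (Nat.factorial m : ℝ)) ^ 2) := by
          refine mul_le_mul h8 ?_ (by positivity) (by positivity)
          exact mul_le_mul_of_nonneg_right (by linarith) hKm
      _ ≤ (64 : ℝ) ^ m * ((C ^ 2 + 1) * ((3 * d + 1) ^ m * (Nat.factorial m : ℝ)) ^ 2) :=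
          mul_le_mul_of_nonneg_right h64 (by positivity)
      _ = (C ^ 2 + 1) * ((8 * (3 * d + 1)) ^ m * (Nat.factorial m : ℝ)) ^ 2 := by
          rw [mul_pow, mul_pow, show ((8:ℝ) * (3 * d + 1)) ^ m = 8 ^ m * (3 * d + 1) ^ m
            from mul_pow 8 (3 * d + 1) m, show ((64:ℝ)) ^ m = (8 ^ m) * (8 ^ m) by
              rw [← pow_add, ← two_mul]; norm_num [pow_mul]]
          ring
  calc (∫ p in S, Real.exp (p 2) *
        ∑ α ∈ mIdx m, (Dop α.1 α.2.1 α.2.2 (fun q => W q - wv) p) ^ 2)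
      ≤ ∫ p : Fin 3 → ℝ, ∏ i, gg i (p i) := hmono
    _ ≤ (2 * Real.pi ^ 2) * B * (ν ^ (1 - 2 * βv) * ρv) := hint_le
    _ ≤ (2 * Real.pi ^ 2) * ((C ^ 2 + 1) * ((8 * (3 * d + 1)) ^ m * (Nat.factorial m : ℝ)) ^ 2)
          * (ν ^ (1 - 2 * βv) * ρv) := by
        refine mul_le_mul_of_nonneg_right (mul_le_mul_of_nonneg_left hBle (by positivity)) ?_
        positivity
    _ = (C ^ 2 + 1) * (2 * Real.pi ^ 2) * ρv
          * ((8 * (3 * d + 1)) ^ m * (Nat.factorial m : ℝ)) ^ 2 * ν ^ (1 - 2 * βv) := by ring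
end

section
/- Let Ω ⊂ ℝ³ be a bounded open set, let μ₀ > 0 and M > 0, and let a_{ij} : ℝ³ → ℝ (1 ≤ i,j ≤ 3) be continuously differentiable functions with a_{ij} = a_{ji}, satisfying the uniform ellipticity condition Σ_{i,j=1}^{3} a_{ij}(x) ξ_i ξ_j ≥ μ₀ |ξ|² for all x ∈ Ω and ξ ∈ ℝ³, and the bounds |a_{ij}(x)| ≤ M and |∇a_{ij}(x)| ≤ M for all x ∈ Ω. Then there exists a constant c > 0, depending only on μ₀ and M, such that for every smooth function u : ℝ³ → ℝ, writing w_i := Σ_{j=1}^{3} a_{ij} ∂u/∂x_j, (μ₀²/2) Σ_{i,j=1}^{3} ∫_Ω |∂²u/∂x_i∂x_j|² dx ≤ Σ_{i,j=1}^{3} ∫_Ω (∂w_i/∂x_j)(∂w_j/∂x_i) dx + c Σ_{i=1}^{3} ∫_Ω |∂u/∂x_i|² dx. -/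
open MeasureTheory

namespace MT315

open Matrix

open scoped MatrixOrder in
theorem trace_mul_nonneg' (P Q : Matrix (Fin 3) (Fin 3) ℝ) (hP : P.PosSemidef)
    (hQ : Q.PosSemidef) : 0 ≤ (P * Q).trace := by
  obtain ⟨B, rfl⟩ := CStarAlgebra.nonneg_iff_eq_star_mul_self.mp hP.nonneg
  rw [Matrix.mul_assoc, Matrix.trace_mul_comm]
  have h := (hQ.mul_mul_conjTranspose_same B).dotProduct_mulVec_nonneg
  have h2 : ∀ i, 0 ≤ (B * Q * Bᴴ) i i := fun i => by
    simpa [Matrix.mulVec_single, dotProduct_single] using h (Pi.single i 1)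
  rw [Matrix.trace]
  exact Finset.sum_nonneg fun i _ => h2 i

theorem key_matrix (μ₀ : ℝ) (hμ : 0 < μ₀) (A H : Matrix (Fin 3) (Fin 3) ℝ)
    (hA : Aᵀ = A) (hH : Hᵀ = H)
    (hell : ∀ ξ : Fin 3 → ℝ, μ₀ * (∑ i, ξ i ^ 2) ≤ ξ ⬝ᵥ A *ᵥ ξ) :
    μ₀ ^ 2 * (H * H).trace ≤ (A * H * (A * H)).trace := by
  have hAH : Aᴴ = A := by
    ext i j; simpa [Matrix.conjTranspose_apply] using congrFun (congrFun hA i) j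
  have hHH : Hᴴ = H := by
    ext i j; simpa [Matrix.conjTranspose_apply] using congrFun (congrFun hH i) j
  set P := A - μ₀ • (1 : Matrix (Fin 3) (Fin 3) ℝ) with hPdef
  have hApsd : A.PosSemidef := by
    refine Matrix.PosSemidef.of_dotProduct_mulVec_nonneg (Matrix.IsHermitian.ext fun i j => ?_) fun x => ?_
    · simpa [Matrix.conjTranspose_apply] using congrFun (congrFun hAH i) j
    · have := hell x
      have h0 : 0 ≤ μ₀ * ∑ i, x i ^ 2 :=
        mul_nonneg hμ.le (Finset.sum_nonneg fun i _ => sq_nonneg _)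
      simpa [star_trivial] using le_trans h0 this
  have hPpsd : P.PosSemidef := by
    refine Matrix.PosSemidef.of_dotProduct_mulVec_nonneg ?_ ?_
    · show Pᴴ = P
      simp [hPdef, Matrix.conjTranspose_sub, hAH, hA, Matrix.conjTranspose_smul]
    · intro x
      have h1 := hell x
      have : (x ⬝ᵥ P *ᵥ x) = x ⬝ᵥ A *ᵥ x - μ₀ * ∑ i, x i ^ 2 := by
        simp only [hPdef, Matrix.sub_mulVec, dotProduct_sub, Matrix.smul_mulVec,
          Matrix.one_mulVec, dotProduct_smul, smul_eq_mul, dotProduct, pow_two,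
          Finset.mul_sum]
        ring_nf
        rw [← Finset.sum_sub_distrib]
        congr 1; funext i; simp [Pi.sub_apply, Pi.smul_apply]; ring
      simp only [star_trivial]
      rw [this]
      linarith
  have hAP : A = P + μ₀ • (1 : Matrix (Fin 3) (Fin 3) ℝ) := by simp [hPdef]
  have hQpsd : (H * A * H).PosSemidef := by
    have := hApsd.conjTranspose_mul_mul_same H
    rwa [hHH] at this
  have hHPH : (H * P * H).PosSemidef := by
    have := hPpsd.conjTranspose_mul_mul_same H
    rwa [hHH] at this
  have t1 : 0 ≤ (P * (H * A * H)).trace := trace_mul_nonneg' _ _ hPpsd hQpsd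
  have t2 : 0 ≤ (H * P * H).trace := by
    have := trace_mul_nonneg' (H * P * H) 1 hHPH Matrix.PosSemidef.one
    simpa using this
  have e1 : (A * H * (A * H)).trace
      = (P * (H * A * H)).trace + μ₀ * (H * A * H).trace := by
    rw [hAP]; noncomm_ring [Matrix.trace_add, Matrix.trace_smul, smul_eq_mul]
  have e2 : (H * A * H).trace = (H * P * H).trace + μ₀ * (H * H).trace := by
    rw [hAP]; noncomm_ring [Matrix.trace_add, Matrix.trace_smul, smul_eq_mul]
  nlinarith [sq_nonneg μ₀]

theorem pointwise_core (μ₀ M c : ℝ) (hμ : 0 < μ₀) (hM : 0 < M)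
    (hc : (4374 * M ^ 4 + 27 * M ^ 2 * μ₀ ^ 2) / μ₀ ^ 2 ≤ c)
    (A H b : Matrix (Fin 3) (Fin 3) ℝ) (G gs : ℝ)
    (hA : Aᵀ = A) (hH : Hᵀ = H)
    (hell : ∀ ξ : Fin 3 → ℝ, μ₀ * (∑ i, ξ i ^ 2) ≤ ξ ⬝ᵥ A *ᵥ ξ)
    (hAb : ∀ i j, |A i j| ≤ M) (hb : ∀ i j, |b i j| ≤ M * G) (hGnn : 0 ≤ G)
    (hG : G ^ 2 ≤ 3 * gs) (hgs : 0 ≤ gs) :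
    μ₀ ^ 2 / 2 * (∑ i : Fin 3, ∑ j : Fin 3, H i j ^ 2) ≤
      (∑ i : Fin 3, ∑ j : Fin 3, ((A * H) i j + b i j) * ((A * H) j i + b j i)) + c * gs := by
  set s := ∑ i : Fin 3, ∑ j : Fin 3, H i j ^ 2 with hs_def
  set S1 := ∑ i : Fin 3, ∑ j : Fin 3, |H i j| with hS1_def
  have hs : 0 ≤ s := Finset.sum_nonneg fun i _ => Finset.sum_nonneg fun j _ => sq_nonneg _
  have hS1 : 0 ≤ S1 := Finset.sum_nonneg fun i _ => Finset.sum_nonneg fun j _ => abs_nonneg _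
  have hS1sq : S1 ^ 2 ≤ 9 * s := by
    have h1 : S1 = ∑ p ∈ (Finset.univ ×ˢ Finset.univ : Finset (Fin 3 × Fin 3)), |H p.1 p.2| := by
      rw [Finset.sum_product]
    have h2 : s = ∑ p ∈ (Finset.univ ×ˢ Finset.univ : Finset (Fin 3 × Fin 3)),
        |H p.1 p.2| ^ 2 := by
      rw [Finset.sum_product]
      simp [sq_abs, hs_def]
    have := sq_sum_le_card_mul_sum_sq
      (s := (Finset.univ ×ˢ Finset.univ : Finset (Fin 3 × Fin 3))) (f := fun p => |H p.1 p.2|)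
    rw [← h1, ← h2] at this
    simpa using this
  have main : μ₀ ^ 2 * s ≤ ∑ i : Fin 3, ∑ j : Fin 3, (A * H) i j * (A * H) j i := by
    have hk := key_matrix μ₀ hμ A H hA hH hell
    have e1 : (H * H).trace = s := by
      rw [Matrix.trace]
      simp only [Matrix.diag_apply, Matrix.mul_apply, hs_def]
      refine Finset.sum_congr rfl fun i _ => Finset.sum_congr rfl fun j _ => ?_
      have : H j i = H i j := by
        rw [← congrFun (congrFun hH j) i, Matrix.transpose_apply]
      rw [this, sq]
    have e2 : (A * H * (A * H)).trace
        = ∑ i : Fin 3, ∑ j : Fin 3, (A * H) i j * (A * H) j i := by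
      rw [Matrix.trace]
      simp only [Matrix.diag_apply, Matrix.mul_apply]
    rw [e1, e2] at hk
    exact hk
  have habs : ∀ i j, |(A * H) i j| ≤ M * S1 := by
    intro i j
    rw [Matrix.mul_apply]
    calc |∑ k, A i k * H k j| ≤ ∑ k, |A i k * H k j| := Finset.abs_sum_le_sum_abs _ _
      _ ≤ ∑ k, M * |H k j| := by
          refine Finset.sum_le_sum fun k _ => ?_
          rw [abs_mul]
          exact mul_le_mul_of_nonneg_right (hAb i k) (abs_nonneg _)
      _ = M * ∑ k, |H k j| := by rw [Finset.mul_sum]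
      _ ≤ M * S1 := by
          refine mul_le_mul_of_nonneg_left ?_ hM.le
          rw [hS1_def]
          refine Finset.sum_le_sum fun k _ => ?_
          exact Finset.single_le_sum (f := fun q => |H k q|) (fun q _ => abs_nonneg _)
            (Finset.mem_univ j)
  have cross1 : |∑ i : Fin 3, ∑ j : Fin 3, (A * H) i j * b j i| ≤ 9 * (M * S1 * (M * G)) := by
    calc |∑ i : Fin 3, ∑ j : Fin 3, (A * H) i j * b j i|
        ≤ ∑ i : Fin 3, ∑ j : Fin 3, |(A * H) i j * b j i| :=
          le_trans (Finset.abs_sum_le_sum_abs _ _)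
            (Finset.sum_le_sum fun i _ => Finset.abs_sum_le_sum_abs _ _)
      _ ≤ ∑ _i : Fin 3, ∑ _j : Fin 3, M * S1 * (M * G) := by
          refine Finset.sum_le_sum fun i _ => Finset.sum_le_sum fun j _ => ?_
          rw [abs_mul]
          exact mul_le_mul (habs i j) (hb j i) (abs_nonneg _) (mul_nonneg hM.le hS1)
      _ = 9 * (M * S1 * (M * G)) := by simp; ring
  have cross2 : |∑ i : Fin 3, ∑ j : Fin 3, b i j * (A * H) j i| ≤ 9 * (M * S1 * (M * G)) := by
    calc |∑ i : Fin 3, ∑ j : Fin 3, b i j * (A * H) j i|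
        ≤ ∑ i : Fin 3, ∑ j : Fin 3, |b i j * (A * H) j i| :=
          le_trans (Finset.abs_sum_le_sum_abs _ _)
            (Finset.sum_le_sum fun i _ => Finset.abs_sum_le_sum_abs _ _)
      _ ≤ ∑ _i : Fin 3, ∑ _j : Fin 3, M * S1 * (M * G) := by
          refine Finset.sum_le_sum fun i _ => Finset.sum_le_sum fun j _ => ?_
          rw [abs_mul, mul_comm (|b i j|)]
          exact mul_le_mul (habs j i) (hb i j) (abs_nonneg _) (mul_nonneg hM.le hS1)
      _ = 9 * (M * S1 * (M * G)) := by simp; ring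
  have quad : |∑ i : Fin 3, ∑ j : Fin 3, b i j * b j i| ≤ 9 * (M * G * (M * G)) := by
    calc |∑ i : Fin 3, ∑ j : Fin 3, b i j * b j i|
        ≤ ∑ i : Fin 3, ∑ j : Fin 3, |b i j * b j i| :=
          le_trans (Finset.abs_sum_le_sum_abs _ _)
            (Finset.sum_le_sum fun i _ => Finset.abs_sum_le_sum_abs _ _)
      _ ≤ ∑ _i : Fin 3, ∑ _j : Fin 3, M * G * (M * G) := by
          refine Finset.sum_le_sum fun i _ => Finset.sum_le_sum fun j _ => ?_
          rw [abs_mul]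
          exact mul_le_mul (hb i j) (hb j i) (abs_nonneg _) (mul_nonneg hM.le hGnn)
      _ = 9 * (M * G * (M * G)) := by simp; ring
  have expand : (∑ i : Fin 3, ∑ j : Fin 3, ((A * H) i j + b i j) * ((A * H) j i + b j i))
      = (∑ i : Fin 3, ∑ j : Fin 3, (A * H) i j * (A * H) j i)
        + (∑ i : Fin 3, ∑ j : Fin 3, (A * H) i j * b j i)
        + (∑ i : Fin 3, ∑ j : Fin 3, b i j * (A * H) j i)
        + (∑ i : Fin 3, ∑ j : Fin 3, b i j * b j i) := by
    simp only [← Finset.sum_add_distrib]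
    refine Finset.sum_congr rfl fun i _ => Finset.sum_congr rfl fun j _ => ?_
    ring
  have h2 : (0 : ℝ) < μ₀ ^ 2 := by positivity
  have hc' : 4374 * M ^ 4 + 27 * M ^ 2 * μ₀ ^ 2 ≤ c * μ₀ ^ 2 := by
    rw [div_le_iff₀ h2] at hc; linarith
  have step : 18 * M ^ 2 * S1 * G + 9 * M ^ 2 * G ^ 2 ≤ μ₀ ^ 2 * s / 2 + c * gs := by
    have key := sq_nonneg (μ₀ ^ 2 * S1 - 162 * M ^ 2 * G)
    have m1 : 0 ≤ μ₀ ^ 4 * (9 * s - S1 ^ 2) := mul_nonneg (by positivity) (by linarith)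
    have m2 : 0 ≤ M ^ 4 * (3 * gs - G ^ 2) := mul_nonneg (by positivity) (by linarith)
    have m3 : 0 ≤ M ^ 2 * μ₀ ^ 2 * (3 * gs - G ^ 2) := mul_nonneg (by positivity) (by linarith)
    have hcg := mul_le_mul_of_nonneg_right hc' hgs
    have H2 : μ₀ ^ 2 * (18 * M ^ 2 * S1 * G + 9 * M ^ 2 * G ^ 2)
        ≤ μ₀ ^ 2 * (μ₀ ^ 2 * s / 2 + c * gs) := by nlinarith [key, m1, m2, m3, hcg]
    exact le_of_mul_le_mul_left H2 h2
  rw [expand]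
  have habs1 := abs_le.mp cross1
  have habs2 := abs_le.mp cross2
  have habs3 := abs_le.mp quad
  nlinarith [main, step, habs1.1, habs2.1, habs3.1]

lemma contDiff_fderiv_top {u : (Fin 3 → ℝ) → ℝ} (hu : ContDiff ℝ (⊤ : ℕ∞) u) :
    ContDiff ℝ (⊤ : ℕ∞) (fderiv ℝ u) :=
  hu.fderiv_right (by exact_mod_cast le_refl _)

lemma contDiff_pd {f : (Fin 3 → ℝ) → ℝ} (hf : ContDiff ℝ (⊤ : ℕ∞) f) (i : Fin 3) :
    ContDiff ℝ (⊤ : ℕ∞) (pd i f) := by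
  show ContDiff ℝ (⊤ : ℕ∞) fun x => fderiv ℝ f x (Pi.single i 1)
  exact (contDiff_fderiv_top hf).clm_apply contDiff_const

lemma pd_eval {u : (Fin 3 → ℝ) → ℝ} (hu : ContDiff ℝ (⊤ : ℕ∞) u) (p q : Fin 3) (y : Fin 3 → ℝ) :
    pd p (pd q u) y = fderiv ℝ (fderiv ℝ u) y (Pi.single p 1) (Pi.single q 1) := by
  have hd : DifferentiableAt ℝ (fderiv ℝ u) y :=
    ((contDiff_fderiv_top hu).differentiable (by simp)).differentiableAt
  show fderiv ℝ (fun z => fderiv ℝ u z (Pi.single q 1)) y (Pi.single p 1) = _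
  rw [fderiv_clm_apply hd (differentiableAt_const _)]
  simp

lemma pd_symm {u : (Fin 3 → ℝ) → ℝ} (hu : ContDiff ℝ (⊤ : ℕ∞) u) (i j : Fin 3) (x : Fin 3 → ℝ) :
    pd i (pd j u) x = pd j (pd i u) x := by
  have h1 : ∀ y, HasFDerivAt u (fderiv ℝ u y) y := fun y =>
    ((hu.differentiable (by simp)) y).hasFDerivAt
  have h2 : HasFDerivAt (fderiv ℝ u) (fderiv ℝ (fderiv ℝ u) x) x :=
    (((contDiff_fderiv_top hu).differentiable (by simp)) x).hasFDerivAt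
  rw [pd_eval hu, pd_eval hu, second_derivative_symmetric h1 h2]

lemma contDiff_pd_top_one {f : (Fin 3 → ℝ) → ℝ} (hf : ContDiff ℝ (⊤ : ℕ∞) f) (k : Fin 3) :
    ContDiff ℝ 1 (pd k f) :=
  (contDiff_pd hf k).of_le (by exact_mod_cast le_top)

lemma contDiff_w (a : Fin 3 → Fin 3 → (Fin 3 → ℝ) → ℝ) (ha : ∀ i j, ContDiff ℝ 1 (a i j))
    {u : (Fin 3 → ℝ) → ℝ} (hu : ContDiff ℝ (⊤ : ℕ∞) u) (i : Fin 3) :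
    ContDiff ℝ 1 (fun y => ∑ k : Fin 3, a i k y * pd k u y) :=
  ContDiff.sum (fun k _ => (ha i k).mul (contDiff_pd_top_one hu k))

lemma continuous_pd_w (a : Fin 3 → Fin 3 → (Fin 3 → ℝ) → ℝ) (ha : ∀ i j, ContDiff ℝ 1 (a i j))
    {u : (Fin 3 → ℝ) → ℝ} (hu : ContDiff ℝ (⊤ : ℕ∞) u) (i j : Fin 3) :
    Continuous (pd j (fun y => ∑ k : Fin 3, a i k y * pd k u y)) := by
  show Continuous fun x => fderiv ℝ _ x (Pi.single j 1)
  exact (((contDiff_w a ha hu i).continuous_fderiv one_ne_zero).clm_apply continuous_const)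

lemma pd_w (a : Fin 3 → Fin 3 → (Fin 3 → ℝ) → ℝ) (ha : ∀ i j, ContDiff ℝ 1 (a i j))
    {u : (Fin 3 → ℝ) → ℝ} (hu : ContDiff ℝ (⊤ : ℕ∞) u) (i j : Fin 3) (x : Fin 3 → ℝ) :
    pd j (fun y => ∑ k : Fin 3, a i k y * pd k u y) x
      = ∑ k : Fin 3, (a i k x * pd j (pd k u) x + pd j (a i k) x * pd k u x) := by
  have hdk : ∀ k : Fin 3, DifferentiableAt ℝ (fun y => a i k y * pd k u y) x := fun k =>
    (((ha i k).differentiable one_ne_zero) x).mul (((contDiff_pd_top_one hu k).differentiable one_ne_zero) x)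
  show fderiv ℝ (fun y => ∑ k : Fin 3, a i k y * pd k u y) x (Pi.single j 1) = _
  rw [fderiv_fun_sum (fun k _ => hdk k), ContinuousLinearMap.sum_apply]
  refine Finset.sum_congr rfl fun k _ => ?_
  rw [fderiv_fun_mul (((ha i k).differentiable one_ne_zero) x)
    (((contDiff_pd_top_one hu k).differentiable one_ne_zero) x)]
  simp only [ContinuousLinearMap.add_apply, ContinuousLinearMap.smul_apply, smul_eq_mul]
  show a i k x * pd j (pd k u) x + pd k u x * pd j (a i k) x = _
  ring

end MT315

open MT315 Matrix in
/-- The integrated Miranda–Talenti-type estimate (3.15): all second derivatives of `u` are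
bounded by the quantity `Σ_{i,j} ∫ ∂_j w_i ∂_i w_j` for the flux `w = A ∇u` of a symmetric,
uniformly elliptic, `C¹` coefficient matrix, plus lower-order terms. -/
theorem stmt11 (Ω : Set (Fin 3 → ℝ)) (hΩo : IsOpen Ω) (hΩb : Bornology.IsBounded Ω)
    (μ₀ M : ℝ) (hμ₀ : 0 < μ₀) (hM : 0 < M) :
    ∃ c : ℝ, 0 < c ∧ ∀ a : Fin 3 → Fin 3 → (Fin 3 → ℝ) → ℝ,
      (∀ i j, ContDiff ℝ 1 (a i j)) →
      (∀ i j, a i j = a j i) →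
      (∀ x ∈ Ω, ∀ ξ : Fin 3 → ℝ,
        μ₀ * (ξ 0 ^ 2 + ξ 1 ^ 2 + ξ 2 ^ 2) ≤ ∑ i : Fin 3, ∑ j : Fin 3, a i j x * ξ i * ξ j) →
      (∀ i j, ∀ x ∈ Ω, |a i j x| ≤ M) →
      (∀ i j, ∀ x ∈ Ω, ‖fderiv ℝ (a i j) x‖ ≤ M) →
      ∀ u : (Fin 3 → ℝ) → ℝ, ContDiff ℝ (⊤ : ℕ∞) u →
        μ₀ ^ 2 / 2 * ∑ i : Fin 3, ∑ j : Fin 3, ∫ x in Ω, (pd i (pd j u) x) ^ 2 ≤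
          (∑ i : Fin 3, ∑ j : Fin 3, ∫ x in Ω,
            pd j (fun y => ∑ k : Fin 3, a i k y * pd k u y) x *
              pd i (fun y => ∑ k : Fin 3, a j k y * pd k u y) x) +
          c * ∑ i : Fin 3, ∫ x in Ω, (pd i u x) ^ 2 := by
  classical
  set C : ℝ := (4374 * M ^ 4 + 27 * M ^ 2 * μ₀ ^ 2) / μ₀ ^ 2 + 1 with hC_def
  have hCpos : 0 < C := by positivity
  have hCge : (4374 * M ^ 4 + 27 * M ^ 2 * μ₀ ^ 2) / μ₀ ^ 2 ≤ C := by
    rw [hC_def]; linarith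
  refine ⟨C, hCpos, ?_⟩
  intro a ha haSym hell haB haD u hu
  -- the pointwise inequality
  have hpt : ∀ x ∈ Ω,
      μ₀ ^ 2 / 2 * ∑ i : Fin 3, ∑ j : Fin 3, (pd i (pd j u) x) ^ 2 ≤
        (∑ i : Fin 3, ∑ j : Fin 3,
          pd j (fun y => ∑ k : Fin 3, a i k y * pd k u y) x *
            pd i (fun y => ∑ k : Fin 3, a j k y * pd k u y) x)
        + C * ∑ k : Fin 3, (pd k u x) ^ 2 := by
    intro x hx
    set A : Matrix (Fin 3) (Fin 3) ℝ := Matrix.of fun i j => a i j x with hA_def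
    set H : Matrix (Fin 3) (Fin 3) ℝ := Matrix.of fun i j => pd i (pd j u) x with hH_def
    set b : Matrix (Fin 3) (Fin 3) ℝ :=
      Matrix.of fun i j => ∑ k : Fin 3, pd j (a i k) x * pd k u x with hb_def
    set G : ℝ := ∑ k : Fin 3, |pd k u x| with hG_def
    set gs : ℝ := ∑ k : Fin 3, (pd k u x) ^ 2 with hgs_def
    have hW : ∀ i j, pd j (fun y => ∑ k : Fin 3, a i k y * pd k u y) x
        = (A * H) i j + b i j := by
      intro i j
      rw [pd_w a ha hu i j x, Finset.sum_add_distrib]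
      congr 1
      rw [Matrix.mul_apply]
      refine Finset.sum_congr rfl fun k _ => ?_
      show a i k x * pd j (pd k u) x = a i k x * pd k (pd j u) x
      rw [pd_symm hu j k]
    have hAsym : Aᵀ = A := by
      ext i j
      show a j i x = a i j x
      rw [haSym j i]
    have hHsym : Hᵀ = H := by
      ext i j
      show pd j (pd i u) x = pd i (pd j u) x
      exact pd_symm hu j i x
    have hellM : ∀ ξ : Fin 3 → ℝ, μ₀ * (∑ i, ξ i ^ 2) ≤ ξ ⬝ᵥ A *ᵥ ξ := by
      intro ξ
      have h := hell x hx ξ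
      have e : ξ ⬝ᵥ A *ᵥ ξ = ∑ i : Fin 3, ∑ j : Fin 3, a i j x * ξ i * ξ j := by
        simp only [dotProduct, Matrix.mulVec, Finset.mul_sum]
        refine Finset.sum_congr rfl fun i _ => Finset.sum_congr rfl fun j _ => ?_
        show ξ i * (a i j x * ξ j) = a i j x * ξ i * ξ j
        ring
      have e2 : ∑ i : Fin 3, ξ i ^ 2 = ξ 0 ^ 2 + ξ 1 ^ 2 + ξ 2 ^ 2 := by
        simp [Fin.sum_univ_three]
      rw [e, e2]
      exact h
    have hAb : ∀ i j, |A i j| ≤ M := fun i j => haB i j x hx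
    have hbB : ∀ i j, |b i j| ≤ M * G := by
      intro i j
      show |∑ k : Fin 3, pd j (a i k) x * pd k u x| ≤ M * G
      have hda : ∀ k : Fin 3, |pd j (a i k) x| ≤ M := by
        intro k
        have h1 : ‖fderiv ℝ (a i k) x (Pi.single j 1)‖
            ≤ ‖fderiv ℝ (a i k) x‖ * ‖(Pi.single j 1 : Fin 3 → ℝ)‖ :=
          ContinuousLinearMap.le_opNorm _ _
        have h2 : ‖(Pi.single j 1 : Fin 3 → ℝ)‖ = 1 := by
          rw [Pi.norm_single]; exact norm_one
        rw [h2, mul_one] at h1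
        calc |pd j (a i k) x| = ‖fderiv ℝ (a i k) x (Pi.single j 1)‖ :=
              (Real.norm_eq_abs _).symm
          _ ≤ ‖fderiv ℝ (a i k) x‖ := h1
          _ ≤ M := haD i k x hx
      calc |∑ k : Fin 3, pd j (a i k) x * pd k u x|
          ≤ ∑ k : Fin 3, |pd j (a i k) x * pd k u x| := Finset.abs_sum_le_sum_abs _ _
        _ ≤ ∑ k : Fin 3, M * |pd k u x| := by
            refine Finset.sum_le_sum fun k _ => ?_
            rw [abs_mul]
            exact mul_le_mul_of_nonneg_right (hda k) (abs_nonneg _)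
        _ = M * G := by rw [hG_def, Finset.mul_sum]
    have hGnn : 0 ≤ G := Finset.sum_nonneg fun k _ => abs_nonneg _
    have hgsnn : 0 ≤ gs := Finset.sum_nonneg fun k _ => sq_nonneg _
    have hGsq : G ^ 2 ≤ 3 * gs := by
      have := sq_sum_le_card_mul_sum_sq
        (s := (Finset.univ : Finset (Fin 3))) (f := fun k => |pd k u x|)
      simpa [sq_abs, hG_def, hgs_def] using this
    have hcore := pointwise_core μ₀ M C hμ₀ hM hCge A H b G gs hAsym hHsym hellM hAb hbB
      hGnn hGsq hgsnn
    have eL : ∑ i : Fin 3, ∑ j : Fin 3, (pd i (pd j u) x) ^ 2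
        = ∑ i : Fin 3, ∑ j : Fin 3, H i j ^ 2 := rfl
    have eR : (∑ i : Fin 3, ∑ j : Fin 3,
          pd j (fun y => ∑ k : Fin 3, a i k y * pd k u y) x *
            pd i (fun y => ∑ k : Fin 3, a j k y * pd k u y) x)
        = ∑ i : Fin 3, ∑ j : Fin 3, ((A * H) i j + b i j) * ((A * H) j i + b j i) :=
      Finset.sum_congr rfl fun i _ => Finset.sum_congr rfl fun j _ => by
        rw [hW i j, hW j i]
    rw [eL, eR]
    exact hcore
  -- integrability
  have hK : IsCompact (closure Ω) := hΩb.isCompact_closure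
  have integOn : ∀ {f : (Fin 3 → ℝ) → ℝ}, Continuous f → IntegrableOn f Ω volume := by
    intro f hf
    exact (hf.continuousOn.integrableOn_compact hK).mono_set subset_closure
  have int1 : ∀ i j : Fin 3, IntegrableOn (fun x => (pd i (pd j u) x) ^ 2) Ω volume :=
    fun i j => integOn (((contDiff_pd (contDiff_pd hu j) i).continuous).pow 2)
  have int2 : ∀ i j : Fin 3, IntegrableOn
      (fun x => pd j (fun y => ∑ k : Fin 3, a i k y * pd k u y) x *
        pd i (fun y => ∑ k : Fin 3, a j k y * pd k u y) x) Ω volume :=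
    fun i j => integOn ((continuous_pd_w a ha hu i j).mul (continuous_pd_w a ha hu j i))
  have int3 : ∀ k : Fin 3, IntegrableOn (fun x => (pd k u x) ^ 2) Ω volume :=
    fun k => integOn (((contDiff_pd hu k).continuous).pow 2)
  -- exchange sums and integrals
  have L1 : ∫ x in Ω, (∑ i : Fin 3, ∑ j : Fin 3, (pd i (pd j u) x) ^ 2)
      = ∑ i : Fin 3, ∑ j : Fin 3, ∫ x in Ω, (pd i (pd j u) x) ^ 2 := by
    rw [integral_finset_sum _ (fun i _ => integrable_finset_sum _ (fun j _ => int1 i j))]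
    exact Finset.sum_congr rfl fun i _ => integral_finset_sum _ (fun j _ => int1 i j)
  have L2 : ∫ x in Ω, (∑ i : Fin 3, ∑ j : Fin 3,
        pd j (fun y => ∑ k : Fin 3, a i k y * pd k u y) x *
          pd i (fun y => ∑ k : Fin 3, a j k y * pd k u y) x)
      = ∑ i : Fin 3, ∑ j : Fin 3, ∫ x in Ω,
          pd j (fun y => ∑ k : Fin 3, a i k y * pd k u y) x *
            pd i (fun y => ∑ k : Fin 3, a j k y * pd k u y) x := by
    rw [integral_finset_sum _ (fun i _ => integrable_finset_sum _ (fun j _ => int2 i j))]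
    exact Finset.sum_congr rfl fun i _ => integral_finset_sum _ (fun j _ => int2 i j)
  have L3 : ∫ x in Ω, (∑ k : Fin 3, (pd k u x) ^ 2)
      = ∑ k : Fin 3, ∫ x in Ω, (pd k u x) ^ 2 :=
    integral_finset_sum _ (fun k _ => int3 k)
  have intS1 : IntegrableOn (fun x => ∑ i : Fin 3, ∑ j : Fin 3, (pd i (pd j u) x) ^ 2) Ω
      volume :=
    integrable_finset_sum _ (fun i _ => integrable_finset_sum _ (fun j _ => int1 i j))
  have intS2 : IntegrableOn (fun x => ∑ i : Fin 3, ∑ j : Fin 3,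
      pd j (fun y => ∑ k : Fin 3, a i k y * pd k u y) x *
        pd i (fun y => ∑ k : Fin 3, a j k y * pd k u y) x) Ω volume :=
    integrable_finset_sum _ (fun i _ => integrable_finset_sum _ (fun j _ => int2 i j))
  have intS3 : IntegrableOn (fun x => ∑ k : Fin 3, (pd k u x) ^ 2) Ω volume :=
    integrable_finset_sum _ (fun k _ => int3 k)
  calc μ₀ ^ 2 / 2 * ∑ i : Fin 3, ∑ j : Fin 3, ∫ x in Ω, (pd i (pd j u) x) ^ 2
      = ∫ x in Ω, μ₀ ^ 2 / 2 * ∑ i : Fin 3, ∑ j : Fin 3, (pd i (pd j u) x) ^ 2 := by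
        rw [integral_const_mul, L1]
    _ ≤ ∫ x in Ω, ((∑ i : Fin 3, ∑ j : Fin 3,
          pd j (fun y => ∑ k : Fin 3, a i k y * pd k u y) x *
            pd i (fun y => ∑ k : Fin 3, a j k y * pd k u y) x)
          + C * ∑ k : Fin 3, (pd k u x) ^ 2) := by
        refine setIntegral_mono_on (intS1.const_mul _) (intS2.add (intS3.const_mul C))
          hΩo.measurableSet ?_
        intro x hx
        exact hpt x hx
    _ = (∑ i : Fin 3, ∑ j : Fin 3, ∫ x in Ω,
          pd j (fun y => ∑ k : Fin 3, a i k y * pd k u y) x *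
            pd i (fun y => ∑ k : Fin 3, a j k y * pd k u y) x)
        + C * ∑ i : Fin 3, ∫ x in Ω, (pd i u x) ^ 2 := by
        rw [integral_add intS2 (intS3.const_mul C), integral_const_mul, L2, L3]
end

section
/- For a smooth function u on (0, π/2) × ℝ (variables (φ, χ)) define (Vu)(φ,χ) := cos φ · sin φ · ∂u/∂φ(φ,χ) + sin²φ · ∂u/∂χ(φ,χ), and let V^m denote the m-fold iterate of V. Suppose there exist constants C ≥ 0 and d ≥ 1 such that for all integers α₁, α₂ ≥ 0 with α₁ + α₂ ≥ 1 and all (φ,χ) ∈ (0,π/2) × ℝ, |(sin φ)^{α₁} · ∂^{α₁+α₂} u / ∂φ^{α₁}∂χ^{α₂}(φ,χ)| ≤ C d^{α₁+α₂} α₁! α₂!. Then there exist constants C', d' > 0 such that for every integer m ≥ 1 and all (φ,χ) ∈ (0,π/2) × ℝ, |(V^m u)(φ,χ)| ≤ C' d'^m m!. -/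
/-- First-order partial derivative in direction `i` of a function on `ℝ²`. -/
noncomputable def pd2 (i : Fin 2) (f : (Fin 2 → ℝ) → ℝ) : (Fin 2 → ℝ) → ℝ :=
  fun x => fderiv ℝ f x (Pi.single i 1)

/-- Iterated partial derivative `D^{(a,b)}` on `ℝ²`. -/
noncomputable def Dop2 (a b : ℕ) (f : (Fin 2 → ℝ) → ℝ) : (Fin 2 → ℝ) → ℝ :=
  (pd2 0)^[a] ((pd2 1)^[b] f)

/-- The vector field `V = cos φ sin φ ∂/∂φ + sin²φ ∂/∂χ` (the derivative `∂/∂ψ` in the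
vertex-edge coordinate `ψ = ln tan φ`). -/
noncomputable def Vop (u : (Fin 2 → ℝ) → ℝ) : (Fin 2 → ℝ) → ℝ :=
  fun x => Real.cos (x 0) * Real.sin (x 0) * pd2 0 u x + Real.sin (x 0) ^ 2 * pd2 1 u x


open Real Set

def SS : Set (Fin 2 → ℝ) := {x | 0 < x 0 ∧ x 0 < Real.pi / 2}

lemma SS_open : IsOpen SS := by
  have : SS = (fun x : Fin 2 → ℝ => x 0) ⁻¹' (Set.Ioo 0 (Real.pi/2)) := rfl
  rw [this]
  exact (isOpen_Ioo).preimage (continuous_apply 0)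

lemma pd2_contDiffOn {f : (Fin 2 → ℝ) → ℝ} (hf : ContDiffOn ℝ (⊤:ℕ∞) f SS) (i : Fin 2) :
    ContDiffOn ℝ (⊤:ℕ∞) (pd2 i f) SS := by
  have h1 : ContDiffOn ℝ (⊤:ℕ∞) (fderiv ℝ f) SS := hf.fderiv_of_isOpen SS_open (by simp)
  exact h1.clm_apply contDiffOn_const

lemma pd2_congr {f g : (Fin 2 → ℝ) → ℝ} (h : Set.EqOn f g SS) {x} (hx : x ∈ SS) (i : Fin 2) :
    pd2 i f x = pd2 i g x := by
  have : f =ᶠ[nhds x] g := Filter.eventuallyEq_of_mem (SS_open.mem_nhds hx) h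
  simp only [pd2, this.fderiv_eq]

lemma pd2_iter_congr {f g : (Fin 2 → ℝ) → ℝ} (h : Set.EqOn f g SS) (i : Fin 2) (a : ℕ) :
    Set.EqOn ((pd2 i)^[a] f) ((pd2 i)^[a] g) SS := by
  induction a with
  | zero => exact h
  | succ a ih =>
    intro x hx
    rw [Function.iterate_succ_apply', Function.iterate_succ_apply']
    exact pd2_congr ih hx i

lemma contDiffAt_of_SS {F : Type*} [NormedAddCommGroup F] [NormedSpace ℝ F]
    {f : (Fin 2 → ℝ) → F} (hf : ContDiffOn ℝ (⊤:ℕ∞) f SS) {x} (hx : x ∈ SS) :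
    ContDiffAt ℝ (⊤:ℕ∞) f x := hf.contDiffAt (SS_open.mem_nhds hx)

lemma pd2_def (i : Fin 2) (f : (Fin 2 → ℝ) → ℝ) :
    pd2 i f = fun x => fderiv ℝ f x (Pi.single i 1) := rfl

/-- symmetry of second derivatives pointwise -/
lemma pd2_swap {f : (Fin 2 → ℝ) → ℝ} (hf : ContDiffOn ℝ (⊤:ℕ∞) f SS) {x} (hx : x ∈ SS) :
    pd2 1 (pd2 0 f) x = pd2 0 (pd2 1 f) x := by
  have hfd : ContDiffOn ℝ (⊤:ℕ∞) (fderiv ℝ f) SS := hf.fderiv_of_isOpen SS_open (by simp)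
  have hdiff : DifferentiableAt ℝ (fderiv ℝ f) x := by
    exact (contDiffAt_of_SS hfd hx).differentiableAt (by simp)
  have hsym : IsSymmSndFDerivAt ℝ f x :=
    (contDiffAt_of_SS hf hx).isSymmSndFDerivAt (by rw [minSmoothness_of_isRCLikeNormedField]; exact WithTop.coe_le_coe.mpr le_top)
  have key : ∀ v w : Fin 2 → ℝ,
      fderiv ℝ (fun y => fderiv ℝ f y v) x w = fderiv ℝ (fderiv ℝ f) x w v := by
    intro v w
    have : (fun y => fderiv ℝ f y v) =
        fun y => (ContinuousLinearMap.apply ℝ ℝ v) (fderiv ℝ f y) := rfl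
    rw [this, fderiv_clm_apply (differentiableAt_const _) hdiff]
    simp
  simp only [pd2_def]
  rw [key, key]
  exact hsym _ _

lemma Dop2_contDiffOn {u : (Fin 2 → ℝ) → ℝ} (hu : ContDiffOn ℝ (⊤:ℕ∞) u SS) (a b : ℕ) :
    ContDiffOn ℝ (⊤:ℕ∞) (Dop2 a b u) SS := by
  have hb : ∀ b, ContDiffOn ℝ (⊤:ℕ∞) ((pd2 1)^[b] u) SS := by
    intro b; induction b with
    | zero => exact hu
    | succ b ih => rw [Function.iterate_succ_apply']; exact pd2_contDiffOn ih 1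
  have : ∀ a g, ContDiffOn ℝ (⊤:ℕ∞) g SS → ContDiffOn ℝ (⊤:ℕ∞) ((pd2 0)^[a] g) SS := by
    intro a; induction a with
    | zero => exact fun g hg => hg
    | succ a ih =>
      intro g hg
      rw [Function.iterate_succ_apply']
      exact pd2_contDiffOn (ih g hg) 0
  exact this a _ (hb b)

lemma pd2_one_iter {g : (Fin 2 → ℝ) → ℝ} (hg : ContDiffOn ℝ (⊤:ℕ∞) g SS) (a : ℕ) :
    Set.EqOn (pd2 1 ((pd2 0)^[a] g)) ((pd2 0)^[a] (pd2 1 g)) SS := by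
  induction a generalizing g with
  | zero => exact fun x _ => rfl
  | succ a ih =>
    intro x hx
    rw [Function.iterate_succ_apply]
    have h1 : pd2 1 ((pd2 0)^[a] (pd2 0 g)) x = (pd2 0)^[a] (pd2 1 (pd2 0 g)) x :=
      ih (pd2_contDiffOn hg 0) hx
    rw [h1]
    have h2 : Set.EqOn (pd2 1 (pd2 0 g)) (pd2 0 (pd2 1 g)) SS := fun y hy => pd2_swap hg hy
    have := pd2_iter_congr h2 0 a hx
    rw [this, ← Function.iterate_succ_apply]

lemma pd2_zero_Dop2 (u : (Fin 2 → ℝ) → ℝ) (a b : ℕ) :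
    pd2 0 (Dop2 a b u) = Dop2 (a+1) b u := by
  simp only [Dop2, ← Function.iterate_succ_apply' (pd2 0)]

lemma iter_contDiffOn {f : (Fin 2 → ℝ) → ℝ} (hf : ContDiffOn ℝ (⊤:ℕ∞) f SS) (i : Fin 2)
    (k : ℕ) : ContDiffOn ℝ (⊤:ℕ∞) ((pd2 i)^[k] f) SS := by
  induction k with
  | zero => exact hf
  | succ k ih => rw [Function.iterate_succ_apply']; exact pd2_contDiffOn ih i

lemma pd2_one_Dop2 {u : (Fin 2 → ℝ) → ℝ} (hu : ContDiffOn ℝ (⊤:ℕ∞) u SS) (a b : ℕ) :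
    Set.EqOn (pd2 1 (Dop2 a b u)) (Dop2 a (b+1) u) SS := by
  have h := pd2_one_iter (iter_contDiffOn hu 1 b) a
  intro x hx
  rw [Dop2, h hx, Dop2, ← Function.iterate_succ_apply' (pd2 1)]

lemma Dop2_differentiableAt {u : (Fin 2 → ℝ) → ℝ} (hu : ContDiffOn ℝ (⊤:ℕ∞) u SS) (a b : ℕ)
    {x} (hx : x ∈ SS) : DifferentiableAt ℝ (Dop2 a b u) x := by
  exact (contDiffAt_of_SS (Dop2_contDiffOn hu a b) hx).differentiableAt (by simp)


lemma gderiv (c : ℝ) (p q : ℕ) (t : ℝ) :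
    HasDerivAt (fun s => c * Real.cos s ^ p * Real.sin s ^ q)
      (c * ((p:ℝ) * Real.cos t ^ (p-1) * (-Real.sin t)) * Real.sin t ^ q
        + c * Real.cos t ^ p * ((q:ℝ) * Real.sin t ^ (q-1) * Real.cos t)) t := by
  have hc : HasDerivAt (fun s => c * Real.cos s ^ p)
      (c * ((p:ℝ) * Real.cos t ^ (p-1) * (-Real.sin t))) t :=
    ((Real.hasDerivAt_cos t).pow p).const_mul c
  have hs : HasDerivAt (fun s => Real.sin s ^ q)
      ((q:ℝ) * Real.sin t ^ (q-1) * Real.cos t) t := (Real.hasDerivAt_sin t).pow q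
  exact hc.mul hs

lemma gderiv_identity (c : ℝ) (p q : ℕ) (t : ℝ) :
    Real.cos t * Real.sin t *
      (c * ((p:ℝ) * Real.cos t ^ (p-1) * (-Real.sin t)) * Real.sin t ^ q
        + c * Real.cos t ^ p * ((q:ℝ) * Real.sin t ^ (q-1) * Real.cos t))
    = -(p:ℝ) * c * Real.cos t ^ p * Real.sin t ^ (q+2)
      + (q:ℝ) * c * Real.cos t ^ (p+2) * Real.sin t ^ q := by
  rcases p with _ | p <;> rcases q with _ | q <;>
    simp only [Nat.cast_zero, Nat.cast_succ, Nat.succ_sub_one, pow_succ, pow_zero] <;> ring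

noncomputable def Tm (u : (Fin 2 → ℝ) → ℝ) (t : ℝ × ℕ × ℕ × ℕ × ℕ) : (Fin 2 → ℝ) → ℝ :=
  fun x => t.1 * Real.cos (x 0) ^ t.2.1 * Real.sin (x 0) ^ t.2.2.1 *
    Dop2 t.2.2.2.1 t.2.2.2.2 u x

def step (t : ℝ × ℕ × ℕ × ℕ × ℕ) : List (ℝ × ℕ × ℕ × ℕ × ℕ) :=
  match t with
  | (c, p, q, a, b) =>
    [(-(p:ℝ) * c, p, q+2, a, b), ((q:ℝ) * c, p+2, q, a, b),
     (c, p+1, q+1, a+1, b), (c, p, q+2, a, b+1)]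

lemma Tm_differentiableAt {u : (Fin 2 → ℝ) → ℝ} (hu : ContDiffOn ℝ (⊤:ℕ∞) u SS)
    (t : ℝ × ℕ × ℕ × ℕ × ℕ) {x} (hx : x ∈ SS) : DifferentiableAt ℝ (Tm u t) x := by
  obtain ⟨c, p, q, a, b⟩ := t
  have hy : DifferentiableAt ℝ (fun y : Fin 2 → ℝ => y 0) x :=
    (ContinuousLinearMap.proj (R := ℝ) (φ := fun _ : Fin 2 => ℝ) 0).differentiableAt
  have h1 : DifferentiableAt ℝ (fun y : Fin 2 → ℝ => c * Real.cos (y 0) ^ p *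
      Real.sin (y 0) ^ q) x := by
    apply DifferentiableAt.mul
    · exact ((Real.differentiable_cos.differentiableAt.comp x hy).pow p).const_mul c
    · exact (Real.differentiable_sin.differentiableAt.comp x hy).pow q
  exact h1.mul (Dop2_differentiableAt hu a b hx)

lemma Vop_Tm {u : (Fin 2 → ℝ) → ℝ} (hu : ContDiffOn ℝ (⊤:ℕ∞) u SS)
    (c : ℝ) (p q a b : ℕ) {x} (hx : x ∈ SS) :
    Vop (Tm u (c, p, q, a, b)) x = ((step (c, p, q, a, b)).map (fun t => Tm u t x)).sum := by
  set D := Dop2 a b u with hD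
  set g : ℝ → ℝ := fun s => c * Real.cos s ^ p * Real.sin s ^ q with hg
  set g' : ℝ := c * ((p:ℝ) * Real.cos (x 0) ^ (p-1) * (-Real.sin (x 0))) * Real.sin (x 0) ^ q
        + c * Real.cos (x 0) ^ p * ((q:ℝ) * Real.sin (x 0) ^ (q-1) * Real.cos (x 0)) with hg'
  have hgd : HasDerivAt g g' (x 0) := gderiv c p q (x 0)
  have hproj : HasFDerivAt (fun y : Fin 2 → ℝ => y 0)
      (ContinuousLinearMap.proj (R := ℝ) (φ := fun _ : Fin 2 => ℝ) 0) x :=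
    (ContinuousLinearMap.proj (R := ℝ) (φ := fun _ : Fin 2 => ℝ) 0).hasFDerivAt
  have hcomp : HasFDerivAt (fun y : Fin 2 → ℝ => g (y 0))
      (g' • (ContinuousLinearMap.proj (R := ℝ) (φ := fun _ : Fin 2 => ℝ) 0)) x :=
    by have := hgd.comp_hasFDerivAt x hproj; exact this
  have hDd : DifferentiableAt ℝ D x := Dop2_differentiableAt hu a b hx
  have hmul : HasFDerivAt (fun y => g (y 0) * D y)
      (g (x 0) • fderiv ℝ D x
        + D x • (g' • (ContinuousLinearMap.proj (R := ℝ) (φ := fun _ : Fin 2 => ℝ) 0))) x :=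
    hcomp.mul hDd.hasFDerivAt
  have hTm : Tm u (c, p, q, a, b) = fun y => g (y 0) * D y := rfl
  have hfd := hmul.fderiv
  have e0 : pd2 0 (Tm u (c, p, q, a, b)) x = D x * g' + g (x 0) * Dop2 (a+1) b u x := by
    rw [hTm]
    show fderiv ℝ (fun y => g (y 0) * D y) x (Pi.single 0 1) = _
    rw [hfd]
    have h1 : fderiv ℝ D x (Pi.single 0 1) = Dop2 (a+1) b u x := by
      show pd2 0 D x = _
      rw [hD, pd2_zero_Dop2]
    simp [h1, smul_eq_mul]
    ring
  have e1 : pd2 1 (Tm u (c, p, q, a, b)) x = g (x 0) * Dop2 a (b+1) u x := by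
    rw [hTm]
    show fderiv ℝ (fun y => g (y 0) * D y) x (Pi.single 1 1) = _
    rw [hfd]
    have h1 : fderiv ℝ D x (Pi.single 1 1) = Dop2 a (b+1) u x := by
      show pd2 1 D x = _
      rw [hD]
      exact pd2_one_Dop2 hu a b hx
    simp [h1, smul_eq_mul]
  rw [Vop, e0, e1]
  simp only [step, List.map_cons, List.map_nil, List.sum_cons, List.sum_nil, Tm]
  have key := gderiv_identity c p q (x 0)
  simp only [hg', hg, hD]
  linear_combination Dop2 a b u x * key

/-! list helpers -/

lemma list_sum_le {α} (L : List α) (f g : α → ℝ) (h : ∀ t ∈ L, f t ≤ g t) :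
    (L.map f).sum ≤ (L.map g).sum := by
  induction L with
  | nil => simp
  | cons t L ih =>
    simp only [List.map_cons, List.sum_cons]
    exact add_le_add (h t (by simp)) (ih fun s hs => h s (by simp [hs]))

lemma list_sum_mul {α} (L : List α) (f : α → ℝ) (K : ℝ) :
    (L.map (fun t => K * f t)).sum = K * (L.map f).sum := by
  induction L with
  | nil => simp
  | cons t L ih => simp only [List.map_cons, List.sum_cons, ih]; ring

lemma list_abs_sum {α} (L : List α) (f : α → ℝ) :
    |(L.map f).sum| ≤ (L.map (fun t => |f t|)).sum := by
  induction L with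
  | nil => simp
  | cons t L ih =>
    simp only [List.map_cons, List.sum_cons]
    exact (abs_add_le _ _).trans (add_le_add le_rfl ih)

lemma list_sum_flatMap {α β} (L : List α) (s : α → List β) (f : β → ℝ) :
    ((L.flatMap s).map f).sum = (L.map (fun t => ((s t).map f).sum)).sum := by
  induction L with
  | nil => simp
  | cons t L ih =>
    simp only [List.flatMap_cons, List.map_append, List.sum_append, List.map_cons,
      List.sum_cons, ih]

/-! linearity of Vop -/

lemma pd2_add {f g : (Fin 2 → ℝ) → ℝ} {x} (hf : DifferentiableAt ℝ f x)
    (hg : DifferentiableAt ℝ g x) (i : Fin 2) :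
    pd2 i (fun y => f y + g y) x = pd2 i f x + pd2 i g x := by
  simp [pd2, fderiv_fun_add hf hg]

lemma Vop_add {f g : (Fin 2 → ℝ) → ℝ} {x} (hf : DifferentiableAt ℝ f x)
    (hg : DifferentiableAt ℝ g x) :
    Vop (fun y => f y + g y) x = Vop f x + Vop g x := by
  simp only [Vop, pd2_add hf hg]; ring

lemma Vop_zero (x : Fin 2 → ℝ) : Vop (fun _ => (0:ℝ)) x = 0 := by
  simp [Vop, pd2]

lemma sum_diffAt {u : (Fin 2 → ℝ) → ℝ} (hu : ContDiffOn ℝ (⊤:ℕ∞) u SS)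
    (L : List (ℝ × ℕ × ℕ × ℕ × ℕ)) {x} (hx : x ∈ SS) :
    DifferentiableAt ℝ (fun y => (L.map (fun t => Tm u t y)).sum) x := by
  induction L with
  | nil =>
    simp only [List.map_nil, List.sum_nil]
    exact differentiableAt_const 0
  | cons t L ih =>
    simp only [List.map_cons, List.sum_cons]
    exact (Tm_differentiableAt hu t hx).add ih

lemma Vop_sum {u : (Fin 2 → ℝ) → ℝ} (hu : ContDiffOn ℝ (⊤:ℕ∞) u SS)
    (L : List (ℝ × ℕ × ℕ × ℕ × ℕ)) {x} (hx : x ∈ SS) :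
    Vop (fun y => (L.map (fun t => Tm u t y)).sum) x
      = (L.map (fun t => Vop (Tm u t) x)).sum := by
  induction L with
  | nil => simpa using Vop_zero x
  | cons t L ih =>
    have h1 : Vop (fun y => Tm u t y + (L.map (fun s => Tm u s y)).sum) x
        = Vop (Tm u t) x + Vop (fun y => (L.map (fun s => Tm u s y)).sum) x :=
      Vop_add (Tm_differentiableAt hu t hx) (sum_diffAt hu L hx)
    simp only [List.map_cons, List.sum_cons]
    rw [h1, ih]

lemma Vop_congr {f g : (Fin 2 → ℝ) → ℝ} (h : Set.EqOn f g SS) {x} (hx : x ∈ SS) :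
    Vop f x = Vop g x := by
  simp only [Vop, pd2_congr h hx]

/-! weights and side conditions -/

noncomputable def wt (d : ℝ) (t : ℝ × ℕ × ℕ × ℕ × ℕ) : ℝ :=
  |t.1| * d ^ (t.2.2.2.1 + t.2.2.2.2) * (Nat.factorial t.2.2.2.1) * (Nat.factorial t.2.2.2.2)

def good (m : ℕ) (t : ℝ × ℕ × ℕ × ℕ × ℕ) : Prop :=
  t.2.2.2.1 ≤ t.2.2.1 ∧ 1 ≤ t.2.2.2.1 + t.2.2.2.2 ∧ t.2.2.2.1 + t.2.2.2.2 ≤ m ∧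
    t.2.1 + t.2.2.1 ≤ 2*m

lemma good_step {m : ℕ} {t s : ℝ × ℕ × ℕ × ℕ × ℕ} (ht : good m t) (hs : s ∈ step t) :
    good (m+1) s := by
  obtain ⟨c, p, q, a, b⟩ := t
  obtain ⟨h1, h2, h3, h4⟩ := ht
  simp only [step, List.mem_cons, List.not_mem_nil, or_false] at hs
  simp only [good] at h1 h2 h3 h4 ⊢
  rcases hs with rfl | rfl | rfl | rfl <;> simp_all <;> omega

lemma wt_step {d : ℝ} (hd : 1 ≤ d) {m : ℕ} {t : ℝ × ℕ × ℕ × ℕ × ℕ} (ht : good m t) :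
    ((step t).map (wt d)).sum ≤ (4 * d * (m+1)) * wt d t := by
  obtain ⟨c, p, q, a, b⟩ := t
  obtain ⟨h1, h2, h3, h4⟩ := ht
  have hd0 : (0:ℝ) < d := lt_of_lt_of_le one_pos hd
  have hW : (0:ℝ) ≤ |c| * d ^ (a+b) * (Nat.factorial a) * (Nat.factorial b) := by positivity
  simp only [step, wt, List.map_cons, List.map_nil, List.sum_cons, List.sum_nil, add_zero]
  have e1 : |(-(p:ℝ)) * c| = (p:ℝ) * |c| := by
    rw [abs_mul, abs_neg, Nat.abs_cast]
  have e2 : |(q:ℝ) * c| = (q:ℝ) * |c| := by rw [abs_mul, Nat.abs_cast]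
  rw [show a+1+b = (a+b)+1 from by omega, show a+(b+1) = (a+b)+1 from by omega]
  simp only [e1, e2, Nat.factorial_succ, pow_succ]
  have hab : (a:ℝ) + (b:ℝ) ≤ (m:ℝ) := by exact_mod_cast h3
  have hpq : (p:ℝ) + (q:ℝ) ≤ 2*(m:ℝ) := by exact_mod_cast h4
  have h7 : (m:ℝ) ≤ d*m := by nlinarith [Nat.cast_nonneg (α := ℝ) m]
  have key : (p:ℝ) + (q:ℝ) + d*((a:ℝ)+1) + d*((b:ℝ)+1) ≤ 4*d*((m:ℝ)+1) := by
    nlinarith [mul_le_mul_of_nonneg_left hab hd0.le, mul_nonneg hd0.le (Nat.cast_nonneg (α := ℝ) m)]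
  refine le_trans (le_of_eq ?_)
    (le_trans (mul_le_mul_of_nonneg_right key hW) (le_of_eq ?_)) <;> push_cast <;> ring

/-! representation of iterates -/

lemma rep {u : (Fin 2 → ℝ) → ℝ} (hu : ContDiffOn ℝ (⊤:ℕ∞) u SS) (d : ℝ) (hd : 1 ≤ d)
    (m : ℕ) (hm : 1 ≤ m) :
    ∃ L : List (ℝ × ℕ × ℕ × ℕ × ℕ),
      (∀ x ∈ SS, Vop^[m] u x = (L.map (fun t => Tm u t x)).sum) ∧
      (∀ t ∈ L, good m t) ∧
      ((L.map (wt d)).sum ≤ (4*d)^m * (Nat.factorial m)) := by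
  have hd0 : (0:ℝ) < d := lt_of_lt_of_le one_pos hd
  induction m with
  | zero => omega
  | succ m ih =>
    rcases Nat.eq_zero_or_pos m with rfl | hm1
    · -- base case m+1 = 1
      refine ⟨[((1:ℝ),1,1,1,0), ((1:ℝ),0,2,0,1)], ?_, ?_, ?_⟩
      · intro x hx
        have h0 : Dop2 1 0 u = pd2 0 u := rfl
        have h1 : Dop2 0 1 u = pd2 1 u := rfl
        rw [Function.iterate_one]
        show Real.cos (x 0) * Real.sin (x 0) * pd2 0 u x + Real.sin (x 0) ^ 2 * pd2 1 u x = _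
        simp only [Tm, List.map_cons, List.map_nil, List.sum_cons, List.sum_nil, h0, h1]
        ring
      · intro t ht
        simp only [List.mem_cons, List.not_mem_nil, or_false] at ht
        rcases ht with rfl | rfl <;> simp [good]
      · simp only [wt, List.map_cons, List.map_nil, List.sum_cons, List.sum_nil]
        simp only [Nat.factorial]
        norm_num
        nlinarith
    · obtain ⟨L, hrep, hgood, hwt⟩ := ih hm1
      refine ⟨L.flatMap step, ?_, ?_, ?_⟩
      · intro x hx
        have h1 : Vop^[m+1] u x = Vop (Vop^[m] u) x :=
          congrFun (Function.iterate_succ_apply' Vop m u) x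
        have h2 : Vop (Vop^[m] u) x
            = Vop (fun y => (L.map (fun t => Tm u t y)).sum) x :=
          Vop_congr (fun y hy => hrep y hy) hx
        rw [h1, h2, Vop_sum hu L hx, list_sum_flatMap]
        congr 1
        apply List.map_congr_left
        intro t ht
        obtain ⟨c, p, q, a, b⟩ := t
        exact Vop_Tm hu c p q a b hx
      · intro s hs
        rw [List.mem_flatMap] at hs
        obtain ⟨t, htL, hst⟩ := hs
        exact good_step (hgood t htL) hst
      · rw [list_sum_flatMap]
        have h1 : (L.map (fun t => ((step t).map (wt d)).sum)).sum
            ≤ (L.map (fun t => (4*d*(m+1)) * wt d t)).sum :=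
          list_sum_le _ _ _ (fun t ht => wt_step hd (hgood t ht))
        rw [list_sum_mul] at h1
        refine h1.trans ?_
        have h2 : (4*d*(m+1)) * (L.map (wt d)).sum ≤ (4*d*(m+1)) * ((4*d)^m * m.factorial) := by
          apply mul_le_mul_of_nonneg_left hwt
          positivity
        refine h2.trans (le_of_eq ?_)
        rw [Nat.factorial_succ, pow_succ]
        push_cast
        ring

/-! pointwise bound on a term -/

lemma Tm_bound {u : (Fin 2 → ℝ) → ℝ} {C d : ℝ} (hC : 0 ≤ C) (hd : 1 ≤ d)
    (hbound : ∀ a b : ℕ, 1 ≤ a + b → ∀ x : Fin 2 → ℝ, 0 < x 0 → x 0 < Real.pi / 2 →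
      |Real.sin (x 0) ^ a * Dop2 a b u x| ≤
        C * d ^ (a + b) * (Nat.factorial a * Nat.factorial b))
    {m : ℕ} {t : ℝ × ℕ × ℕ × ℕ × ℕ} (ht : good m t) {x} (hx : x ∈ SS) :
    |Tm u t x| ≤ C * wt d t := by
  obtain ⟨c, p, q, a, b⟩ := t
  obtain ⟨h1, h2, _, _⟩ := ht
  obtain ⟨hx1, hx2⟩ := hx
  have hs0 : 0 < Real.sin (x 0) := Real.sin_pos_of_pos_of_lt_pi hx1
    (lt_trans hx2 (by linarith [Real.pi_pos]))
  have hs1 : Real.sin (x 0) ≤ 1 := Real.sin_le_one _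
  have hc0 : 0 ≤ Real.cos (x 0) := Real.cos_nonneg_of_mem_Icc
    ⟨by linarith [Real.pi_pos], le_of_lt hx2⟩
  have hc1 : Real.cos (x 0) ≤ 1 := Real.cos_le_one _
  have e : |Tm u (c,p,q,a,b) x| = |c| * (Real.cos (x 0) ^ p * Real.sin (x 0) ^ q *
      |Dop2 a b u x|) := by
    simp only [Tm, abs_mul, abs_pow, abs_of_nonneg hc0, abs_of_nonneg hs0.le]
    ring
  rw [e]
  have hq : Real.cos (x 0) ^ p * Real.sin (x 0) ^ q ≤ Real.sin (x 0) ^ a := by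
    calc Real.cos (x 0) ^ p * Real.sin (x 0) ^ q ≤ 1 * Real.sin (x 0) ^ q := by
          apply mul_le_mul_of_nonneg_right (pow_le_one₀ hc0 hc1) (by positivity)
      _ = Real.sin (x 0) ^ q := one_mul _
      _ ≤ Real.sin (x 0) ^ a := pow_le_pow_of_le_one hs0.le hs1 h1
  have h3 : Real.cos (x 0) ^ p * Real.sin (x 0) ^ q * |Dop2 a b u x|
      ≤ Real.sin (x 0) ^ a * |Dop2 a b u x| :=
    mul_le_mul_of_nonneg_right hq (abs_nonneg _)
  have h4 : Real.sin (x 0) ^ a * |Dop2 a b u x| = |Real.sin (x 0) ^ a * Dop2 a b u x| := by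
    rw [abs_mul, abs_pow, abs_of_nonneg hs0.le]
  have h5 := hbound a b h2 x hx1 hx2
  have h6 : Real.cos (x 0) ^ p * Real.sin (x 0) ^ q * |Dop2 a b u x|
      ≤ C * d ^ (a+b) * (Nat.factorial a * Nat.factorial b) := by
    rw [h4] at h3; linarith
  calc |c| * (Real.cos (x 0) ^ p * Real.sin (x 0) ^ q * |Dop2 a b u x|)
      ≤ |c| * (C * d ^ (a+b) * (Nat.factorial a * Nat.factorial b)) :=
        mul_le_mul_of_nonneg_left h6 (abs_nonneg c)
    _ = C * wt d (c,p,q,a,b) := by simp only [wt]; ring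


/-- Weighted Gevrey bounds on the derivatives of `u` yield Gevrey bounds on all iterates
`V^m u` of the vertex-edge vector field (the computation concluding estimate (A.24)). -/
theorem stmt15 (u : (Fin 2 → ℝ) → ℝ)
    (hu : ContDiffOn ℝ (⊤ : ℕ∞) u {x | 0 < x 0 ∧ x 0 < Real.pi / 2})
    (C d : ℝ) (hC : 0 ≤ C) (hd : 1 ≤ d)
    (hbound : ∀ a b : ℕ, 1 ≤ a + b → ∀ x : Fin 2 → ℝ, 0 < x 0 → x 0 < Real.pi / 2 →
      |Real.sin (x 0) ^ a * Dop2 a b u x| ≤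
        C * d ^ (a + b) * (Nat.factorial a * Nat.factorial b)) :
    ∃ C' : ℝ, 0 < C' ∧ ∃ d' : ℝ, 0 < d' ∧ ∀ m : ℕ, 1 ≤ m →
      ∀ x : Fin 2 → ℝ, 0 < x 0 → x 0 < Real.pi / 2 →
        |Vop^[m] u x| ≤ C' * d' ^ m * Nat.factorial m := by
  have huS : ContDiffOn ℝ (⊤ : ℕ∞) u SS := hu
  have hd0 : (0:ℝ) < d := lt_of_lt_of_le one_pos hd
  refine ⟨C + 1, by linarith, 4*d, by linarith, ?_⟩
  intro m hm x hx1 hx2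
  have hx : x ∈ SS := ⟨hx1, hx2⟩
  obtain ⟨L, hrep, hgood, hwt⟩ := rep huS d hd m hm
  rw [hrep x hx]
  calc |(L.map (fun t => Tm u t x)).sum|
      ≤ (L.map (fun t => |Tm u t x|)).sum := list_abs_sum _ _
    _ ≤ (L.map (fun t => C * wt d t)).sum :=
        list_sum_le _ _ _ (fun t ht => Tm_bound hC hd hbound (hgood t ht) hx)
    _ = C * (L.map (wt d)).sum := list_sum_mul _ _ _
    _ ≤ C * ((4*d)^m * (Nat.factorial m)) := mul_le_mul_of_nonneg_left hwt hC
    _ ≤ (C + 1) * (4*d)^m * (Nat.factorial m) := by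
        have h1 : (0:ℝ) ≤ (4*d)^m * (Nat.factorial m) := by positivity
        nlinarith
end

section
/- Let A : ℕ × ℕ → ℝ be a function satisfying: A(m,k) ≥ 0 for all m, k; A(m,k) = 0 whenever k = 0 or k > m; A(1,1) ≤ 4; and A(m+1, k) ≤ 2m · A(m,k) + 2 · A(m, k−1) for every integer m ≥ 1 and every 1 ≤ k ≤ m+1. Then for every m ≥ 1 and every 1 ≤ k ≤ m, A(m,k) ≤ 4^m · m! / k!. -/
/-- The combinatorial lemma (A.26)–(A.28): the coefficient masses `A_k^m` of the iterated
vertex-edge vector field satisfy `A(m,k) ≤ 4^m m!/k!`. -/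
theorem stmt16 (A : ℕ → ℕ → ℝ)
    (hnonneg : ∀ m k, 0 ≤ A m k)
    (hzero : ∀ m k, k = 0 ∨ m < k → A m k = 0)
    (hinit : A 1 1 ≤ 4)
    (hrec : ∀ m : ℕ, 1 ≤ m → ∀ k : ℕ, 1 ≤ k → k ≤ m + 1 →
      A (m + 1) k ≤ 2 * (m : ℝ) * A m k + 2 * A m (k - 1)) :
    ∀ m : ℕ, 1 ≤ m → ∀ k : ℕ, 1 ≤ k → k ≤ m →
      A m k ≤ 4 ^ m * (Nat.factorial m : ℝ) / (Nat.factorial k : ℝ) := by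
  -- strengthened form with multiplication
  have key : ∀ m : ℕ, 1 ≤ m → ∀ k : ℕ, 1 ≤ k → k ≤ m →
      A m k * (Nat.factorial k : ℝ) ≤ 4 ^ m * (Nat.factorial m : ℝ) := by
    intro m hm
    induction m with
    | zero => omega
    | succ n ih =>
      intro k hk hkm
      rcases Nat.eq_or_lt_of_le hm with h1 | h1
      · -- n + 1 = 1
        have hn0 : n = 0 := by omega
        have hk1 : k = 1 := by omega
        subst hn0 hk1
        simpa using hinit
      · have hn : 1 ≤ n := by omega
        have hr := hrec n hn k hk hkm
        have hfk : (0 : ℝ) < (Nat.factorial k : ℝ) := by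
          exact_mod_cast Nat.factorial_pos k
        have hA1 : A n k * (Nat.factorial k : ℝ) ≤ 4 ^ n * (Nat.factorial n : ℝ) := by
          rcases le_or_gt k n with h | h
          · exact ih hn k hk h
          · rw [hzero n k (Or.inr h), zero_mul]
            positivity
        have hA2 : A n (k - 1) * (Nat.factorial (k - 1) : ℝ) ≤ 4 ^ n * (Nat.factorial n : ℝ) := by
          rcases Nat.eq_or_lt_of_le hk with h | h
          · rw [hzero n (k - 1) (Or.inl (by omega)), zero_mul]
            positivity
          · exact ih hn (k - 1) (by omega) (by omega)
        have hfacts : (Nat.factorial k : ℝ) = (k : ℝ) * (Nat.factorial (k - 1) : ℝ) := by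
          exact_mod_cast (Nat.mul_factorial_pred (by omega : k ≠ 0)).symm
        have hstep : A (n + 1) k * (Nat.factorial k : ℝ) ≤
            (2 * (n : ℝ) + 2 * (k : ℝ)) * (4 ^ n * (Nat.factorial n : ℝ)) := by
          calc A (n + 1) k * (Nat.factorial k : ℝ)
              ≤ (2 * (n : ℝ) * A n k + 2 * A n (k - 1)) * (Nat.factorial k : ℝ) := by
                apply mul_le_mul_of_nonneg_right hr hfk.le
            _ = 2 * (n : ℝ) * (A n k * (Nat.factorial k : ℝ))
                + 2 * (k : ℝ) * (A n (k - 1) * (Nat.factorial (k - 1) : ℝ)) := by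
                rw [hfacts]; ring
            _ ≤ 2 * (n : ℝ) * (4 ^ n * (Nat.factorial n : ℝ))
                + 2 * (k : ℝ) * (4 ^ n * (Nat.factorial n : ℝ)) := by
                gcongr <;> first | exact hnonneg _ _ | positivity
            _ = (2 * (n : ℝ) + 2 * (k : ℝ)) * (4 ^ n * (Nat.factorial n : ℝ)) := by ring
        have hcoef : (2 * (n : ℝ) + 2 * (k : ℝ)) ≤ 4 * ((n : ℝ) + 1) := by
          have : (k : ℝ) ≤ (n : ℝ) + 1 := by exact_mod_cast hkm
          linarith
        calc A (n + 1) k * (Nat.factorial k : ℝ)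
            ≤ (2 * (n : ℝ) + 2 * (k : ℝ)) * (4 ^ n * (Nat.factorial n : ℝ)) := hstep
          _ ≤ 4 * ((n : ℝ) + 1) * (4 ^ n * (Nat.factorial n : ℝ)) := by
              apply mul_le_mul_of_nonneg_right hcoef; positivity
          _ = 4 ^ (n + 1) * (Nat.factorial (n + 1) : ℝ) := by
              rw [Nat.factorial_succ]; push_cast; ring
  intro m hm k hk hkm
  have hfk : (0 : ℝ) < (Nat.factorial k : ℝ) := by exact_mod_cast Nat.factorial_pos k
  rw [le_div_iff₀ hfk]
  exact key m hm k hk hkm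
end

section
/- Let β ∈ (0, 1/2), δ > 0, c ∈ ℝ, and let s : (0, δ) → ℝ be a smooth function for which there are constants C ≥ 0 and d ≥ 1 such that |x^{β + k − 1/2} · (d/dx)^k (s − c)(x)| ≤ C d^k k! for every integer k ≥ 0 and every x ∈ (0, δ). Define g(ζ) := s(e^ζ) − c for ζ < ln δ. Then there exist constants C', d' > 0 such that for every integer k ≥ 0 and every ζ < ln δ, |g^{(k)}(ζ)| ≤ C' d'^k k! · e^{(1/2 − β)ζ}. -/
open Set Finset

private def sa : ℕ → ℕ → ℕ
  | 0, 0 => 1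
  | 0, _+1 => 0
  | _+1, 0 => 0
  | k+1, j+1 => (j+1) * sa k (j+1) + sa k j

private lemma sa_eq_zero : ∀ k j, k < j → sa k j = 0
  | 0, _+1, _ => rfl
  | k+1, j+1, h => by
      have h1 : sa k (j+1) = 0 := sa_eq_zero k (j+1) (by omega)
      have h2 : sa k j = 0 := sa_eq_zero k j (by omega)
      simp [sa, h1, h2]

private lemma hasDerivAt_iteratedDeriv_aux {f : ℝ → ℝ} {u : Set ℝ} (hu : IsOpen u)
    (hf : ContDiffOn ℝ (⊤ : ℕ∞) f u) (j : ℕ) {x : ℝ} (hx : x ∈ u) :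
    HasDerivAt (iteratedDeriv j f) (iteratedDeriv (j + 1) f x) x := by
  have heq : ∀ y ∈ u, iteratedDerivWithin j f u y = iteratedDeriv j f y := fun y hy => by
    rw [iteratedDerivWithin_eq_iteratedFDerivWithin, iteratedDeriv_eq_iteratedFDeriv,
      iteratedFDerivWithin_of_isOpen j hu hy]
  have hD : DifferentiableOn ℝ (iteratedDerivWithin j f u) u :=
    hf.differentiableOn_iteratedDerivWithin (by exact_mod_cast lt_top_iff_ne_top.mpr (ENat.coe_ne_top j))
      hu.uniqueDiffOn
  have hev : iteratedDerivWithin j f u =ᶠ[nhds x] iteratedDeriv j f :=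
    Filter.eventuallyEq_of_mem (hu.mem_nhds hx) heq
  have hDx : DifferentiableAt ℝ (iteratedDeriv j f) x :=
    hev.differentiableAt_iff.mp ((hD x hx).differentiableAt (hu.mem_nhds hx))
  rw [iteratedDeriv_succ]
  exact hDx.hasDerivAt

private lemma key_identity {δ : ℝ} (hδ : 0 < δ) {f : ℝ → ℝ}
    (hf : ContDiffOn ℝ (⊤ : ℕ∞) f (Set.Ioo 0 δ)) :
    ∀ k : ℕ, ∀ ζ : ℝ, ζ < Real.log δ →
      iteratedDeriv k (fun z => f (Real.exp z)) ζ =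
        ∑ j ∈ Finset.range (k + 1),
          (sa k j : ℝ) * Real.exp (j * ζ) * iteratedDeriv j f (Real.exp ζ) := by
  have hmem : ∀ ζ : ℝ, ζ < Real.log δ → Real.exp ζ ∈ Set.Ioo (0 : ℝ) δ := by
    intro ζ hζ
    refine ⟨Real.exp_pos ζ, ?_⟩
    calc Real.exp ζ < Real.exp (Real.log δ) := Real.exp_lt_exp.mpr hζ
      _ = δ := Real.exp_log hδ
  intro k
  induction k with
  | zero =>
      intro ζ hζ
      simp [sa, iteratedDeriv_zero]
  | succ k ih =>
      intro ζ hζ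
      have hx := hmem ζ hζ
      -- derivative of each summand
      have hterm : ∀ j, j ∈ Finset.range (k + 1) →
          HasDerivAt (fun z : ℝ => (sa k j : ℝ) * Real.exp (j * z) * iteratedDeriv j f (Real.exp z))
            ((sa k j : ℝ) * (Real.exp (j * ζ) * (j : ℝ)) * iteratedDeriv j f (Real.exp ζ)
              + (sa k j : ℝ) * Real.exp (j * ζ)
                * (iteratedDeriv (j + 1) f (Real.exp ζ) * Real.exp ζ)) ζ := by
        intro j _
        have h1 : HasDerivAt (fun z : ℝ => Real.exp ((j : ℝ) * z))
            (Real.exp ((j : ℝ) * ζ) * (j : ℝ)) ζ :=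
          by simpa using ((hasDerivAt_id ζ).const_mul (j : ℝ)).exp
        have h2 : HasDerivAt (fun z : ℝ => iteratedDeriv j f (Real.exp z))
            (iteratedDeriv (j + 1) f (Real.exp ζ) * Real.exp ζ) ζ :=
          (hasDerivAt_iteratedDeriv_aux isOpen_Ioo hf j hx).comp ζ (Real.hasDerivAt_exp ζ)
        exact (h1.const_mul ((sa k j : ℝ))).mul h2
      have hsum : HasDerivAt
          (fun z : ℝ => ∑ j ∈ Finset.range (k + 1),
            (sa k j : ℝ) * Real.exp (j * z) * iteratedDeriv j f (Real.exp z))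
          (∑ j ∈ Finset.range (k + 1),
            ((sa k j : ℝ) * (Real.exp (j * ζ) * (j : ℝ)) * iteratedDeriv j f (Real.exp ζ)
              + (sa k j : ℝ) * Real.exp (j * ζ)
                * (iteratedDeriv (j + 1) f (Real.exp ζ) * Real.exp ζ))) ζ :=
        HasDerivAt.fun_sum hterm
      have hev : iteratedDeriv k (fun z => f (Real.exp z)) =ᶠ[nhds ζ]
          (fun z : ℝ => ∑ j ∈ Finset.range (k + 1),
            (sa k j : ℝ) * Real.exp (j * z) * iteratedDeriv j f (Real.exp z)) := by
        filter_upwards [Iio_mem_nhds hζ] with z hz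
        exact ih z hz
      have hdg : iteratedDeriv (k + 1) (fun z => f (Real.exp z)) ζ =
          ∑ j ∈ Finset.range (k + 1),
            ((sa k j : ℝ) * (Real.exp (j * ζ) * (j : ℝ)) * iteratedDeriv j f (Real.exp ζ)
              + (sa k j : ℝ) * Real.exp (j * ζ)
                * (iteratedDeriv (j + 1) f (Real.exp ζ) * Real.exp ζ)) := by
        rw [iteratedDeriv_succ]
        rw [hev.deriv_eq]
        exact hsum.deriv
      rw [hdg]
      -- now the combinatorial reindexing
      set F : ℕ → ℝ := fun j => iteratedDeriv j f (Real.exp ζ) with hF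
      have hsplit : ∀ j : ℕ, (sa (k + 1) j : ℝ)
          = (j : ℝ) * (sa k j : ℝ) + (if j = 0 then 0 else (sa k (j - 1) : ℝ)) := by
        intro j
        cases j with
        | zero => simp [sa]
        | succ j => push_cast [sa]; ring
      calc ∑ j ∈ Finset.range (k + 1),
            ((sa k j : ℝ) * (Real.exp (j * ζ) * (j : ℝ)) * F j
              + (sa k j : ℝ) * Real.exp (j * ζ) * (F (j + 1) * Real.exp ζ))
          = (∑ j ∈ Finset.range (k + 1), (j : ℝ) * (sa k j : ℝ) * Real.exp (j * ζ) * F j)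
            + ∑ j ∈ Finset.range (k + 1), (sa k j : ℝ) * Real.exp ((j + 1 : ℕ) * ζ) * F (j + 1) := by
            rw [← Finset.sum_add_distrib]
            refine Finset.sum_congr rfl fun j _ => ?_
            push_cast
            rw [show ((j : ℝ) + 1) * ζ = (j : ℝ) * ζ + ζ by ring, Real.exp_add]
            ring
        _ = (∑ j ∈ Finset.range (k + 2), (j : ℝ) * (sa k j : ℝ) * Real.exp (j * ζ) * F j)
            + ∑ j ∈ Finset.range (k + 2),
              (if j = 0 then 0 else (sa k (j - 1) : ℝ)) * Real.exp (j * ζ) * F j := by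
            rw [Finset.sum_range_succ ((fun j : ℕ => (j : ℝ) * (sa k j : ℝ) * Real.exp (j * ζ) * F j)) (k + 1)]
            rw [Finset.sum_range_succ' (fun j : ℕ => (if j = 0 then 0 else (sa k (j - 1) : ℝ)) * Real.exp (j * ζ) * F j) (k + 1)]
            simp [sa_eq_zero k (k + 1) (Nat.lt_succ_self k)]
        _ = ∑ j ∈ Finset.range (k + 2), (sa (k + 1) j : ℝ) * Real.exp (j * ζ) * F j := by
            rw [← Finset.sum_add_distrib]
            refine Finset.sum_congr rfl fun j _ => ?_
            rw [hsplit j]; ring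

private lemma sa_cast_split (k : ℕ) : ∀ j : ℕ, (sa (k + 1) j : ℝ)
    = (j : ℝ) * (sa k j : ℝ) + (if j = 0 then 0 else (sa k (j - 1) : ℝ)) := by
  intro j
  cases j with
  | zero => simp [sa]
  | succ j => push_cast [sa]; ring

private lemma sa_sum_bound {d : ℝ} (hd : 1 ≤ d) :
    ∀ k : ℕ, ∑ j ∈ Finset.range (k + 1), (sa k j : ℝ) * d ^ j * (Nat.factorial j : ℝ)
      ≤ (2 * d) ^ k * (Nat.factorial k : ℝ) := by
  have hd0 : (0 : ℝ) ≤ d := le_trans zero_le_one hd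
  intro k
  induction k with
  | zero => simp [sa]
  | succ k ih =>
      calc ∑ j ∈ Finset.range (k + 2), (sa (k + 1) j : ℝ) * d ^ j * (Nat.factorial j : ℝ)
          = (∑ j ∈ Finset.range (k + 2), (j : ℝ) * (sa k j : ℝ) * d ^ j * (Nat.factorial j : ℝ))
            + ∑ j ∈ Finset.range (k + 2),
              (if j = 0 then 0 else (sa k (j - 1) : ℝ)) * d ^ j * (Nat.factorial j : ℝ) := by
            rw [← Finset.sum_add_distrib]
            refine Finset.sum_congr rfl fun j _ => ?_
            rw [sa_cast_split k j]; ring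
        _ = (∑ j ∈ Finset.range (k + 1), (j : ℝ) * (sa k j : ℝ) * d ^ j * (Nat.factorial j : ℝ))
            + ∑ j ∈ Finset.range (k + 1),
              (sa k j : ℝ) * d ^ (j + 1) * (Nat.factorial (j + 1) : ℝ) := by
            rw [Finset.sum_range_succ
              (fun j : ℕ => (j : ℝ) * (sa k j : ℝ) * d ^ j * (Nat.factorial j : ℝ)) (k + 1)]
            rw [Finset.sum_range_succ'
              (fun j : ℕ => (if j = 0 then 0 else (sa k (j - 1) : ℝ)) * d ^ j
                * (Nat.factorial j : ℝ)) (k + 1)]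
            simp [sa_eq_zero k (k + 1) (Nat.lt_succ_self k)]
        _ = ∑ j ∈ Finset.range (k + 1),
              (sa k j : ℝ) * d ^ j * (Nat.factorial j : ℝ) * ((j : ℝ) + d * ((j : ℝ) + 1)) := by
            rw [← Finset.sum_add_distrib]
            refine Finset.sum_congr rfl fun j _ => ?_
            rw [pow_succ, Nat.factorial_succ]
            push_cast
            ring
        _ ≤ ∑ j ∈ Finset.range (k + 1),
              (sa k j : ℝ) * d ^ j * (Nat.factorial j : ℝ) * (2 * d * ((k : ℝ) + 1)) := by
            refine Finset.sum_le_sum fun j hj => ?_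
            have hjk : (j : ℝ) ≤ (k : ℝ) := by
              exact_mod_cast Nat.lt_succ_iff.mp (Finset.mem_range.mp hj)
            have hnn : (0 : ℝ) ≤ (sa k j : ℝ) * d ^ j * (Nat.factorial j : ℝ) := by
              positivity
            refine mul_le_mul_of_nonneg_left ?_ hnn
            nlinarith [Nat.cast_nonneg (α := ℝ) j]
        _ = 2 * d * ((k : ℝ) + 1)
            * ∑ j ∈ Finset.range (k + 1), (sa k j : ℝ) * d ^ j * (Nat.factorial j : ℝ) := by
            rw [Finset.mul_sum]
            exact Finset.sum_congr rfl fun j _ => by ring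
        _ ≤ 2 * d * ((k : ℝ) + 1) * ((2 * d) ^ k * (Nat.factorial k : ℝ)) := by
            refine mul_le_mul_of_nonneg_left ih (by positivity)
        _ = (2 * d) ^ (k + 1) * (Nat.factorial (k + 1) : ℝ) := by
            rw [pow_succ, Nat.factorial_succ]
            push_cast
            ring

/-- Gevrey-type bounds with power weights `x^(β+k−1/2)` transform into Gevrey-type bounds
with exponential weight `e^((1/2−β)ζ)` under the logarithmic substitution `x = e^ζ`
(the pointwise step behind estimate (2.9)/(A.15)). -/
theorem stmt17 (β δ c : ℝ) (hβ : β ∈ Set.Ioo (0 : ℝ) (1 / 2)) (hδ : 0 < δ)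
    (s : ℝ → ℝ) (hs : ContDiffOn ℝ (⊤ : ℕ∞) s (Set.Ioo 0 δ))
    (C d : ℝ) (hC : 0 ≤ C) (hd : 1 ≤ d)
    (hbound : ∀ k : ℕ, ∀ x ∈ Set.Ioo (0 : ℝ) δ,
      |x ^ (β + (k : ℝ) - 1 / 2) * iteratedDeriv k (fun t => s t - c) x| ≤
        C * d ^ k * Nat.factorial k) :
    ∃ C' : ℝ, 0 < C' ∧ ∃ d' : ℝ, 0 < d' ∧ ∀ k : ℕ, ∀ ζ : ℝ, ζ < Real.log δ →
      |iteratedDeriv k (fun z => s (Real.exp z) - c) ζ| ≤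
        C' * d' ^ k * Nat.factorial k * Real.exp ((1 / 2 - β) * ζ) := by
  set f : ℝ → ℝ := fun t => s t - c with hf_def
  have hf : ContDiffOn ℝ (⊤ : ℕ∞) f (Set.Ioo 0 δ) := hs.sub contDiffOn_const
  refine ⟨C + 1, by linarith, 2 * d, by linarith, ?_⟩
  intro k ζ hζ
  have hx : Real.exp ζ ∈ Set.Ioo (0 : ℝ) δ := by
    refine ⟨Real.exp_pos ζ, ?_⟩
    calc Real.exp ζ < Real.exp (Real.log δ) := Real.exp_lt_exp.mpr hζ
      _ = δ := Real.exp_log hδ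
  have hid := key_identity hδ hf k ζ hζ
  have hfun : (fun z => s (Real.exp z) - c) = (fun z => f (Real.exp z)) := rfl
  rw [hfun, hid]
  set E : ℝ := Real.exp ((1 / 2 - β) * ζ) with hE_def
  have hEpos : 0 < E := Real.exp_pos _
  -- bound each iterated derivative of f at exp ζ
  have hFb : ∀ j : ℕ, |iteratedDeriv j f (Real.exp ζ)|
      ≤ C * d ^ j * (Nat.factorial j : ℝ) * Real.exp (-(β + (j : ℝ) - 1 / 2) * ζ) := by
    intro j
    have hb := hbound j (Real.exp ζ) hx
    have hxp : Real.exp ζ ^ (β + (j : ℝ) - 1 / 2) = Real.exp ((β + (j : ℝ) - 1 / 2) * ζ) := by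
      rw [Real.rpow_def_of_pos (Real.exp_pos ζ), Real.log_exp, mul_comm]
    rw [abs_mul, hxp, abs_of_pos (Real.exp_pos _)] at hb
    have hEj : (0 : ℝ) < Real.exp ((β + (j : ℝ) - 1 / 2) * ζ) := Real.exp_pos _
    have h2 : |iteratedDeriv j f (Real.exp ζ)|
        ≤ C * d ^ j * (Nat.factorial j : ℝ) / Real.exp ((β + (j : ℝ) - 1 / 2) * ζ) := by
      rw [le_div_iff₀ hEj, mul_comm]
      exact hb
    calc |iteratedDeriv j f (Real.exp ζ)|
        ≤ C * d ^ j * (Nat.factorial j : ℝ) / Real.exp ((β + (j : ℝ) - 1 / 2) * ζ) := h2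
      _ = C * d ^ j * (Nat.factorial j : ℝ) * Real.exp (-(β + (j : ℝ) - 1 / 2) * ζ) := by
          rw [neg_mul, Real.exp_neg, div_eq_mul_inv]
  calc |∑ j ∈ Finset.range (k + 1),
        (sa k j : ℝ) * Real.exp (j * ζ) * iteratedDeriv j f (Real.exp ζ)|
      ≤ ∑ j ∈ Finset.range (k + 1),
        |(sa k j : ℝ) * Real.exp (j * ζ) * iteratedDeriv j f (Real.exp ζ)| :=
        Finset.abs_sum_le_sum_abs _ _
    _ = ∑ j ∈ Finset.range (k + 1),
        (sa k j : ℝ) * Real.exp (j * ζ) * |iteratedDeriv j f (Real.exp ζ)| := by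
        refine Finset.sum_congr rfl fun j _ => ?_
        rw [abs_mul, abs_mul, abs_of_nonneg (by positivity : (0:ℝ) ≤ (sa k j : ℝ)),
          abs_of_pos (Real.exp_pos _)]
    _ ≤ ∑ j ∈ Finset.range (k + 1),
        (sa k j : ℝ) * Real.exp (j * ζ)
          * (C * d ^ j * (Nat.factorial j : ℝ) * Real.exp (-(β + (j : ℝ) - 1 / 2) * ζ)) := by
        refine Finset.sum_le_sum fun j _ => ?_
        exact mul_le_mul_of_nonneg_left (hFb j) (by positivity)
    _ = ∑ j ∈ Finset.range (k + 1),
        (sa k j : ℝ) * d ^ j * (Nat.factorial j : ℝ) * (C * E) := by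
        refine Finset.sum_congr rfl fun j _ => ?_
        have key : Real.exp ((j : ℝ) * ζ) * Real.exp (-(β + (j : ℝ) - 1 / 2) * ζ) = E := by
          rw [hE_def, ← Real.exp_add]
          congr 1
          ring
        rw [← key]
        ring
    _ = (∑ j ∈ Finset.range (k + 1), (sa k j : ℝ) * d ^ j * (Nat.factorial j : ℝ)) * (C * E) :=
        (Finset.sum_mul _ _ _).symm
    _ ≤ ((2 * d) ^ k * (Nat.factorial k : ℝ)) * (C * E) :=
        mul_le_mul_of_nonneg_right (sa_sum_bound hd k) (by positivity)
    _ = C * ((2 * d) ^ k * (Nat.factorial k : ℝ) * E) := by ring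
    _ ≤ (C + 1) * ((2 * d) ^ k * (Nat.factorial k : ℝ) * E) := by
        refine mul_le_mul_of_nonneg_right (by linarith) ?_
        positivity
    _ = (C + 1) * (2 * d) ^ k * (Nat.factorial k : ℝ) * E := by ring
end

section
/- Let β ∈ (0,1) and Z > 0, let D = {(x₁,x₂) ∈ ℝ² : 0 < √(x₁² + x₂²) < Z}, and let p : D → ℝ be a smooth function for which there are constants C ≥ 0 and d ≥ 1 such that for every pair (α₁,α₂) ∈ ℕ² and every x ∈ D, |∂^{α₁+α₂} p / ∂x₁^{α₁}∂x₂^{α₂}(x)| ≤ C d^{α₁+α₂} α₁! α₂! · r(x)^{1 − β − α₁ − α₂}, where r(x) = √(x₁² + x₂²). Define q(τ, θ) := p(e^τ cos θ, e^τ sin θ) for τ < ln Z and θ ∈ ℝ. Then there exist constants C', d' > 0 such that for every pair (α₁,α₂) ∈ ℕ² and every (τ,θ) with τ < ln Z, |∂^{α₁+α₂} q / ∂τ^{α₁}∂θ^{α₂}(τ,θ)| ≤ C' d'^{α₁+α₂} α₁! α₂! · e^{(1 − β)τ}. -/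
/-- Euclidean norm `r(x) = √(x₁² + x₂²)` on `ℝ²`. -/
noncomputable def rad2 (x : Fin 2 → ℝ) : ℝ := Real.sqrt (x 0 ^ 2 + x 1 ^ 2)

open Real Set Function

namespace Aux18
def U (Z : ℝ) : Set (Fin 2 → ℝ) := {x | 0 < rad2 x ∧ rad2 x < Z}
lemma isOpen_U (Z : ℝ) : IsOpen (U Z) := by
  have : U Z = rad2 ⁻¹' (Set.Ioo 0 Z) := rfl
  rw [this]
  refine (isOpen_Ioo).preimage (Real.continuous_sqrt.comp (by fun_prop))

variable {Z : ℝ} {f g : (Fin 2 → ℝ) → ℝ}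

lemma contDiffOn_pd2 (hf : ContDiffOn ℝ (⊤ : ℕ∞) f (U Z))
    (i : Fin 2) : ContDiffOn ℝ (⊤ : ℕ∞) (pd2 i f) (U Z) := by
  have h1 : ContDiffOn ℝ (⊤ : ℕ∞) (fderiv ℝ f) (U Z) := by
    apply hf.fderiv_of_isOpen (isOpen_U Z)
    exact le_of_eq (by rfl)
  exact h1.clm_apply contDiffOn_const

lemma diffAt (hf : ContDiffOn ℝ (⊤ : ℕ∞) f (U Z)) {x : Fin 2 → ℝ} (hx : x ∈ U Z) :
    DifferentiableAt ℝ f x :=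
  ((hf x hx).contDiffAt ((isOpen_U Z).mem_nhds hx)).differentiableAt (by simp)

lemma pd2_congr (h : EqOn f g (U Z)) {x : Fin 2 → ℝ} (hx : x ∈ U Z) (i : Fin 2) :
    pd2 i f x = pd2 i g x := by
  have : f =ᶠ[nhds x] g := Filter.eventuallyEq_of_mem ((isOpen_U Z).mem_nhds hx) h
  simp only [pd2, this.fderiv_eq]

lemma pd2_add (hf : DifferentiableAt ℝ f x) (hg : DifferentiableAt ℝ g x) (i : Fin 2) :
    pd2 i (fun z => f z + g z) x = pd2 i f x + pd2 i g x := by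
  simp only [pd2, fderiv_fun_add hf hg]; rfl

lemma pd2_const_mul (hf : DifferentiableAt ℝ f x) (c : ℝ) (i : Fin 2) :
    pd2 i (fun z => c * f z) x = c * pd2 i f x := by
  simp only [pd2, fderiv_const_mul hf c]; rfl

lemma diffAt_coord (j : Fin 2) (x : Fin 2 → ℝ) :
    DifferentiableAt ℝ (fun z : Fin 2 → ℝ => z j) x :=
  (ContinuousLinearMap.proj j : (Fin 2 → ℝ) →L[ℝ] ℝ).differentiableAt

lemma pd2_coord_mul (hf : DifferentiableAt ℝ f x) (i j : Fin 2) :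
    pd2 i (fun z => z j * f z) x
      = (Pi.single i 1 : Fin 2 → ℝ) j * f x + x j * pd2 i f x := by
  have h1 : fderiv ℝ (fun z : Fin 2 → ℝ => z j) x
      = (ContinuousLinearMap.proj j : (Fin 2 → ℝ) →L[ℝ] ℝ) :=
    (ContinuousLinearMap.proj j : (Fin 2 → ℝ) →L[ℝ] ℝ).fderiv
  simp only [pd2, fderiv_fun_mul (diffAt_coord j x) hf]
  simp [h1]; ring

lemma pd2_comm (hf : ContDiffOn ℝ (⊤ : ℕ∞) f (U Z)) {x : Fin 2 → ℝ} (hx : x ∈ U Z)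
    (i j : Fin 2) : pd2 i (pd2 j f) x = pd2 j (pd2 i f) x := by
  have hca : ContDiffAt ℝ (⊤ : ℕ∞) f x := (hf x hx).contDiffAt ((isOpen_U Z).mem_nhds hx)
  have hsym : IsSymmSndFDerivAt ℝ f x := hca.isSymmSndFDerivAt (by rw [minSmoothness_of_isRCLikeNormedField]; exact WithTop.coe_le_coe.mpr le_top)
  have hdf : DifferentiableAt ℝ (fderiv ℝ f) x :=
    (hca.fderiv_right (m := (⊤ : ℕ∞)) (by exact_mod_cast le_top)).differentiableAt (by simp)
  have key : ∀ u v : Fin 2 → ℝ,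
      fderiv ℝ (fun z => fderiv ℝ f z u) x v = fderiv ℝ (fderiv ℝ f) x v u := by
    intro u v
    rw [fderiv_clm_apply hdf (differentiableAt_const u)]
    simp
  have e1 : pd2 i (pd2 j f) x
      = fderiv ℝ (fderiv ℝ f) x (Pi.single i 1) (Pi.single j 1) := key _ _
  have e2 : pd2 j (pd2 i f) x
      = fderiv ℝ (fderiv ℝ f) x (Pi.single j 1) (Pi.single i 1) := key _ _
  rw [e1, e2]
  exact hsym _ _
end Aux18
section C3
open Real Set Function
namespace Aux18
variable {Z : ℝ} {f g : (Fin 2 → ℝ) → ℝ}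

lemma contDiffOn_coord (j : Fin 2) : ContDiffOn ℝ (⊤ : ℕ∞) (fun z : Fin 2 → ℝ => z j) (U Z) :=
  ((ContinuousLinearMap.proj j : (Fin 2 → ℝ) →L[ℝ] ℝ).contDiff).contDiffOn

lemma contDiffOn_iter (hf : ContDiffOn ℝ (⊤ : ℕ∞) f (U Z)) (i : Fin 2) (n : ℕ) :
    ContDiffOn ℝ (⊤ : ℕ∞) ((pd2 i)^[n] f) (U Z) := by
  induction n with
  | zero => exact hf
  | succ n ih => rw [Function.iterate_succ']; exact contDiffOn_pd2 ih i

lemma iter_congr (h : EqOn f g (U Z)) (i : Fin 2) (n : ℕ) :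
    EqOn ((pd2 i)^[n] f) ((pd2 i)^[n] g) (U Z) := by
  induction n with
  | zero => exact h
  | succ n ih =>
    rw [Function.iterate_succ']
    intro x hx
    simp only [Function.comp_apply]
    exact pd2_congr ih hx i

lemma iter_add (hf : ContDiffOn ℝ (⊤ : ℕ∞) f (U Z)) (hg : ContDiffOn ℝ (⊤ : ℕ∞) g (U Z))
    (i : Fin 2) (n : ℕ) {x : Fin 2 → ℝ} (hx : x ∈ U Z) :
    (pd2 i)^[n] (fun z => f z + g z) x = (pd2 i)^[n] f x + (pd2 i)^[n] g x := by
  induction n generalizing x with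
  | zero => rfl
  | succ n ih =>
    rw [Function.iterate_succ']
    simp only [Function.comp_apply]
    have h1 : EqOn ((pd2 i)^[n] (fun z => f z + g z))
        (fun z => (pd2 i)^[n] f z + (pd2 i)^[n] g z) (U Z) := fun z hz => ih hz
    calc pd2 i ((pd2 i)^[n] (fun z => f z + g z)) x
        = pd2 i (fun z => (pd2 i)^[n] f z + (pd2 i)^[n] g z) x := pd2_congr h1 hx i
      _ = _ := pd2_add (diffAt (contDiffOn_iter hf i n) hx)
            (diffAt (contDiffOn_iter hg i n) hx) i

lemma iter_sub (hf : ContDiffOn ℝ (⊤ : ℕ∞) f (U Z)) (hg : ContDiffOn ℝ (⊤ : ℕ∞) g (U Z))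
    (i : Fin 2) (n : ℕ) {x : Fin 2 → ℝ} (hx : x ∈ U Z) :
    (pd2 i)^[n] (fun z => f z - g z) x = (pd2 i)^[n] f x - (pd2 i)^[n] g x := by
  induction n generalizing x with
  | zero => rfl
  | succ n ih =>
    rw [Function.iterate_succ']
    simp only [Function.comp_apply]
    have h1 : EqOn ((pd2 i)^[n] (fun z => f z - g z))
        (fun z => (pd2 i)^[n] f z - (pd2 i)^[n] g z) (U Z) := fun z hz => ih hz
    have h2 : pd2 i (fun z => (pd2 i)^[n] f z - (pd2 i)^[n] g z) x
        = pd2 i ((pd2 i)^[n] f) x - pd2 i ((pd2 i)^[n] g) x := by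
      simp only [pd2, fderiv_fun_sub (diffAt (contDiffOn_iter hf i n) hx)
        (diffAt (contDiffOn_iter hg i n) hx)]
      rfl
    rw [pd2_congr h1 hx i, h2]

lemma iter_comm (hf : ContDiffOn ℝ (⊤ : ℕ∞) f (U Z)) (n : ℕ) {x : Fin 2 → ℝ} (hx : x ∈ U Z) :
    (pd2 1)^[n] (pd2 0 f) x = pd2 0 ((pd2 1)^[n] f) x := by
  induction n generalizing x with
  | zero => rfl
  | succ n ih =>
    rw [Function.iterate_succ']
    simp only [Function.comp_apply]
    have h1 : EqOn ((pd2 1)^[n] (pd2 0 f)) (pd2 0 ((pd2 1)^[n] f)) (U Z) :=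
      fun z hz => ih hz
    calc pd2 1 ((pd2 1)^[n] (pd2 0 f)) x
        = pd2 1 (pd2 0 ((pd2 1)^[n] f)) x := pd2_congr h1 hx 1
      _ = pd2 0 (pd2 1 ((pd2 1)^[n] f)) x := pd2_comm (contDiffOn_iter hf 1 n) hx 1 0

lemma contDiffOn_coord_mul (hf : ContDiffOn ℝ (⊤ : ℕ∞) f (U Z)) (j : Fin 2) :
    ContDiffOn ℝ (⊤ : ℕ∞) (fun z => z j * f z) (U Z) :=
  (contDiffOn_coord j).mul hf

/-- iterating direction i on (coordinate j) * f, with i ≠ j -/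
lemma iter_coord_mul_other (hf : ContDiffOn ℝ (⊤ : ℕ∞) f (U Z)) {i j : Fin 2} (hij : i ≠ j)
    (n : ℕ) {x : Fin 2 → ℝ} (hx : x ∈ U Z) :
    (pd2 i)^[n] (fun z => z j * f z) x = x j * (pd2 i)^[n] f x := by
  induction n generalizing x with
  | zero => rfl
  | succ n ih =>
    rw [Function.iterate_succ']
    simp only [Function.comp_apply]
    have h1 : EqOn ((pd2 i)^[n] (fun z => z j * f z))
        (fun z => z j * (pd2 i)^[n] f z) (U Z) := fun z hz => ih hz
    calc pd2 i ((pd2 i)^[n] (fun z => z j * f z)) x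
        = pd2 i (fun z => z j * (pd2 i)^[n] f z) x := pd2_congr h1 hx i
      _ = (Pi.single i 1 : Fin 2 → ℝ) j * (pd2 i)^[n] f x
          + x j * pd2 i ((pd2 i)^[n] f) x :=
        pd2_coord_mul (diffAt (contDiffOn_iter hf i n) hx) i j
      _ = x j * pd2 i ((pd2 i)^[n] f) x := by
          rw [Pi.single_eq_of_ne' hij]; ring

/-- iterating direction i on (coordinate i) * f -/
lemma iter_coord_mul_same (hf : ContDiffOn ℝ (⊤ : ℕ∞) f (U Z)) (i : Fin 2)
    (n : ℕ) {x : Fin 2 → ℝ} (hx : x ∈ U Z) :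
    (pd2 i)^[n] (fun z => z i * f z) x
      = x i * (pd2 i)^[n] f x + (n : ℝ) * (pd2 i)^[n-1] f x := by
  induction n generalizing x with
  | zero => simp
  | succ n ih =>
    rw [Function.iterate_succ']
    simp only [Function.comp_apply, Nat.add_sub_cancel]
    have h1 : EqOn ((pd2 i)^[n] (fun z => z i * f z))
        (fun z => z i * (pd2 i)^[n] f z + (n : ℝ) * (pd2 i)^[n-1] f z) (U Z) :=
      fun z hz => ih hz
    have hF := contDiffOn_iter hf i n
    have hG := contDiffOn_iter hf i (n-1)
    have step1 : pd2 i ((pd2 i)^[n] (fun z => z i * f z)) x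
        = pd2 i (fun z => z i * (pd2 i)^[n] f z + (n : ℝ) * (pd2 i)^[n-1] f z) x :=
      pd2_congr h1 hx i
    have step2 : pd2 i (fun z => z i * (pd2 i)^[n] f z + (n : ℝ) * (pd2 i)^[n-1] f z) x
        = ((Pi.single i 1 : Fin 2 → ℝ) i * (pd2 i)^[n] f x
            + x i * pd2 i ((pd2 i)^[n] f) x)
          + (n : ℝ) * pd2 i ((pd2 i)^[n-1] f) x := by
      rw [pd2_add ((diffAt (contDiffOn_coord_mul hF i) hx))
          ((diffAt hG hx).const_mul _) i,
        pd2_coord_mul (diffAt hF hx) i i,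
        pd2_const_mul (diffAt hG hx) _ i]
    have single_ii : (Pi.single i 1 : Fin 2 → ℝ) i = 1 := Pi.single_eq_same i 1
    have hpred : (n : ℝ) * pd2 i ((pd2 i)^[n-1] f) x = (n : ℝ) * (pd2 i)^[n] f x := by
      cases n with
      | zero => simp
      | succ m =>
        have : pd2 i ((pd2 i)^[m+1-1] f) x = (pd2 i)^[m+1] f x := by
          simp only [Nat.add_sub_cancel]
          rw [Function.iterate_succ']; rfl
        rw [this]
    rw [step1, step2, single_ii, hpred]
    push_cast
    ring
end Aux18
end C3
section C4
open Real Set Function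
namespace Aux18
variable {Z : ℝ} {f g : (Fin 2 → ℝ) → ℝ}

lemma iter_const_mul (hf : ContDiffOn ℝ (⊤ : ℕ∞) f (U Z)) (c : ℝ)
    (i : Fin 2) (n : ℕ) {x : Fin 2 → ℝ} (hx : x ∈ U Z) :
    (pd2 i)^[n] (fun z => c * f z) x = c * (pd2 i)^[n] f x := by
  induction n generalizing x with
  | zero => rfl
  | succ n ih =>
    rw [Function.iterate_succ']
    simp only [Function.comp_apply]
    have h1 : EqOn ((pd2 i)^[n] (fun z => c * f z))
        (fun z => c * (pd2 i)^[n] f z) (U Z) := fun z hz => ih hz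
    rw [pd2_congr h1 hx i, pd2_const_mul (diffAt (contDiffOn_iter hf i n) hx) c i]

/-- The operator `A = x₁∂₁ + x₂∂₂` (τ-derivative in log-polar coordinates). -/
noncomputable def Aop (f : (Fin 2 → ℝ) → ℝ) : (Fin 2 → ℝ) → ℝ :=
  fun x => x 0 * pd2 0 f x + x 1 * pd2 1 f x

/-- The operator `B = x₁∂₂ - x₂∂₁` (θ-derivative in log-polar coordinates). -/
noncomputable def Bop (f : (Fin 2 → ℝ) → ℝ) : (Fin 2 → ℝ) → ℝ :=
  fun x => x 0 * pd2 1 f x - x 1 * pd2 0 f x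

lemma contDiffOn_Aop (hf : ContDiffOn ℝ (⊤ : ℕ∞) f (U Z)) :
    ContDiffOn ℝ (⊤ : ℕ∞) (Aop f) (U Z) :=
  ((contDiffOn_coord 0).mul (contDiffOn_pd2 hf 0)).add
    ((contDiffOn_coord 1).mul (contDiffOn_pd2 hf 1))

lemma contDiffOn_Bop (hf : ContDiffOn ℝ (⊤ : ℕ∞) f (U Z)) :
    ContDiffOn ℝ (⊤ : ℕ∞) (Bop f) (U Z) :=
  ((contDiffOn_coord 0).mul (contDiffOn_pd2 hf 1)).sub
    ((contDiffOn_coord 1).mul (contDiffOn_pd2 hf 0))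

lemma Dop2_eq (a b : ℕ) (f : (Fin 2 → ℝ) → ℝ) :
    Dop2 a b f = (pd2 0)^[a] ((pd2 1)^[b] f) := rfl

/-- Formula for `Dop2 a b (Aop f)` on `U Z`. -/
lemma Dop2_Aop (hf : ContDiffOn ℝ (⊤ : ℕ∞) f (U Z)) (a b : ℕ) {x : Fin 2 → ℝ}
    (hx : x ∈ U Z) :
    Dop2 a b (Aop f) x
      = x 0 * Dop2 (a+1) b f x + (a : ℝ) * Dop2 a b f x
        + x 1 * Dop2 a (b+1) f x + (b : ℝ) * Dop2 a b f x := by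
  have hp0 := contDiffOn_pd2 hf 0
  have hp1 := contDiffOn_pd2 hf 1
  have ht1 : ContDiffOn ℝ (⊤ : ℕ∞) (fun z => z 0 * pd2 0 f z) (U Z) :=
    contDiffOn_coord_mul hp0 0
  have ht2 : ContDiffOn ℝ (⊤ : ℕ∞) (fun z => z 1 * pd2 1 f z) (U Z) :=
    contDiffOn_coord_mul hp1 1
  -- step 1 : apply (pd2 1)^[b]
  have hb : EqOn ((pd2 1)^[b] (Aop f))
      (fun z => z 0 * pd2 0 ((pd2 1)^[b] f) z
        + (z 1 * (pd2 1)^[b+1] f z + (b : ℝ) * (pd2 1)^[b] f z)) (U Z) := by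
    intro z hz
    have e1 : (pd2 1)^[b] (Aop f) z
        = (pd2 1)^[b] (fun w => w 0 * pd2 0 f w) z
          + (pd2 1)^[b] (fun w => w 1 * pd2 1 f w) z := iter_add ht1 ht2 1 b hz
    have e2 : (pd2 1)^[b] (fun w => w 0 * pd2 0 f w) z
        = z 0 * (pd2 1)^[b] (pd2 0 f) z :=
      iter_coord_mul_other hp0 (by decide) b hz
    have e3 : (pd2 1)^[b] (pd2 0 f) z = pd2 0 ((pd2 1)^[b] f) z := iter_comm hf b hz
    have e4 : (pd2 1)^[b] (fun w => w 1 * pd2 1 f w) z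
        = z 1 * (pd2 1)^[b] (pd2 1 f) z + (b : ℝ) * (pd2 1)^[b-1] (pd2 1 f) z :=
      iter_coord_mul_same hp1 1 b hz
    have e5 : (pd2 1)^[b] (pd2 1 f) z = (pd2 1)^[b+1] f z :=
      (Function.iterate_succ_apply (pd2 1) b f ▸ rfl)
    have e6 : (b : ℝ) * (pd2 1)^[b-1] (pd2 1 f) z = (b : ℝ) * (pd2 1)^[b] f z := by
      cases b with
      | zero => simp
      | succ m => rfl
    simp only [e1, e2, e3, e4, e5, e6]
  -- step 2 : apply (pd2 0)^[a]
  have hF : ContDiffOn ℝ (⊤ : ℕ∞) (pd2 0 ((pd2 1)^[b] f)) (U Z) :=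
    contDiffOn_pd2 (contDiffOn_iter hf 1 b) 0
  have hG : ContDiffOn ℝ (⊤ : ℕ∞) ((pd2 1)^[b+1] f) (U Z) := contDiffOn_iter hf 1 (b+1)
  have hH : ContDiffOn ℝ (⊤ : ℕ∞) ((pd2 1)^[b] f) (U Z) := contDiffOn_iter hf 1 b
  have hAb : ContDiffOn ℝ (⊤ : ℕ∞) ((pd2 1)^[b] (Aop f)) (U Z) :=
    contDiffOn_iter (contDiffOn_Aop hf) 1 b
  have key : Dop2 a b (Aop f) x
      = (pd2 0)^[a] (fun z => z 0 * pd2 0 ((pd2 1)^[b] f) z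
        + (z 1 * (pd2 1)^[b+1] f z + (b : ℝ) * (pd2 1)^[b] f z)) x :=
    iter_congr hb 0 a hx
  rw [key]
  have hs1 : ContDiffOn ℝ (⊤ : ℕ∞) (fun z => z 0 * pd2 0 ((pd2 1)^[b] f) z) (U Z) :=
    contDiffOn_coord_mul hF 0
  have hs2 : ContDiffOn ℝ (⊤ : ℕ∞) (fun z => z 1 * (pd2 1)^[b+1] f z) (U Z) :=
    contDiffOn_coord_mul hG 1
  have hs3 : ContDiffOn ℝ (⊤ : ℕ∞) (fun z => (b : ℝ) * (pd2 1)^[b] f z) (U Z) :=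
    contDiffOn_const.mul hH
  rw [iter_add hs1 (hs2.add hs3) 0 a hx, iter_add hs2 hs3 0 a hx,
    iter_coord_mul_same hF 0 a hx, iter_coord_mul_other hG (by decide) a hx,
    iter_const_mul hH ((b : ℝ)) 0 a hx]
  have k1 : (pd2 0)^[a] (pd2 0 ((pd2 1)^[b] f)) x = Dop2 (a+1) b f x := by
    rw [Dop2_eq, ← Function.iterate_succ_apply]
  have k2 : (a : ℝ) * (pd2 0)^[a-1] (pd2 0 ((pd2 1)^[b] f)) x = (a : ℝ) * Dop2 a b f x := by
    cases a with
    | zero => simp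
    | succ m => rfl
  rw [k1, k2]
  have k3 : (pd2 0)^[a] ((pd2 1)^[b+1] f) x = Dop2 a (b+1) f x := rfl
  have k4 : (pd2 0)^[a] ((pd2 1)^[b] f) x = Dop2 a b f x := rfl
  rw [k3, k4]
  ring

/-- Formula for `Dop2 a b (Bop f)` on `U Z`. -/
lemma Dop2_Bop (hf : ContDiffOn ℝ (⊤ : ℕ∞) f (U Z)) (a b : ℕ) {x : Fin 2 → ℝ}
    (hx : x ∈ U Z) :
    Dop2 a b (Bop f) x
      = (x 0 * Dop2 a (b+1) f x + (a : ℝ) * Dop2 (a-1) (b+1) f x)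
        - (x 1 * Dop2 (a+1) b f x + (b : ℝ) * Dop2 (a+1) (b-1) f x) := by
  have hp0 := contDiffOn_pd2 hf 0
  have hp1 := contDiffOn_pd2 hf 1
  have ht1 : ContDiffOn ℝ (⊤ : ℕ∞) (fun z => z 0 * pd2 1 f z) (U Z) :=
    contDiffOn_coord_mul hp1 0
  have ht2 : ContDiffOn ℝ (⊤ : ℕ∞) (fun z => z 1 * pd2 0 f z) (U Z) :=
    contDiffOn_coord_mul hp0 1
  -- step 1 : apply (pd2 1)^[b]
  have hb : EqOn ((pd2 1)^[b] (Bop f))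
      (fun z => z 0 * (pd2 1)^[b+1] f z
        - (z 1 * pd2 0 ((pd2 1)^[b] f) z + (b : ℝ) * pd2 0 ((pd2 1)^[b-1] f) z)) (U Z) := by
    intro z hz
    have e1 : (pd2 1)^[b] (Bop f) z
        = (pd2 1)^[b] (fun w => w 0 * pd2 1 f w) z
          - (pd2 1)^[b] (fun w => w 1 * pd2 0 f w) z := iter_sub ht1 ht2 1 b hz
    have e2 : (pd2 1)^[b] (fun w => w 0 * pd2 1 f w) z
        = z 0 * (pd2 1)^[b] (pd2 1 f) z :=
      iter_coord_mul_other hp1 (by decide) b hz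
    have e2' : (pd2 1)^[b] (pd2 1 f) z = (pd2 1)^[b+1] f z :=
      (Function.iterate_succ_apply (pd2 1) b f ▸ rfl)
    have e3 : (pd2 1)^[b] (fun w => w 1 * pd2 0 f w) z
        = z 1 * (pd2 1)^[b] (pd2 0 f) z + (b : ℝ) * (pd2 1)^[b-1] (pd2 0 f) z :=
      iter_coord_mul_same hp0 1 b hz
    have e4 : (pd2 1)^[b] (pd2 0 f) z = pd2 0 ((pd2 1)^[b] f) z := iter_comm hf b hz
    have e5 : (pd2 1)^[b-1] (pd2 0 f) z = pd2 0 ((pd2 1)^[b-1] f) z := iter_comm hf (b-1) hz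
    simp only [e1, e2, e2', e3, e4, e5]
  have hF : ContDiffOn ℝ (⊤ : ℕ∞) ((pd2 1)^[b+1] f) (U Z) := contDiffOn_iter hf 1 (b+1)
  have hG : ContDiffOn ℝ (⊤ : ℕ∞) (pd2 0 ((pd2 1)^[b] f)) (U Z) :=
    contDiffOn_pd2 (contDiffOn_iter hf 1 b) 0
  have hH : ContDiffOn ℝ (⊤ : ℕ∞) (pd2 0 ((pd2 1)^[b-1] f)) (U Z) :=
    contDiffOn_pd2 (contDiffOn_iter hf 1 (b-1)) 0
  have key : Dop2 a b (Bop f) x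
      = (pd2 0)^[a] (fun z => z 0 * (pd2 1)^[b+1] f z
        - (z 1 * pd2 0 ((pd2 1)^[b] f) z + (b : ℝ) * pd2 0 ((pd2 1)^[b-1] f) z)) x :=
    iter_congr hb 0 a hx
  rw [key]
  have hs1 : ContDiffOn ℝ (⊤ : ℕ∞) (fun z => z 0 * (pd2 1)^[b+1] f z) (U Z) :=
    contDiffOn_coord_mul hF 0
  have hs2 : ContDiffOn ℝ (⊤ : ℕ∞) (fun z => z 1 * pd2 0 ((pd2 1)^[b] f) z) (U Z) :=
    contDiffOn_coord_mul hG 1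
  have hs3 : ContDiffOn ℝ (⊤ : ℕ∞) (fun z => (b : ℝ) * pd2 0 ((pd2 1)^[b-1] f) z) (U Z) :=
    contDiffOn_const.mul hH
  rw [iter_sub hs1 (hs2.add hs3) 0 a hx, iter_add hs2 hs3 0 a hx,
    iter_coord_mul_same hF 0 a hx, iter_coord_mul_other hG (by decide) a hx,
    iter_const_mul hH ((b : ℝ)) 0 a hx]
  have k1 : (pd2 0)^[a] ((pd2 1)^[b+1] f) x = Dop2 a (b+1) f x := rfl
  have k2 : (a : ℝ) * (pd2 0)^[a-1] ((pd2 1)^[b+1] f) x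
      = (a : ℝ) * Dop2 (a-1) (b+1) f x := rfl
  have k3 : (pd2 0)^[a] (pd2 0 ((pd2 1)^[b] f)) x = Dop2 (a+1) b f x := by
    rw [Dop2_eq, ← Function.iterate_succ_apply]
  have k4 : (b : ℝ) * (pd2 0)^[a] (pd2 0 ((pd2 1)^[b-1] f)) x
      = (b : ℝ) * Dop2 (a+1) (b-1) f x := by
    cases b with
    | zero => simp
    | succ m => rfl
  rw [k1, k2, k3, k4]
  try ring
end Aux18
end C4
section C5
open Real Set Function
namespace Aux18

/-- `ra m n = (m+1)(m+2)⋯(m+n)`. -/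
def ra (m : ℕ) : ℕ → ℕ
  | 0 => 1
  | (n+1) => (m + n + 1) * ra m n

lemma ra_succ (m n : ℕ) : ra m (n+1) = (m + n + 1) * ra m n := rfl

lemma ra_shift (m n : ℕ) : (m+1) * ra (m+1) n = (m+n+1) * ra m n := by
  induction n with
  | zero => simp [ra]
  | succ n ih =>
    show (m+1) * ((m+1+n+1) * ra (m+1) n) = (m+(n+1)+1) * ((m+n+1) * ra m n)
    rw [← ih]; ring

lemma ra_key {k m : ℕ} (h : k + 1 ≤ m + 1) (n : ℕ) :
    (k+1) * ra (m+1) n ≤ (m+n+1) * ra m n := by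
  calc (k+1) * ra (m+1) n ≤ (m+1) * ra (m+1) n := Nat.mul_le_mul_right _ h
    _ = (m+n+1) * ra m n := ra_shift m n

lemma ra_zero_eq (n : ℕ) : ra 0 n = Nat.factorial n := by
  induction n with
  | zero => rfl
  | succ n ih => show (0+n+1) * ra 0 n = (n+1) * n.factorial; rw [ih]; ring

lemma abs_coord_le (x : Fin 2 → ℝ) (j : Fin 2) : |x j| ≤ rad2 x := by
  rw [← Real.sqrt_sq_eq_abs]
  apply Real.sqrt_le_sqrt
  fin_cases j <;> simp <;> nlinarith [sq_nonneg (x 0), sq_nonneg (x 1)]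

/-- The Gevrey-type bound class with weight `r^{1-β}` after `n` applications of `A`/`B`. -/
def GB (β Z C d : ℝ) (n : ℕ) (g : (Fin 2 → ℝ) → ℝ) : Prop :=
  ∀ a b : ℕ, ∀ x : Fin 2 → ℝ, x ∈ U Z →
    |Dop2 a b g x| ≤ C * (2*d+2)^n * d^(a+b) *
      ((ra (a+b) n * (Nat.factorial a * Nat.factorial b) : ℕ) : ℝ) *
      rad2 x ^ (1 - β - (a:ℝ) - (b:ℝ))

variable {β Z C d : ℝ} {g : (Fin 2 → ℝ) → ℝ} {n : ℕ}

lemma rpow_shift {ρ : ℝ} (hρ : 0 < ρ) (e : ℝ) : ρ ^ (e - 1) * ρ = ρ ^ e := by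
  nth_rewrite 2 [← Real.rpow_one ρ]
  rw [← Real.rpow_add hρ]
  norm_num

lemma term_rho {Cc dd ρ e T : ℝ} (hCc : 0 ≤ Cc) (hdd : 0 ≤ dd) (hρ : 0 < ρ)
    {N1 N2 : ℕ} (hN : N1 ≤ N2)
    (hT : |T| ≤ Cc * dd * (N1 : ℝ) * ρ ^ (e - 1)) :
    ρ * |T| ≤ Cc * dd * (N2 : ℝ) * ρ ^ e := by
  have h0 : 0 ≤ ρ ^ e := Real.rpow_nonneg hρ.le e
  calc ρ * |T| ≤ ρ * (Cc * dd * (N1:ℝ) * ρ ^ (e-1)) :=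
        mul_le_mul_of_nonneg_left hT hρ.le
    _ = Cc * dd * (N1:ℝ) * (ρ ^ (e-1) * ρ) := by ring
    _ = Cc * dd * (N1:ℝ) * ρ ^ e := by rw [rpow_shift hρ]
    _ ≤ Cc * dd * (N2:ℝ) * ρ ^ e := by
        apply mul_le_mul_of_nonneg_right _ h0
        apply mul_le_mul_of_nonneg_left _ (mul_nonneg hCc hdd)
        exact_mod_cast hN

lemma term_flat {Cc ρe T : ℝ} (hCc : 0 ≤ Cc) (hρe : 0 ≤ ρe) (c : ℕ)
    {N1 N2 : ℕ} (hN : c * N1 ≤ N2)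
    (hT : |T| ≤ Cc * (N1 : ℝ) * ρe) :
    (c : ℝ) * |T| ≤ Cc * (N2 : ℝ) * ρe := by
  calc (c:ℝ) * |T| ≤ (c:ℝ) * (Cc * (N1:ℝ) * ρe) :=
        mul_le_mul_of_nonneg_left hT (Nat.cast_nonneg c)
    _ = Cc * ((c * N1 : ℕ) : ℝ) * ρe := by push_cast; ring
    _ ≤ Cc * (N2:ℝ) * ρe := by
        apply mul_le_mul_of_nonneg_right _ hρe
        exact mul_le_mul_of_nonneg_left (by exact_mod_cast hN) hCc

lemma step_A (hC : 0 ≤ C) (hd : 1 ≤ d) (hg : ContDiffOn ℝ (⊤ : ℕ∞) g (U Z))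
    (hgb : GB β Z C d n g) : GB β Z C d (n+1) (Aop g) := by
  have hd0 : (0:ℝ) ≤ d := le_trans zero_le_one hd
  have hM : (0:ℝ) ≤ 2*d+2 := by linarith
  intro a b x hx
  have hρ : 0 < rad2 x := hx.1
  have hCc : (0:ℝ) ≤ C * (2*d+2)^n * d^(a+b) :=
    mul_nonneg (mul_nonneg hC (pow_nonneg hM n)) (pow_nonneg hd0 (a+b))
  have hρe : (0:ℝ) ≤ rad2 x ^ (1 - β - (a:ℝ) - (b:ℝ)) :=
    Real.rpow_nonneg hρ.le _
  -- the four derivative bounds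
  have h1 := hgb (a+1) b x hx
  rw [show (a+1)+b = (a+b)+1 by omega] at h1
  rw [show (1:ℝ) - β - ((a+1:ℕ):ℝ) - (b:ℝ) = (1 - β - (a:ℝ) - (b:ℝ)) - 1 by
    push_cast; ring] at h1
  rw [show C * (2*d+2)^n * d^((a+b)+1) = (C * (2*d+2)^n * d^(a+b)) * d by
    rw [pow_succ]; ring] at h1
  have nk1 : ra ((a+b)+1) n * (Nat.factorial (a+1) * Nat.factorial b)
      ≤ (a+b+n+1) * (ra (a+b) n * (Nat.factorial a * Nat.factorial b)) := by
    calc ra ((a+b)+1) n * (Nat.factorial (a+1) * Nat.factorial b)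
        = ((a+1) * ra ((a+b)+1) n) * (Nat.factorial a * Nat.factorial b) := by
          rw [Nat.factorial_succ]; ring
      _ ≤ ((a+b+n+1) * ra (a+b) n) * (Nat.factorial a * Nat.factorial b) :=
          Nat.mul_le_mul_right _ (ra_key (by omega) n)
      _ = (a+b+n+1) * (ra (a+b) n * (Nat.factorial a * Nat.factorial b)) := by ring
  have T1 := term_rho (mul_nonneg (mul_nonneg hC (pow_nonneg hM n)) (pow_nonneg hd0 (a+b)))
    hd0 hρ nk1 h1
  have h3 := hgb a (b+1) x hx
  rw [show a+(b+1) = (a+b)+1 by omega] at h3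
  rw [show (1:ℝ) - β - (a:ℝ) - ((b+1:ℕ):ℝ) = (1 - β - (a:ℝ) - (b:ℝ)) - 1 by
    push_cast; ring] at h3
  rw [show C * (2*d+2)^n * d^((a+b)+1) = (C * (2*d+2)^n * d^(a+b)) * d by
    rw [pow_succ]; ring] at h3
  have nk3 : ra ((a+b)+1) n * (Nat.factorial a * Nat.factorial (b+1))
      ≤ (a+b+n+1) * (ra (a+b) n * (Nat.factorial a * Nat.factorial b)) := by
    calc ra ((a+b)+1) n * (Nat.factorial a * Nat.factorial (b+1))
        = ((b+1) * ra ((a+b)+1) n) * (Nat.factorial a * Nat.factorial b) := by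
          rw [Nat.factorial_succ]; ring
      _ ≤ ((a+b+n+1) * ra (a+b) n) * (Nat.factorial a * Nat.factorial b) :=
          Nat.mul_le_mul_right _ (ra_key (by omega) n)
      _ = (a+b+n+1) * (ra (a+b) n * (Nat.factorial a * Nat.factorial b)) := by ring
  have T3 := term_rho (mul_nonneg (mul_nonneg hC (pow_nonneg hM n)) (pow_nonneg hd0 (a+b)))
    hd0 hρ nk3 h3
  have h2 := hgb a b x hx
  have nk2 : a * (ra (a+b) n * (Nat.factorial a * Nat.factorial b))
      ≤ (a+b+n+1) * (ra (a+b) n * (Nat.factorial a * Nat.factorial b)) :=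
    Nat.mul_le_mul_right _ (by omega)
  have T2 := term_flat hCc hρe a nk2 h2
  have nk4 : b * (ra (a+b) n * (Nat.factorial a * Nat.factorial b))
      ≤ (a+b+n+1) * (ra (a+b) n * (Nat.factorial a * Nat.factorial b)) :=
    Nat.mul_le_mul_right _ (by omega)
  have T4 := term_flat hCc hρe b nk4 h2
  rw [Dop2_Aop hg a b hx]
  have habs : |x 0 * Dop2 (a+1) b g x + (a:ℝ) * Dop2 a b g x
        + x 1 * Dop2 a (b+1) g x + (b:ℝ) * Dop2 a b g x|
      ≤ rad2 x * |Dop2 (a+1) b g x| + (a:ℝ) * |Dop2 a b g x|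
        + rad2 x * |Dop2 a (b+1) g x| + (b:ℝ) * |Dop2 a b g x| := by
    have c0 := abs_coord_le x 0
    have c1 := abs_coord_le x 1
    have d1 := abs_nonneg (Dop2 (a+1) b g x)
    have d2 := abs_nonneg (Dop2 a b g x)
    have d3 := abs_nonneg (Dop2 a (b+1) g x)
    calc |x 0 * Dop2 (a+1) b g x + (a:ℝ) * Dop2 a b g x
          + x 1 * Dop2 a (b+1) g x + (b:ℝ) * Dop2 a b g x|
        ≤ |x 0 * Dop2 (a+1) b g x + (a:ℝ) * Dop2 a b g x + x 1 * Dop2 a (b+1) g x|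
          + |(b:ℝ) * Dop2 a b g x| := abs_add_le _ _
      _ ≤ (|x 0 * Dop2 (a+1) b g x + (a:ℝ) * Dop2 a b g x| + |x 1 * Dop2 a (b+1) g x|)
          + |(b:ℝ) * Dop2 a b g x| := by
          exact add_le_add_left (abs_add_le _ _) _
      _ ≤ ((|x 0 * Dop2 (a+1) b g x| + |(a:ℝ) * Dop2 a b g x|) + |x 1 * Dop2 a (b+1) g x|)
          + |(b:ℝ) * Dop2 a b g x| := by
          exact add_le_add_left (add_le_add_left (abs_add_le _ _) _) _
      _ = |x 0| * |Dop2 (a+1) b g x| + (a:ℝ) * |Dop2 a b g x|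
          + |x 1| * |Dop2 a (b+1) g x| + (b:ℝ) * |Dop2 a b g x| := by
          rw [abs_mul, abs_mul, abs_mul, abs_mul, Nat.abs_cast, Nat.abs_cast]
      _ ≤ _ := by
          apply add_le_add (add_le_add (add_le_add _ le_rfl) _) le_rfl
          · exact mul_le_mul_of_nonneg_right c0 d1
          · exact mul_le_mul_of_nonneg_right c1 d3
  refine le_trans habs ?_
  refine le_trans (add_le_add (add_le_add (add_le_add T1 T2) T3) T4) ?_
  apply le_of_eq
  rw [ra_succ]
  push_cast
  ring

lemma step_B (hC : 0 ≤ C) (hd : 1 ≤ d) (hg : ContDiffOn ℝ (⊤ : ℕ∞) g (U Z))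
    (hgb : GB β Z C d n g) : GB β Z C d (n+1) (Bop g) := by
  have hd0 : (0:ℝ) ≤ d := le_trans zero_le_one hd
  have hM : (0:ℝ) ≤ 2*d+2 := by linarith
  intro a b x hx
  have hρ : 0 < rad2 x := hx.1
  have hCc : (0:ℝ) ≤ C * (2*d+2)^n * d^(a+b) :=
    mul_nonneg (mul_nonneg hC (pow_nonneg hM n)) (pow_nonneg hd0 (a+b))
  have hρe : (0:ℝ) ≤ rad2 x ^ (1 - β - (a:ℝ) - (b:ℝ)) :=
    Real.rpow_nonneg hρ.le _
  -- term 1 : x 0 * Dop2 a (b+1)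
  have h1 := hgb a (b+1) x hx
  rw [show a+(b+1) = (a+b)+1 by omega] at h1
  rw [show (1:ℝ) - β - (a:ℝ) - ((b+1:ℕ):ℝ) = (1 - β - (a:ℝ) - (b:ℝ)) - 1 by
    push_cast; ring] at h1
  rw [show C * (2*d+2)^n * d^((a+b)+1) = (C * (2*d+2)^n * d^(a+b)) * d by
    rw [pow_succ]; ring] at h1
  have nk1 : ra ((a+b)+1) n * (Nat.factorial a * Nat.factorial (b+1))
      ≤ (a+b+n+1) * (ra (a+b) n * (Nat.factorial a * Nat.factorial b)) := by
    calc ra ((a+b)+1) n * (Nat.factorial a * Nat.factorial (b+1))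
        = ((b+1) * ra ((a+b)+1) n) * (Nat.factorial a * Nat.factorial b) := by
          rw [Nat.factorial_succ]; ring
      _ ≤ ((a+b+n+1) * ra (a+b) n) * (Nat.factorial a * Nat.factorial b) :=
          Nat.mul_le_mul_right _ (ra_key (by omega) n)
      _ = _ := by ring
  have T1 := term_rho hCc hd0 hρ nk1 h1
  -- term 3 : x 1 * Dop2 (a+1) b
  have h3 := hgb (a+1) b x hx
  rw [show (a+1)+b = (a+b)+1 by omega] at h3
  rw [show (1:ℝ) - β - ((a+1:ℕ):ℝ) - (b:ℝ) = (1 - β - (a:ℝ) - (b:ℝ)) - 1 by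
    push_cast; ring] at h3
  rw [show C * (2*d+2)^n * d^((a+b)+1) = (C * (2*d+2)^n * d^(a+b)) * d by
    rw [pow_succ]; ring] at h3
  have nk3 : ra ((a+b)+1) n * (Nat.factorial (a+1) * Nat.factorial b)
      ≤ (a+b+n+1) * (ra (a+b) n * (Nat.factorial a * Nat.factorial b)) := by
    calc ra ((a+b)+1) n * (Nat.factorial (a+1) * Nat.factorial b)
        = ((a+1) * ra ((a+b)+1) n) * (Nat.factorial a * Nat.factorial b) := by
          rw [Nat.factorial_succ]; ring
      _ ≤ ((a+b+n+1) * ra (a+b) n) * (Nat.factorial a * Nat.factorial b) :=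
          Nat.mul_le_mul_right _ (ra_key (by omega) n)
      _ = _ := by ring
  have T3 := term_rho hCc hd0 hρ nk3 h3
  -- term 2 : (a:ℝ) * Dop2 (a-1) (b+1)
  have T2 : (a:ℝ) * |Dop2 (a-1) (b+1) g x|
      ≤ (C * (2*d+2)^n * d^(a+b))
        * (((a+b+n+1) * (ra (a+b) n * (Nat.factorial a * Nat.factorial b)) : ℕ) : ℝ)
        * rad2 x ^ (1 - β - (a:ℝ) - (b:ℝ)) := by
    cases a with
    | zero =>
      simp only [Nat.cast_zero, zero_mul]
      exact mul_nonneg (mul_nonneg hCc (Nat.cast_nonneg _)) (Real.rpow_nonneg hρ.le _)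
    | succ s =>
      have h2 := hgb s (b+1) x hx
      rw [show s+(b+1) = (s+1)+b by omega] at h2
      rw [show (1:ℝ) - β - (s:ℕ) - ((b+1:ℕ):ℝ) = 1 - β - ((s+1:ℕ):ℝ) - (b:ℝ) by
        push_cast; ring] at h2
      have nk2 : (s+1) * (ra ((s+1)+b) n * (Nat.factorial s * Nat.factorial (b+1)))
          ≤ ((s+1)+b+n+1) * (ra ((s+1)+b) n * (Nat.factorial (s+1) * Nat.factorial b)) := by
        calc (s+1) * (ra ((s+1)+b) n * (Nat.factorial s * Nat.factorial (b+1)))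
            = (b+1) * (ra ((s+1)+b) n * (Nat.factorial (s+1) * Nat.factorial b)) := by
              rw [Nat.factorial_succ s, Nat.factorial_succ b]; ring
          _ ≤ ((s+1)+b+n+1) * (ra ((s+1)+b) n * (Nat.factorial (s+1) * Nat.factorial b)) :=
              Nat.mul_le_mul_right _ (by omega)
      have := term_flat hCc hρe (s+1) nk2 h2
      simpa using this
  -- term 4 : (b:ℝ) * Dop2 (a+1) (b-1)
  have T4 : (b:ℝ) * |Dop2 (a+1) (b-1) g x|
      ≤ (C * (2*d+2)^n * d^(a+b))
        * (((a+b+n+1) * (ra (a+b) n * (Nat.factorial a * Nat.factorial b)) : ℕ) : ℝ)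
        * rad2 x ^ (1 - β - (a:ℝ) - (b:ℝ)) := by
    cases b with
    | zero =>
      simp only [Nat.cast_zero, zero_mul]
      exact mul_nonneg (mul_nonneg hCc (Nat.cast_nonneg _)) (Real.rpow_nonneg hρ.le _)
    | succ t =>
      have h2 := hgb (a+1) t x hx
      rw [show (a+1)+t = a+(t+1) by omega] at h2
      rw [show (1:ℝ) - β - ((a+1:ℕ):ℝ) - (t:ℕ) = 1 - β - (a:ℝ) - ((t+1:ℕ):ℝ) by
        push_cast; ring] at h2
      have nk4 : (t+1) * (ra (a+(t+1)) n * (Nat.factorial (a+1) * Nat.factorial t))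
          ≤ (a+(t+1)+n+1) * (ra (a+(t+1)) n * (Nat.factorial a * Nat.factorial (t+1))) := by
        calc (t+1) * (ra (a+(t+1)) n * (Nat.factorial (a+1) * Nat.factorial t))
            = (a+1) * (ra (a+(t+1)) n * (Nat.factorial a * Nat.factorial (t+1))) := by
              rw [Nat.factorial_succ a, Nat.factorial_succ t]; ring
          _ ≤ (a+(t+1)+n+1) * (ra (a+(t+1)) n * (Nat.factorial a * Nat.factorial (t+1))) :=
              Nat.mul_le_mul_right _ (by omega)
      have := term_flat hCc hρe (t+1) nk4 h2
      simpa using this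
  rw [Dop2_Bop hg a b hx]
  have habs : |(x 0 * Dop2 a (b+1) g x + (a:ℝ) * Dop2 (a-1) (b+1) g x)
        - (x 1 * Dop2 (a+1) b g x + (b:ℝ) * Dop2 (a+1) (b-1) g x)|
      ≤ (rad2 x * |Dop2 a (b+1) g x| + (a:ℝ) * |Dop2 (a-1) (b+1) g x|)
        + (rad2 x * |Dop2 (a+1) b g x| + (b:ℝ) * |Dop2 (a+1) (b-1) g x|) := by
    have c0 := abs_coord_le x 0
    have c1 := abs_coord_le x 1
    calc |(x 0 * Dop2 a (b+1) g x + (a:ℝ) * Dop2 (a-1) (b+1) g x)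
          - (x 1 * Dop2 (a+1) b g x + (b:ℝ) * Dop2 (a+1) (b-1) g x)|
        ≤ |x 0 * Dop2 a (b+1) g x + (a:ℝ) * Dop2 (a-1) (b+1) g x|
          + |x 1 * Dop2 (a+1) b g x + (b:ℝ) * Dop2 (a+1) (b-1) g x| := abs_sub _ _
      _ ≤ (|x 0 * Dop2 a (b+1) g x| + |(a:ℝ) * Dop2 (a-1) (b+1) g x|)
          + (|x 1 * Dop2 (a+1) b g x| + |(b:ℝ) * Dop2 (a+1) (b-1) g x|) :=
          add_le_add (abs_add_le _ _) (abs_add_le _ _)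
      _ = |x 0| * |Dop2 a (b+1) g x| + (a:ℝ) * |Dop2 (a-1) (b+1) g x|
          + (|x 1| * |Dop2 (a+1) b g x| + (b:ℝ) * |Dop2 (a+1) (b-1) g x|) := by
          rw [abs_mul, abs_mul, abs_mul, abs_mul, Nat.abs_cast, Nat.abs_cast]
      _ ≤ _ := by
          apply add_le_add (add_le_add _ le_rfl) (add_le_add _ le_rfl)
          · exact mul_le_mul_of_nonneg_right c0 (abs_nonneg _)
          · exact mul_le_mul_of_nonneg_right c1 (abs_nonneg _)
  refine le_trans habs ?_
  refine le_trans (add_le_add (add_le_add T1 T2) (add_le_add T3 T4)) ?_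
  apply le_of_eq
  rw [ra_succ]
  push_cast
  ring

end Aux18
end C5
section C6
open Real Set Function
namespace Aux18
variable {Z : ℝ} {f g : (Fin 2 → ℝ) → ℝ}

/-- The log-polar coordinate map. -/
noncomputable def Phi : (Fin 2 → ℝ) → (Fin 2 → ℝ) :=
  fun y => ![Real.exp (y 0) * Real.cos (y 1), Real.exp (y 0) * Real.sin (y 1)]

/-- The half-space `τ < log Z`. -/
def W (Z : ℝ) : Set (Fin 2 → ℝ) := {y | y 0 < Real.log Z}

lemma isOpen_W (Z : ℝ) : IsOpen (W Z) := by
  have : W Z = (fun y : Fin 2 → ℝ => y 0) ⁻¹' (Set.Iio (Real.log Z)) := rfl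
  rw [this]
  exact isOpen_Iio.preimage (continuous_apply 0)

lemma rad2_Phi (y : Fin 2 → ℝ) : rad2 (Phi y) = Real.exp (y 0) := by
  have h1 : Phi y 0 = Real.exp (y 0) * Real.cos (y 1) := rfl
  have h2 : Phi y 1 = Real.exp (y 0) * Real.sin (y 1) := rfl
  rw [rad2, h1, h2]
  have : (Real.exp (y 0) * Real.cos (y 1)) ^ 2 + (Real.exp (y 0) * Real.sin (y 1)) ^ 2
      = (Real.exp (y 0)) ^ 2 := by
    have := Real.sin_sq_add_cos_sq (y 1); nlinarith [this]
  rw [this, Real.sqrt_sq (Real.exp_nonneg _)]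

lemma Phi_mem (hZ : 0 < Z) {y : Fin 2 → ℝ} (hy : y ∈ W Z) : Phi y ∈ U Z := by
  constructor
  · rw [rad2_Phi]; exact Real.exp_pos _
  · rw [rad2_Phi]
    calc Real.exp (y 0) < Real.exp (Real.log Z) := Real.exp_lt_exp.mpr hy
      _ = Z := Real.exp_log hZ

/-- `pd2` is local: general open set version. -/
lemma pd2_congrO {O : Set (Fin 2 → ℝ)} (hO : IsOpen O) (h : EqOn f g O)
    {x : Fin 2 → ℝ} (hx : x ∈ O) (i : Fin 2) : pd2 i f x = pd2 i g x := by
  have : f =ᶠ[nhds x] g := Filter.eventuallyEq_of_mem (hO.mem_nhds hx) h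
  simp only [pd2, this.fderiv_eq]

lemma fin2_eval (hdf : DifferentiableAt ℝ f x) (w : Fin 2 → ℝ) :
    fderiv ℝ f x w = w 0 * pd2 0 f x + w 1 * pd2 1 f x := by
  have hw : w = w 0 • (Pi.single 0 1 : Fin 2 → ℝ) + w 1 • (Pi.single 1 1 : Fin 2 → ℝ) := by
    funext i
    fin_cases i <;> simp
  calc fderiv ℝ f x w
      = fderiv ℝ f x (w 0 • (Pi.single 0 1 : Fin 2 → ℝ)
          + w 1 • (Pi.single 1 1 : Fin 2 → ℝ)) := by rw [← hw]
    _ = w 0 * pd2 0 f x + w 1 * pd2 1 f x := by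
        rw [map_add, map_smul, map_smul]
        simp [pd2, smul_eq_mul]

/-- single chain-rule step in log-polar coordinates. -/
lemma pd_comp (hZ : 0 < Z) (hf : ContDiffOn ℝ (⊤ : ℕ∞) f (U Z)) {y : Fin 2 → ℝ}
    (hy : y ∈ W Z) :
    pd2 0 (fun z => f (Phi z)) y = Aop f (Phi y)
      ∧ pd2 1 (fun z => f (Phi z)) y = Bop f (Phi y) := by
  have hmem : Phi y ∈ U Z := Phi_mem hZ hy
  have hdf : DifferentiableAt ℝ f (Phi y) := diffAt hf hmem
  have h0 : HasFDerivAt (fun v : Fin 2 → ℝ => v 0)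
      (ContinuousLinearMap.proj 0 : (Fin 2 → ℝ) →L[ℝ] ℝ) y := hasFDerivAt_apply 0 y
  have h1 : HasFDerivAt (fun v : Fin 2 → ℝ => v 1)
      (ContinuousLinearMap.proj 1 : (Fin 2 → ℝ) →L[ℝ] ℝ) y := hasFDerivAt_apply 1 y
  have hexp := h0.exp
  have hcos := h1.cos
  have hsin := h1.sin
  have hA := hexp.mul hcos
  have hB := hexp.mul hsin
  set P0 : (Fin 2 → ℝ) →L[ℝ] ℝ := ContinuousLinearMap.proj 0
  set P1 : (Fin 2 → ℝ) →L[ℝ] ℝ := ContinuousLinearMap.proj 1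
  set L0 : (Fin 2 → ℝ) →L[ℝ] ℝ :=
    Real.exp (y 0) • (-Real.sin (y 1) • P1) + Real.cos (y 1) • (Real.exp (y 0) • P0)
  set L1 : (Fin 2 → ℝ) →L[ℝ] ℝ :=
    Real.exp (y 0) • (Real.cos (y 1) • P1) + Real.sin (y 1) • (Real.exp (y 0) • P0)
  set LL : (Fin 2 → ℝ) →L[ℝ] (Fin 2 → ℝ) := ContinuousLinearMap.pi ![L0, L1]
  have hΦ : HasFDerivAt Phi LL y := by
    apply hasFDerivAt_pi'.mpr
    intro i
    fin_cases i
    · have e1 : (fun x => Phi x 0) = fun x => Real.exp (x 0) * Real.cos (x 1) := rfl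
      have e2 : (ContinuousLinearMap.proj 0).comp LL = L0 := by
        rw [ContinuousLinearMap.proj_pi]; rfl
      rw [show ((⟨0, by norm_num⟩ : Fin 2)) = 0 from rfl, e1, e2]
      exact hA
    · have e1 : (fun x => Phi x 1) = fun x => Real.exp (x 0) * Real.sin (x 1) := rfl
      have e2 : (ContinuousLinearMap.proj 1).comp LL = L1 := by
        rw [ContinuousLinearMap.proj_pi]; rfl
      rw [show ((⟨1, by norm_num⟩ : Fin 2)) = 1 from rfl, e1, e2]
      exact hB
  have hcomp : HasFDerivAt (fun z => f (Phi z)) ((fderiv ℝ f (Phi y)).comp LL) y :=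
    (hdf.hasFDerivAt).comp y hΦ
  have hL0 : LL (Pi.single 0 1) = Phi y := by
    funext i
    fin_cases i <;>
      simp [LL, L0, L1, P0, P1, Phi, ContinuousLinearMap.pi_apply,
        ContinuousLinearMap.add_apply, ContinuousLinearMap.smul_apply,
        ContinuousLinearMap.proj_apply, smul_eq_mul] <;> ring
  have hL1 : LL (Pi.single 1 1) 0 = -(Phi y 1) ∧ LL (Pi.single 1 1) 1 = Phi y 0 := by
    constructor <;>
      simp [LL, L0, L1, P0, P1, Phi, ContinuousLinearMap.pi_apply,
        ContinuousLinearMap.add_apply, ContinuousLinearMap.smul_apply,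
        ContinuousLinearMap.proj_apply, smul_eq_mul] <;> ring
  constructor
  · show fderiv ℝ (fun z => f (Phi z)) y (Pi.single 0 1) = _
    rw [hcomp.fderiv]
    rw [ContinuousLinearMap.comp_apply, hL0, fin2_eval hdf]
    rfl
  · show fderiv ℝ (fun z => f (Phi z)) y (Pi.single 1 1) = _
    rw [hcomp.fderiv]
    rw [ContinuousLinearMap.comp_apply, fin2_eval hdf, hL1.1, hL1.2]
    show _ = Phi y 0 * pd2 1 f (Phi y) - Phi y 1 * pd2 0 f (Phi y)
    ring

lemma smooth_B_iter (hf : ContDiffOn ℝ (⊤ : ℕ∞) f (U Z)) (k : ℕ) :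
    ContDiffOn ℝ (⊤ : ℕ∞) (Bop^[k] f) (U Z) := by
  induction k with
  | zero => exact hf
  | succ k ih => rw [Function.iterate_succ']; exact contDiffOn_Bop ih

lemma smooth_A_iter (hf : ContDiffOn ℝ (⊤ : ℕ∞) f (U Z)) (k : ℕ) :
    ContDiffOn ℝ (⊤ : ℕ∞) (Aop^[k] f) (U Z) := by
  induction k with
  | zero => exact hf
  | succ k ih => rw [Function.iterate_succ']; exact contDiffOn_Aop ih

lemma comp_iter1 (hZ : 0 < Z) (hf : ContDiffOn ℝ (⊤ : ℕ∞) f (U Z)) (b : ℕ) :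
    EqOn ((pd2 1)^[b] (fun z => f (Phi z))) (fun z => (Bop^[b] f) (Phi z)) (W Z) := by
  induction b with
  | zero => exact fun y _ => rfl
  | succ b ih =>
    intro y hy
    rw [Function.iterate_succ']
    simp only [Function.comp_apply]
    calc pd2 1 ((pd2 1)^[b] (fun z => f (Phi z))) y
        = pd2 1 (fun z => (Bop^[b] f) (Phi z)) y := pd2_congrO (isOpen_W Z) ih hy 1
      _ = Bop (Bop^[b] f) (Phi y) := (pd_comp hZ (smooth_B_iter hf b) hy).2
      _ = (Bop^[b+1] f) (Phi y) := by rw [Function.iterate_succ_apply']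

lemma comp_iter0 (hZ : 0 < Z) (hg : ContDiffOn ℝ (⊤ : ℕ∞) g (U Z)) (a : ℕ) :
    EqOn ((pd2 0)^[a] (fun z => g (Phi z))) (fun z => (Aop^[a] g) (Phi z)) (W Z) := by
  induction a with
  | zero => exact fun y _ => rfl
  | succ a ih =>
    intro y hy
    rw [Function.iterate_succ']
    simp only [Function.comp_apply]
    calc pd2 0 ((pd2 0)^[a] (fun z => g (Phi z))) y
        = pd2 0 (fun z => (Aop^[a] g) (Phi z)) y := pd2_congrO (isOpen_W Z) ih hy 0
      _ = Aop (Aop^[a] g) (Phi y) := (pd_comp hZ (smooth_A_iter hg a) hy).1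
      _ = (Aop^[a+1] g) (Phi y) := by rw [Function.iterate_succ_apply']

lemma iter_congrO {O : Set (Fin 2 → ℝ)} (hO : IsOpen O) (h : EqOn f g O) (i : Fin 2) (n : ℕ) :
    EqOn ((pd2 i)^[n] f) ((pd2 i)^[n] g) O := by
  induction n with
  | zero => exact h
  | succ n ih =>
    rw [Function.iterate_succ']
    intro x hx
    exact pd2_congrO hO ih hx i

/-- Full composition identity: derivatives of `f ∘ Φ` are `A^a B^b f` composed with `Φ`. -/
lemma Dop2_comp (hZ : 0 < Z) (hf : ContDiffOn ℝ (⊤ : ℕ∞) f (U Z)) (a b : ℕ)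
    {y : Fin 2 → ℝ} (hy : y ∈ W Z) :
    Dop2 a b (fun z => f (Phi z)) y = (Aop^[a] (Bop^[b] f)) (Phi y) := by
  have h1 : EqOn ((pd2 0)^[a] ((pd2 1)^[b] (fun z => f (Phi z))))
      ((pd2 0)^[a] (fun z => (Bop^[b] f) (Phi z))) (W Z) :=
    iter_congrO (isOpen_W Z) (comp_iter1 hZ hf b) 0 a
  calc Dop2 a b (fun z => f (Phi z))  y
      = (pd2 0)^[a] (fun z => (Bop^[b] f) (Phi z)) y := h1 hy
    _ = (Aop^[a] (Bop^[b] f)) (Phi y) := comp_iter0 hZ (smooth_B_iter hf b) a hy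

lemma factorial_add_le (a b : ℕ) :
    (a+b).factorial ≤ 2^(a+b) * (a.factorial * b.factorial) := by
  have hch : (a+b).choose a * a.factorial * b.factorial = (a+b).factorial := by
    have := Nat.choose_mul_factorial_mul_factorial (show a ≤ a+b by omega)
    simpa [Nat.add_sub_cancel_left] using this
  have hle : (a+b).choose a ≤ 2^(a+b) := by
    have h := Finset.single_le_sum (f := fun m => (a+b).choose m)
      (fun i _ => Nat.zero_le _) (Finset.mem_range.2 (show a < a+b+1 by omega))
    rw [Nat.sum_range_choose] at h
    exact h
  calc (a+b).factorial = (a+b).choose a * a.factorial * b.factorial := hch.symm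
    _ ≤ 2^(a+b) * a.factorial * b.factorial :=
        Nat.mul_le_mul_right _ (Nat.mul_le_mul_right _ hle)
    _ = 2^(a+b) * (a.factorial * b.factorial) := by ring

end Aux18
end C6

open Real Set Function Aux18 in
/-- Derivative-transfer estimate ((A.13) ⟹ (A.14)): Gevrey-type bounds with radial weight
`r^{1−β−α₁−α₂}` transform into Gevrey bounds with factor `e^{(1−β)τ}` in log-polar
coordinates `(τ,θ)`, `τ = ln r`. -/
theorem stmt18 (β Z : ℝ) (hβ : β ∈ Set.Ioo (0 : ℝ) 1) (hZ : 0 < Z)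
    (p : (Fin 2 → ℝ) → ℝ)
    (hp : ContDiffOn ℝ (⊤ : ℕ∞) p {x | 0 < rad2 x ∧ rad2 x < Z})
    (C d : ℝ) (hC : 0 ≤ C) (hd : 1 ≤ d)
    (hbound : ∀ a b : ℕ, ∀ x : Fin 2 → ℝ, 0 < rad2 x → rad2 x < Z →
      |Dop2 a b p x| ≤ C * d ^ (a + b) * (Nat.factorial a * Nat.factorial b) *
        rad2 x ^ (1 - β - (a : ℝ) - (b : ℝ)))
    (q : (Fin 2 → ℝ) → ℝ)
    (hq : q = fun y => p ![Real.exp (y 0) * Real.cos (y 1), Real.exp (y 0) * Real.sin (y 1)]) :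
    ∃ C' : ℝ, 0 < C' ∧ ∃ d' : ℝ, 0 < d' ∧ ∀ a b : ℕ, ∀ y : Fin 2 → ℝ, y 0 < Real.log Z →
      |Dop2 a b q y| ≤ C' * d' ^ (a + b) * (Nat.factorial a * Nat.factorial b) *
        Real.exp ((1 - β) * y 0) := by
  have hp' : ContDiffOn ℝ (⊤ : ℕ∞) p (U Z) := hp
  have hd0 : (0:ℝ) ≤ d := le_trans zero_le_one hd
  refine ⟨C + 1, by linarith, 2*(2*d+2), by linarith, ?_⟩
  intro a b y hy
  have hyW : y ∈ W Z := hy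
  -- base of the induction
  have base : GB β Z C d 0 p := by
    intro a' b' x hx
    have h := hbound a' b' x hx.1 hx.2
    calc |Dop2 a' b' p x| ≤ C * d ^ (a'+b') * (Nat.factorial a' * Nat.factorial b') *
          rad2 x ^ (1 - β - (a':ℝ) - (b':ℝ)) := h
      _ = C * (2*d+2)^0 * d^(a'+b') *
          ((ra (a'+b') 0 * (Nat.factorial a' * Nat.factorial b') : ℕ) : ℝ) *
          rad2 x ^ (1 - β - (a':ℝ) - (b':ℝ)) := by
        rw [pow_zero, show ra (a'+b') 0 = 1 from rfl]
        push_cast; ring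
  -- iterate B
  have hGB_B : ∀ k, GB β Z C d k (Bop^[k] p) := by
    intro k
    induction k with
    | zero => exact base
    | succ k ih =>
      rw [Function.iterate_succ']
      exact step_B hC hd (smooth_B_iter hp' k) ih
  -- iterate A on top
  have hGB_A : ∀ j, GB β Z C d (j + b) (Aop^[j] (Bop^[b] p)) := by
    intro j
    induction j with
    | zero => simpa using hGB_B b
    | succ j ih =>
      rw [Function.iterate_succ']
      have := step_A hC hd (smooth_A_iter (smooth_B_iter hp' b) j) ih
      rwa [show j + b + 1 = j + 1 + b by omega] at this
  have hG := hGB_A a 0 0 (Phi y) (Phi_mem hZ hyW)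
  have hval : |(Aop^[a] (Bop^[b] p)) (Phi y)|
      ≤ C * (2*d+2)^(a+b) * ((a+b).factorial : ℝ) * Real.exp ((1-β) * y 0) := by
    have e1 : Dop2 0 0 (Aop^[a] (Bop^[b] p)) = Aop^[a] (Bop^[b] p) := rfl
    rw [e1] at hG
    have e2 : rad2 (Phi y) = Real.exp (y 0) := rad2_Phi y
    rw [e2] at hG
    have e3 : (1 : ℝ) - β - ((0:ℕ):ℝ) - ((0:ℕ):ℝ) = 1 - β := by push_cast; ring
    rw [e3] at hG
    have e4 : Real.exp (y 0) ^ ((1:ℝ) - β) = Real.exp ((1-β) * y 0) := by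
      rw [← Real.exp_mul, mul_comm]
    rw [e4] at hG
    calc |(Aop^[a] (Bop^[b] p)) (Phi y)|
        ≤ C * (2*d+2)^(a+b) * d^(0+0) *
          ((ra (0+0) (a+b) * (Nat.factorial 0 * Nat.factorial 0) : ℕ) : ℝ) *
          Real.exp ((1-β) * y 0) := hG
      _ = C * (2*d+2)^(a+b) * ((a+b).factorial : ℝ) * Real.exp ((1-β) * y 0) := by
          rw [show ra (0+0) (a+b) = (a+b).factorial from by
            rw [show (0+0 : ℕ) = 0 from rfl, ra_zero_eq]]
          norm_num
  -- composition identity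
  have hcompid : Dop2 a b q y = (Aop^[a] (Bop^[b] p)) (Phi y) := by
    subst hq
    exact Dop2_comp hZ hp' a b hyW
  rw [hcompid]
  refine le_trans hval ?_
  have hfac : ((a+b).factorial : ℝ) ≤ (2:ℝ)^(a+b) * ((a.factorial : ℝ) * (b.factorial : ℝ)) := by
    exact_mod_cast factorial_add_le a b
  have hE : (0:ℝ) ≤ Real.exp ((1-β) * y 0) := (Real.exp_pos _).le
  have hMn : (0:ℝ) ≤ (2*d+2)^(a+b) := pow_nonneg (by linarith) _
  calc C * (2*d+2)^(a+b) * ((a+b).factorial : ℝ) * Real.exp ((1-β) * y 0)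
      ≤ (C+1) * (2*d+2)^(a+b) * ((2:ℝ)^(a+b) * ((a.factorial : ℝ) * (b.factorial : ℝ)))
        * Real.exp ((1-β) * y 0) := by
        apply mul_le_mul_of_nonneg_right _ hE
        apply mul_le_mul _ hfac (Nat.cast_nonneg _) _
        · apply mul_le_mul_of_nonneg_right (by linarith) hMn
        · exact mul_nonneg (by linarith) hMn
    _ = (C+1) * (2*(2*d+2))^(a+b) * ((a.factorial : ℝ) * (b.factorial : ℝ))
        * Real.exp ((1-β) * y 0) := by
        rw [mul_pow]; ring
    _ = (C+1) * (2*(2*d+2))^(a+b) * ((Nat.factorial a : ℝ) * (Nat.factorial b : ℝ))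
        * Real.exp ((1-β) * y 0) := rfl
end
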